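/- arXiv:1209.4628 — 9 statements merged into one kernel-verified Lean document; each statement's English description precedes it below -/
import Mathlib

section
/- Let (Ge, Go) be a connected bipartite signed graph on a finite nonempty vertex type V, and let A ∈ S(Ge, Go) be positive semidefinite. Then every nonzero vector x in the kernel of A has all of its entries nonzero. -/
open Matrix

/-- The set `S(Ge, Go)` of real symmetric matrices compatible with the signed graph
encoded by the pair of simple graphs `(Ge, Go)` (even graph / odd graph). -/
def SignedSet {V : Type*} (Ge Go : SimpleGraph V) : Set (Matrix V V ℝ) :=
  {A | A.IsSymm ∧ ∀ i j,
    ((Ge.Adj i j ∧ ¬ Go.Adj i j) → A i j < 0) ∧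
    ((Go.Adj i j ∧ ¬ Ge.Adj i j) → 0 < A i j) ∧
    ((i ≠ j ∧ ¬ Ge.Adj i j ∧ ¬ Go.Adj i j) → A i j = 0)}

/-- The nullity of a matrix: the dimension of its kernel. -/
noncomputable def matNullity {V : Type*} [Fintype V] (A : Matrix V V ℝ) : ℕ :=
  Module.finrank ℝ (LinearMap.ker A.mulVecLin)

/-- The Strong Arnold Property for a matrix with respect to a signed graph `(Ge, Go)`. -/
def HasSAP {V : Type*} [Fintype V] (Ge Go : SimpleGraph V) (A : Matrix V V ℝ) : Prop :=
  ∀ X : Matrix V V ℝ, X.IsSymm →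
    (∀ i j, (i = j ∨ (Ge ⊔ Go).Adj i j) → X i j = 0) →
    A * X = 0 → X = 0

/-- `ν(Ge, Go)`: the maximum nullity of a positive semidefinite matrix in `S(Ge, Go)`
having the Strong Arnold Property. -/
noncomputable def nuSigned {V : Type*} [Fintype V] (Ge Go : SimpleGraph V) : ℕ :=
  sSup {n | ∃ A ∈ SignedSet Ge Go, A.PosSemidef ∧ HasSAP Ge Go A ∧ matNullity A = n}

/-- `M₊(Ge, Go)`: the maximum nullity of a positive semidefinite matrix in `S(Ge, Go)`. -/
noncomputable def MplusSigned {V : Type*} [Fintype V] (Ge Go : SimpleGraph V) : ℕ :=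
  sSup {n | ∃ A ∈ SignedSet Ge Go, A.PosSemidef ∧ matNullity A = n}

/-- A signed graph `(Ge, Go)` is bipartite (balanced) if some set `U` of vertices meets
every odd edge in exactly one end and every even edge in both ends or neither end. -/
def IsBalanced {V : Type*} (Ge Go : SimpleGraph V) : Prop :=
  ∃ U : Set V, (∀ i j, Go.Adj i j → ((i ∈ U) ↔ j ∉ U)) ∧
    (∀ i j, Ge.Adj i j → ((i ∈ U) ↔ j ∈ U))

/-- In a connected bipartite signed graph, any nonzero kernel vector of a
positive semidefinite matrix in `S(Ge, Go)` has all entries nonzero. -/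
theorem stmt0 {V : Type*} [Fintype V] [DecidableEq V] [Nonempty V]
    (Ge Go : SimpleGraph V)
    (hconn : (Ge ⊔ Go).Connected)
    (hbip : IsBalanced Ge Go)
    (A : Matrix V V ℝ) (hA : A ∈ SignedSet Ge Go) (hpsd : A.PosSemidef)
    (x : V → ℝ) (hker : A.mulVec x = 0) (hx : x ≠ 0) :
    ∀ i, x i ≠ 0 := by
  classical
  obtain ⟨U, hUo, hUe⟩ := hbip
  set d : V → ℝ := fun i => if i ∈ U then -1 else 1 with hd
  have hd1 : ∀ i, d i * d i = 1 := by
    intro i; by_cases h : i ∈ U <;> simp [hd, h]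
  have habsd : ∀ i, |d i| = 1 := by
    intro i; by_cases h : i ∈ U <;> simp [hd, h]
  -- no pair has both edge types
  have hsign : ∀ i j, (Ge ⊔ Go).Adj i j → d i * A i j * d j < 0 := by
    intro i j hadj
    rcases (SimpleGraph.sup_adj _ _ _ _).mp hadj with hGe | hGo
    · have hnGo : ¬ Go.Adj i j := by
        intro hGo
        have h1 := hUo i j hGo
        have h2 := hUe i j hGe
        tauto
      have hAlt : A i j < 0 := (hA.2 i j).1 ⟨hGe, hnGo⟩
      have h2 := hUe i j hGe
      have hdij : d i * d j = 1 := by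
        by_cases h : i ∈ U
        · have hj := h2.mp h; simp [hd, h, hj]
        · have hj : j ∉ U := fun hj => h (h2.mpr hj); simp [hd, h, hj]
      have : d i * A i j * d j = A i j := by linear_combination (A i j) * hdij
      linarith [this]
    · have hnGe : ¬ Ge.Adj i j := by
        intro hGe
        have h1 := hUo i j hGo
        have h2 := hUe i j hGe
        tauto
      have hAgt : 0 < A i j := (hA.2 i j).2.1 ⟨hGo, hnGe⟩
      have h1 := hUo i j hGo
      have hdij : d i * d j = -1 := by
        by_cases h : i ∈ U
        · have hj := h1.mp h; simp [hd, h, hj]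
        · have hj : j ∈ U := by
            by_contra hj; exact h (h1.mpr hj)
          simp [hd, h, hj]
      have : d i * A i j * d j = -A i j := by linear_combination (A i j) * hdij
      linarith [this]
  have hzero : ∀ i j, i ≠ j → ¬ (Ge ⊔ Go).Adj i j → A i j = 0 := by
    intro i j hne hnadj
    rw [SimpleGraph.sup_adj] at hnadj
    push_neg at hnadj
    exact (hA.2 i j).2.2 ⟨hne, hnadj.1, hnadj.2⟩
  set w : V → ℝ := fun i => d i * |x i| with hw
  have hterm : ∀ i j, w i * (A i j * w j) ≤ x i * (A i j * x j) := by
    intro i j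
    rcases eq_or_ne i j with rfl | hij
    · have hsq : w i * w i = x i * x i := by
        have e1 := hd1 i
        have e2 : |x i| * |x i| = x i * x i := abs_mul_abs_self _
        simp only [hw]
        nlinarith [e1, e2]
      apply le_of_eq
      linear_combination (A i i) * hsq
    · by_cases hadj : (Ge ⊔ Go).Adj i j
      · have hc := hsign i j hadj
        have h1 : w i * (A i j * w j) = (d i * A i j * d j) * |x i * x j| := by
          simp only [hw, abs_mul]; ring
        have h2 : x i * (A i j * x j)
            = (d i * A i j * d j) * ((d i * x i) * (d j * x j)) := by
          have e1 := hd1 i; have e2 := hd1 j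
          linear_combination (-(A i j * x i * x j * (d j * d j))) * e1 +
            (-(A i j * x i * x j)) * e2
        have h3 : (d i * x i) * (d j * x j) ≤ |x i * x j| := by
          calc (d i * x i) * (d j * x j) ≤ |(d i * x i) * (d j * x j)| := le_abs_self _
            _ = |x i * x j| := by
                rw [abs_mul, abs_mul, abs_mul, habsd i, habsd j, one_mul, one_mul,
                  ← abs_mul]
        rw [h1, h2]
        exact mul_le_mul_of_nonpos_left h3 (le_of_lt hc)
      · have := hzero i j hij hadj
        simp [this]
  have hle : w ⬝ᵥ A *ᵥ w ≤ x ⬝ᵥ A *ᵥ x := by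
    simp only [dotProduct, mulVec, Finset.mul_sum]
    exact Finset.sum_le_sum fun i _ => Finset.sum_le_sum fun j _ => hterm i j
  have hx0 : x ⬝ᵥ A *ᵥ x = 0 := by rw [hker, dotProduct_zero]
  have hge : (0:ℝ) ≤ w ⬝ᵥ A *ᵥ w := by
    have := hpsd.dotProduct_mulVec_nonneg w
    simpa using this
  have hweq : w ⬝ᵥ A *ᵥ w = 0 := le_antisymm (hle.trans_eq hx0) hge
  have hAw : A *ᵥ w = 0 := by
    rw [← hpsd.dotProduct_mulVec_zero_iff w]
    simpa using hweq
  have hstep : ∀ i j, x i = 0 → (Ge ⊔ Go).Adj i j → x j = 0 := by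
    intro i j hxi hadj
    have hi : (A *ᵥ w) i = 0 := congrFun hAw i
    have hsum : ∑ k, (d i * A i k * d k) * |x k| = 0 := by
      simp only [mulVec, dotProduct, hw] at hi
      calc ∑ k, (d i * A i k * d k) * |x k|
          = d i * ∑ k, A i k * (d k * |x k|) := by
            rw [Finset.mul_sum]; exact Finset.sum_congr rfl fun k _ => by ring
        _ = 0 := by rw [hi, mul_zero]
    have hnonpos : ∀ k ∈ Finset.univ, (d i * A i k * d k) * |x k| ≤ (0:ℝ) := by
      intro k _
      rcases eq_or_ne k i with rfl | hki
      · simp [hxi]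
      · by_cases hak : (Ge ⊔ Go).Adj i k
        · exact mul_nonpos_of_nonpos_of_nonneg (le_of_lt (hsign i k hak)) (abs_nonneg _)
        · simp [hzero i k (Ne.symm hki) hak]
    have hj0 := (Finset.sum_eq_zero_iff_of_nonpos hnonpos).mp hsum j (Finset.mem_univ j)
    have hc := hsign i j hadj
    have habs : |x j| = 0 := by
      rcases mul_eq_zero.mp hj0 with h | h
      · exact absurd h (ne_of_lt hc)
      · exact h
    exact abs_eq_zero.mp habs
  intro i hxi0
  apply hx
  funext j
  have hwalk : ∀ u v : V, (Ge ⊔ Go).Walk u v → x u = 0 → x v = 0 := by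
    intro u v p
    induction p with
    | nil => exact id
    | cons ha _ ih => exact fun hu => ih (hstep _ _ hu ha)
  obtain ⟨p⟩ := hconn.preconnected i j
  exact hwalk i j p hxi0
end

section
/- Let (Ge, Go) be a connected bipartite signed graph on a finite nonempty vertex type V, and let A ∈ S(Ge, Go) be positive semidefinite. Then the nullity of A is at most 1. -/
open Matrix

/-- In a connected bipartite signed graph, any positive semidefinite matrix
in `S(Ge, Go)` has nullity at most 1. -/
theorem stmt1 {V : Type*} [Fintype V] [DecidableEq V] [Nonempty V]
    (Ge Go : SimpleGraph V)
    (hconn : (Ge ⊔ Go).Connected)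
    (hbip : IsBalanced Ge Go)
    (A : Matrix V V ℝ) (hA : A ∈ SignedSet Ge Go) (hpsd : A.PosSemidef) :
    matNullity A ≤ 1 := by
  classical
  obtain ⟨Asymm, hsign⟩ := hA
  obtain ⟨U, hUo, hUe⟩ := hbip
  -- the switching function
  set d : V → ℝ := fun i => if i ∈ U then 1 else -1 with hd
  have hd2 : ∀ i, d i * d i = 1 := by
    intro i; by_cases h : i ∈ U <;> simp [hd, h]
  have hdabs : ∀ i, |d i| = 1 := by
    intro i; by_cases h : i ∈ U <;> simp [hd, h]
  -- the switched matrix entries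
  set B : V → V → ℝ := fun i j => d i * A i j * d j with hB
  have hBneg : ∀ i j, (Ge ⊔ Go).Adj i j → B i j < 0 := by
    intro i j hadj
    rcases hadj with he | ho
    · have hgo : ¬ Go.Adj i j := by
        intro hgo
        have h1 := hUo i j hgo
        have h2 := hUe i j he
        tauto
      have hAneg := (hsign i j).1 ⟨he, hgo⟩
      have hdd : d i * d j = 1 := by
        have := hUe i j he
        by_cases h : i ∈ U
        · have : j ∈ U := by tauto
          simp [hd, h, this]
        · have : j ∉ U := by tauto
          simp [hd, h, this]
      have : B i j = A i j * (d i * d j) := by ring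
      rw [this, hdd, mul_one]; exact hAneg
    · have hge : ¬ Ge.Adj i j := by
        intro hge
        have h1 := hUo i j ho
        have h2 := hUe i j hge
        tauto
      have hApos := (hsign i j).2.1 ⟨ho, hge⟩
      have hdd : d i * d j = -1 := by
        have := hUo i j ho
        by_cases h : i ∈ U
        · have : j ∉ U := by tauto
          simp [hd, h, this]
        · have : j ∈ U := by tauto
          simp [hd, h, this]
      have : B i j = A i j * (d i * d j) := by ring
      rw [this, hdd]; nlinarith
  have hBzero : ∀ i j, i ≠ j → ¬ (Ge ⊔ Go).Adj i j → B i j = 0 := by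
    intro i j hij hadj
    have : ¬ Ge.Adj i j ∧ ¬ Go.Adj i j := by
      constructor <;> intro h <;> exact hadj (by simp [h])
    have hA0 := (hsign i j).2.2 ⟨hij, this.1, this.2⟩
    simp [hB, hA0]
  have hBle : ∀ i j, i ≠ j → B i j ≤ 0 := by
    intro i j hij
    by_cases hadj : (Ge ⊔ Go).Adj i j
    · exact (hBneg i j hadj).le
    · exact (hBzero i j hij hadj).le
  -- key property: a kernel vector vanishing somewhere is zero
  have key : ∀ x : V → ℝ, A *ᵥ x = 0 → (∃ v, x v = 0) → x = 0 := by
    intro x hx ⟨v, hv⟩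
    set y : V → ℝ := fun i => d i * |x i| with hy
    -- y is also in the kernel
    have hquad : y ⬝ᵥ A *ᵥ y ≤ 0 := by
      have hxq : x ⬝ᵥ A *ᵥ x = 0 := by rw [hx, dotProduct_zero]
      have hle : y ⬝ᵥ A *ᵥ y ≤ x ⬝ᵥ A *ᵥ x := by
        simp only [dotProduct, mulVec, dotProduct, Finset.mul_sum]
        refine Finset.sum_le_sum fun i _ => Finset.sum_le_sum fun j _ => ?_
        by_cases hij : i = j
        · subst hij
          have h1 : |x i| * |x i| = x i * x i := by
            rw [← abs_mul, abs_of_nonneg (mul_self_nonneg _)]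
          have : y i * (A i i * y i) = A i i * (x i * x i) := by
            simp only [hy]
            linear_combination (A i i * |x i| * |x i|) * hd2 i + A i i * h1
          linarith [this.le]
        · have h1 : y i * (A i j * y j) = B i j * (|x i| * |x j|) := by
            simp only [hy, hB]; ring
          have h2 : x i * (A i j * x j) = B i j * ((d i * x i) * (d j * x j)) := by
            simp only [hB]
            linear_combination (-(A i j * x i * x j * (d j * d j))) * hd2 i - (A i j * x i * x j) * hd2 j
          rw [h1, h2]
          have h3 : (d i * x i) * (d j * x j) ≤ |x i| * |x j| := by
            calc (d i * x i) * (d j * x j) ≤ |(d i * x i) * (d j * x j)| := le_abs_self _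
            _ = |x i| * |x j| := by
                rw [abs_mul, abs_mul, abs_mul, hdabs i, hdabs j, one_mul, one_mul]
          exact mul_le_mul_of_nonpos_left h3 (hBle i j hij)
      linarith
    have hynn : (0:ℝ) ≤ y ⬝ᵥ A *ᵥ y := by
      have := hpsd.dotProduct_mulVec_nonneg y
      simpa using this
    have hy0 : A *ᵥ y = 0 := by
      have : star y ⬝ᵥ A *ᵥ y = 0 := by
        simp only [star_trivial]; linarith
      exact (hpsd.dotProduct_mulVec_zero_iff y).mp this
    -- propagation along edges
    have step : ∀ k j, x k = 0 → (Ge ⊔ Go).Adj k j → x j = 0 := by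
      intro k j hk hadj
      have hk' : (A *ᵥ y) k = 0 := by rw [hy0]; rfl
      have hsum : ∑ l, B k l * |x l| = 0 := by
        have : d k * ∑ l, A k l * y l = 0 := by
          have : (A *ᵥ y) k = ∑ l, A k l * y l := by simp [mulVec, dotProduct]
          rw [← this, hk', mul_zero]
        calc ∑ l, B k l * |x l| = d k * ∑ l, A k l * y l := by
              rw [Finset.mul_sum]
              refine Finset.sum_congr rfl fun l _ => ?_
              simp only [hB, hy]; ring
        _ = 0 := this
      have hterms : ∀ l ∈ Finset.univ, B k l * |x l| ≤ 0 := by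
        intro l _
        by_cases hkl : k = l
        · subst hkl; rw [hk]; simp
        · exact mul_nonpos_of_nonpos_of_nonneg (hBle k l hkl) (abs_nonneg _)
      have hall := (Finset.sum_eq_zero_iff_of_nonpos hterms).mp hsum
      have hj := hall j (Finset.mem_univ j)
      have hBkj := hBneg k j hadj
      have : |x j| = 0 := by
        by_contra h
        have : 0 < |x j| := lt_of_le_of_ne (abs_nonneg _) (Ne.symm h)
        nlinarith
      exact abs_eq_zero.mp this
    -- connectivity gives x = 0 everywhere
    funext i
    obtain ⟨p⟩ := hconn.preconnected v i
    have : ∀ u w : V, (Ge ⊔ Go).Walk u w → x u = 0 → x w = 0 := by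
      intro u w p
      induction p with
      | nil => exact fun h => h
      | cons hadj _ ih => intro hu; exact ih (step _ _ hu hadj)
    simpa using this v i p hv
  -- conclude: evaluation at a vertex is injective on the kernel
  obtain ⟨v⟩ := (inferInstance : Nonempty V)
  have hinj : Function.Injective
      ((LinearMap.proj v : (V → ℝ) →ₗ[ℝ] ℝ).comp (LinearMap.ker A.mulVecLin).subtype) := by
    rw [← LinearMap.ker_eq_bot]
    rw [LinearMap.ker_eq_bot']
    rintro ⟨x, hx⟩ h0
    have hx' : A *ᵥ x = 0 := by simpa [Matrix.mulVecLin_apply] using hx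
    have hxv : x v = 0 := by simpa using congrArg id h0
    have := key x hx' ⟨v, hxv⟩
    exact Subtype.ext this
  calc matNullity A ≤ Module.finrank ℝ ℝ :=
        LinearMap.finrank_le_finrank_of_injective hinj
  _ = 1 := Module.finrank_self ℝ
end

section
/- If A is a positive definite real n×n matrix all of whose off-diagonal entries are nonpositive (A i j ≤ 0 for all i ≠ j), then every entry of the inverse matrix A⁻¹ is nonnegative. -/
open Matrix

lemma key {n : ℕ} (A : Matrix (Fin n) (Fin n) ℝ)
    (hpd : A.PosDef) (hoff : ∀ i j, i ≠ j → A i j ≤ 0)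
    (x : Fin n → ℝ) (hb : ∀ i, 0 ≤ A.mulVec x i) : ∀ i, 0 ≤ x i := by
  set p : Fin n → ℝ := fun i => max (x i) 0 with hp
  set q : Fin n → ℝ := fun i => max (-(x i)) 0 with hq
  have hx : x = p - q := by
    funext i; simp [hp, hq, max_def]; split_ifs <;> linarith
  have hq0 : ∀ i, 0 ≤ q i := fun i => le_max_right _ _
  have hp0 : ∀ i, 0 ≤ p i := fun i => le_max_right _ _
  have hdisj : ∀ i, q i * p i = 0 := by
    intro i
    rcases le_total (x i) 0 with h | h
    · simp [hp, max_eq_right h]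
    · simp [hq, max_eq_right (neg_nonpos_of_nonneg h)]
  have h1 : 0 ≤ q ⬝ᵥ A.mulVec x :=
    Finset.sum_nonneg fun i _ => mul_nonneg (hq0 i) (hb i)
  have h2 : q ⬝ᵥ A.mulVec p ≤ 0 := by
    rw [dotProduct]
    apply Finset.sum_nonpos
    intro i _
    rw [mulVec, dotProduct, Finset.mul_sum]
    apply Finset.sum_nonpos
    intro j _
    rcases eq_or_ne i j with rfl | hij
    · have h := hdisj i
      have e : q i * (A i i * p i) = A i i * (q i * p i) := by ring
      rw [e, h, mul_zero]
    · have := hoff i j hij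
      have := mul_nonneg (hq0 i) (hp0 j)
      nlinarith
  have hmv : A.mulVec x = A.mulVec p - A.mulVec q := by
    rw [hx, Matrix.mulVec_sub]
  have h3 : q ⬝ᵥ A.mulVec q ≤ 0 := by
    have : q ⬝ᵥ A.mulVec x = q ⬝ᵥ A.mulVec p - q ⬝ᵥ A.mulVec q := by
      rw [hmv, dotProduct_sub]
    linarith
  have hqz : q = 0 := by
    by_contra hne
    have := hpd.dotProduct_mulVec_pos hne
    have : (0:ℝ) < q ⬝ᵥ A.mulVec q := by
      simpa [star, dotProduct] using this
    linarith
  intro i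
  have : max (-(x i)) 0 = 0 := congrFun hqz i
  rcases max_cases (-(x i)) (0:ℝ) with ⟨h, _⟩ | ⟨h, _⟩ <;> rw [h] at this <;> linarith

/-- A positive definite matrix with nonpositive off-diagonal entries has an
inverse all of whose entries are nonnegative. -/
theorem stmt2 {n : ℕ} (A : Matrix (Fin n) (Fin n) ℝ)
    (hpd : A.PosDef) (hoff : ∀ i j, i ≠ j → A i j ≤ 0) :
    ∀ i j, 0 ≤ A⁻¹ i j := by
  intro i j
  have hinv : A * A⁻¹ = 1 :=
    Matrix.mul_nonsing_inv A (isUnit_iff_ne_zero.mpr hpd.det_pos.ne')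
  have := key A hpd hoff (fun k => A⁻¹ k j) (fun k => by
    have : A.mulVec (fun k => A⁻¹ k j) k = (A * A⁻¹) k j := by
      simp [Matrix.mulVec, Matrix.mul_apply, dotProduct]
    rw [this, hinv]
    by_cases h : k = j <;> simp [Matrix.one_apply, h])
  exact this i
end

section
/- Let (Ge, Go) be a connected bipartite signed graph on a finite vertex type V, let A ∈ S(Ge, Go) be positive semidefinite, and let C be a proper subset of V. Then the principal submatrix A[C] (the restriction of A to rows and columns indexed by C) is positive definite. -/
open Matrix

lemma key_kernel {V : Type*} [Fintype V] [DecidableEq V] (Ge Go : SimpleGraph V)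
    (hconn : (Ge ⊔ Go).Connected) (hbip : IsBalanced Ge Go)
    (A : Matrix V V ℝ) (hA : A ∈ SignedSet Ge Go) (hpsd : A.PosSemidef)
    (z : V → ℝ) (hz : A *ᵥ z = 0) (v : V) (hv : z v = 0) : z = 0 := by
  classical
  obtain ⟨U, hUo, hUe⟩ := hbip
  set d : V → ℝ := fun i => if i ∈ U then 1 else -1 with hd_def
  have hd1 : ∀ i, d i = 1 ∨ d i = -1 := by
    intro i; by_cases h : i ∈ U <;> simp [hd_def, h]
  have hdd : ∀ i, d i * d i = 1 := by
    intro i; rcases hd1 i with h | h <;> rw [h] <;> norm_num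
  have hdne : ∀ i, d i ≠ 0 := by
    intro i; rcases hd1 i with h | h <;> rw [h] <;> norm_num
  set B : Matrix V V ℝ := fun i j => d i * A i j * d j with hB_def
  have hBform : B = Matrix.diagonal d * A * (Matrix.diagonal d)ᴴ := by
    ext i j
    simp [hB_def, Matrix.diagonal_mul, Matrix.mul_diagonal, mul_comm, mul_assoc]
  have hBpsd : B.PosSemidef := by
    rw [hBform]; exact hpsd.mul_mul_conjTranspose_same _
  -- sign properties of B
  have hBneg : ∀ i j, (Ge ⊔ Go).Adj i j → B i j < 0 := by
    intro i j hadj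
    rcases hadj with he | ho
    · have hno : ¬ Go.Adj i j := by
        intro ho
        have h1 := hUo i j ho
        have h2 := hUe i j he
        tauto
      have hA1 := ((hA.2 i j).1 ⟨he, hno⟩)
      have hdij : d i * d j = 1 := by
        have h2 := hUe i j he
        by_cases h : i ∈ U
        · have : j ∈ U := h2.mp h
          simp [hd_def, h, this]
        · have : j ∉ U := fun hj => h (h2.mpr hj)
          simp [hd_def, h, this]
      have : B i j = A i j * (d i * d j) := by rw [hB_def]; ring
      rw [this, hdij, mul_one]; exact hA1
    · by_cases he : Ge.Adj i j
      · exfalso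
        have h1 := hUo i j ho
        have h2 := hUe i j he
        tauto
      · have hA1 := ((hA.2 i j).2.1 ⟨ho, he⟩)
        have hdij : d i * d j = -1 := by
          have h1 := hUo i j ho
          by_cases h : i ∈ U
          · have : j ∉ U := h1.mp h
            simp [hd_def, h, this]
          · have : j ∈ U := by
              by_contra hj; exact h (h1.mpr hj)
            simp [hd_def, h, this]
        have : B i j = A i j * (d i * d j) := by rw [hB_def]; ring
        rw [this, hdij]; linarith
  have hBzero : ∀ i j, i ≠ j → ¬ (Ge ⊔ Go).Adj i j → B i j = 0 := by
    intro i j hne hadj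
    have he : ¬ Ge.Adj i j := fun h => hadj (Or.inl h)
    have ho : ¬ Go.Adj i j := fun h => hadj (Or.inr h)
    have := (hA.2 i j).2.2 ⟨hne, he, ho⟩
    simp [hB_def, this]
  have hBnonpos : ∀ i j, i ≠ j → B i j ≤ 0 := by
    intro i j hne
    by_cases h : (Ge ⊔ Go).Adj i j
    · exact (hBneg i j h).le
    · exact (hBzero i j hne h).le
  -- kernel vector of B
  set u : V → ℝ := fun i => d i * z i with hu_def
  have hBu : B *ᵥ u = 0 := by
    funext i
    have : (B *ᵥ u) i = d i * (A *ᵥ z) i := by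
      simp only [Matrix.mulVec, dotProduct, hB_def, hu_def, Finset.mul_sum]
      apply Finset.sum_congr rfl
      intro j _
      show d i * A i j * d j * (d j * z j) = d i * (A i j * z j)
      rcases hd1 j with h | h <;> rw [h] <;> ring
    rw [this, hz]
    simp
  set y : V → ℝ := fun i => |u i| with hy_def
  have hyBy_le : y ⬝ᵥ (B *ᵥ y) ≤ 0 := by
    have huBu : u ⬝ᵥ (B *ᵥ u) = 0 := by rw [hBu]; simp
    rw [← huBu]
    simp only [dotProduct, Matrix.mulVec, Finset.mul_sum]
    apply Finset.sum_le_sum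
    intro i _
    apply Finset.sum_le_sum
    intro j _
    by_cases h : i = j
    · subst h
      have habs : y i * y i = u i * u i := abs_mul_abs_self (u i)
      have heq : y i * (B i i * y i) = u i * (B i i * u i) := by
        calc y i * (B i i * y i) = B i i * (y i * y i) := by ring
          _ = B i i * (u i * u i) := by rw [habs]
          _ = u i * (B i i * u i) := by ring
      exact le_of_eq heq
    · have h1 : B i j ≤ 0 := hBnonpos i j h
      have h2 : u i * u j ≤ y i * y j := by
        show u i * u j ≤ |u i| * |u j|
        rw [← abs_mul]; exact le_abs_self _
      have h3 := mul_le_mul_of_nonpos_left h2 h1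
      nlinarith [h3]
  have hyBy_ge : 0 ≤ y ⬝ᵥ (B *ᵥ y) := by
    have := hBpsd.dotProduct_mulVec_nonneg y
    simpa using this
  have hyBy : y ⬝ᵥ (B *ᵥ y) = 0 := le_antisymm hyBy_le hyBy_ge
  have hBy : B *ᵥ y = 0 := by
    have := (hBpsd.dotProduct_mulVec_zero_iff y).mp ?_
    · exact this
    · simpa using hyBy
  -- propagation along edges
  have hynonneg : ∀ i, 0 ≤ y i := fun i => abs_nonneg _
  have hprop : ∀ i j, (Ge ⊔ Go).Adj i j → y i = 0 → y j = 0 := by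
    intro i j hadj hyi
    have hsum : ∑ k, B i k * y k = 0 := by
      have := congrFun hBy i
      simpa [Matrix.mulVec, dotProduct] using this
    have hterm : ∀ k ∈ Finset.univ, B i k * y k ≤ 0 := by
      intro k _
      by_cases h : i = k
      · subst h; rw [hyi]; simp
      · exact mul_nonpos_of_nonpos_of_nonneg (hBnonpos i k h) (hynonneg k)
    have hall := (Finset.sum_eq_zero_iff_of_nonpos hterm).mp hsum
    have hj := hall j (Finset.mem_univ j)
    rcases mul_eq_zero.mp hj with h | h
    · exact absurd h (ne_of_lt (hBneg i j hadj))
    · exact h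
  -- connectivity: y = 0 everywhere
  have hyv : y v = 0 := by simp [hy_def, hu_def, hv]
  have hwalk : ∀ {a b : V}, (Ge ⊔ Go).Walk a b → y a = 0 → y b = 0 := by
    intro a b w
    induction w with
    | nil => exact id
    | cons h _ ih => exact fun ha => ih (hprop _ _ h ha)
  have hy0 : ∀ i, y i = 0 := by
    intro i
    obtain ⟨w⟩ := hconn.preconnected v i
    exact hwalk w hyv
  funext i
  have := hy0 i
  have hui : u i = 0 := abs_eq_zero.mp this
  have := mul_eq_zero.mp hui
  rcases this with h | h
  · exact absurd h (hdne i)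
  · exact h

/-- In a connected bipartite signed graph, every proper principal submatrix of a
positive semidefinite matrix in `S(Ge, Go)` is positive definite. -/
theorem stmt3 {V : Type*} [Fintype V] [DecidableEq V]
    (Ge Go : SimpleGraph V)
    (hconn : (Ge ⊔ Go).Connected)
    (hbip : IsBalanced Ge Go)
    (A : Matrix V V ℝ) (hA : A ∈ SignedSet Ge Go) (hpsd : A.PosSemidef)
    (C : Finset V) (hC : C ≠ Finset.univ) :
    (A.submatrix (fun i : {x // x ∈ C} => (i : V)) (fun i : {x // x ∈ C} => (i : V))).PosDef := by
  classical
  set e : {x // x ∈ C} → V := fun i => (i : V) with he_def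
  set M := A.submatrix e e with hM_def
  refine Matrix.PosDef.of_dotProduct_mulVec_pos (hpsd.1.submatrix e) ?_
  intro x hx
  have hMpsd : M.PosSemidef := hpsd.submatrix e
  have hge : 0 ≤ x ⬝ᵥ M *ᵥ x := by simpa using hMpsd.dotProduct_mulVec_nonneg x
  rcases lt_or_eq_of_le hge with h | h
  · simpa using h
  · exfalso
    set z : V → ℝ := fun i => if h : i ∈ C then x ⟨i, h⟩ else 0 with hz_def
    have hzC : ∀ (i : V) (hi : i ∈ C), z i = x ⟨i, hi⟩ := fun i hi => dif_pos hi
    have hz0 : ∀ i ∉ C, z i = 0 := fun i hi => dif_neg hi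
    have hsum : ∀ f : V → ℝ, ∑ i, z i * f i = ∑ i : {x // x ∈ C}, x i * f (i : V) := by
      intro f
      rw [← Finset.sum_subset (Finset.subset_univ C)
        (fun i _ hi => by rw [hz0 i hi, zero_mul])]
      rw [← Finset.sum_coe_sort C (fun i => z i * f i)]
      apply Finset.sum_congr rfl
      intro i _
      rw [hzC (i : V) i.2]
    have hzAz : z ⬝ᵥ (A *ᵥ z) = x ⬝ᵥ (M *ᵥ x) := by
      have h1 : z ⬝ᵥ (A *ᵥ z) = ∑ i : {x // x ∈ C}, x i * (A *ᵥ z) (i : V) :=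
        hsum (fun i => (A *ᵥ z) i)
      rw [h1]
      simp only [dotProduct, Matrix.mulVec]
      apply Finset.sum_congr rfl
      intro i _
      congr 1
      have h2 : ∑ j, A (i : V) j * z j = ∑ j, z j * A (i : V) j := by
        apply Finset.sum_congr rfl; intro j _; ring
      show ∑ j, A (i : V) j * z j = ∑ j : {x // x ∈ C}, M i j * x j
      rw [h2, hsum (fun j => A (i : V) j)]
      apply Finset.sum_congr rfl
      intro j _
      show x j * A (i : V) (j : V) = A (i : V) (j : V) * x j
      ring
    have hAz : A *ᵥ z = 0 := by
      apply (hpsd.dotProduct_mulVec_zero_iff z).mp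
      simpa [hzAz] using h.symm
    obtain ⟨v, hv⟩ : ∃ v, v ∉ C := by
      by_contra hcon
      push_neg at hcon
      exact hC (Finset.eq_univ_iff_forall.mpr hcon)
    have hz_zero : z = 0 := key_kernel Ge Go hconn hbip A hA hpsd z hAz v (hz0 v hv)
    apply hx
    funext i
    have := congrFun hz_zero (i : V)
    rw [hzC (i : V) i.2] at this
    simpa using this
end

section
/- Let (Ge, Go) be a signed graph on a finite vertex type V and let v ∈ V be a vertex whose neighbor set in the union graph Ge ⊔ Go is exactly {u₁, u₂, u₃} with u₁, u₂, u₃ distinct, and such that for each i the pair v, uᵢ is adjacent in exactly one of Ge, Go. Let (Ge', Go') be the signed graph on V \ {v} (the YΔ-transformation at v) defined by: Ge'.Adj x y iff Ge.Adj x y, or x ≠ y, x, y ∈ {u₁, u₂, u₃} and the edges vx and vy have the same parity (both odd or both even); Go'.Adj x y iff Go.Adj x y, or x ≠ y, x, y ∈ {u₁, u₂, u₃} and exactly one of the edges vx, vy is odd. Then M₊(Ge, Go) ≤ M₊(Ge', Go') and ν(Ge, Go) ≤ ν(Ge', Go'). -/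
open Matrix

set_option linter.unusedSectionVars false
set_option maxHeartbeats 1000000

section Aux
variable {V : Type*} [Fintype V] [DecidableEq V]

lemma sum_split (v : V) (f : V → ℝ) :
    ∑ k, f k = f v + ∑ k : {x : V // x ≠ v}, f (k : V) := by
  rw [← Finset.add_sum_erase _ f (Finset.mem_univ v)]
  congr 1
  exact Finset.sum_subtype _ (fun x => by simp [Finset.mem_erase]) f

lemma dp {W : Type*} [Fintype W] (A : Matrix W W ℝ) (x y : W → ℝ) :
    x ⬝ᵥ (A *ᵥ y) = ∑ i, ∑ j, x i * A i j * y j := by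
  simp [dotProduct, mulVec, Finset.mul_sum, mul_assoc]

lemma dsum (v : V) (f : V → V → ℝ) :
    ∑ i, ∑ j, f i j = f v v + (∑ j : {x : V // x ≠ v}, f v j)
      + ((∑ i : {x : V // x ≠ v}, f (i : V) v)
      + ∑ i : {x : V // x ≠ v}, ∑ j : {x : V // x ≠ v}, f (i : V) (j : V)) := by
  rw [sum_split v (fun i => ∑ j, f i j), sum_split v (f v)]
  rw [show (∑ i : {x : V // x ≠ v}, ∑ j : V, f (i : V) j)
      = ∑ i : {x : V // x ≠ v}, (f (i : V) v + ∑ j : {x : V // x ≠ v}, f (i : V) (j : V))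
    from Finset.sum_congr rfl (fun i _ => sum_split v (f (i : V))), Finset.sum_add_distrib]

noncomputable def extv (v : V) (t : ℝ) (x' : {x : V // x ≠ v} → ℝ) : V → ℝ :=
  fun k => if h : k = v then t else x' ⟨k, h⟩

@[simp] lemma extv_v (v : V) (t : ℝ) (x' : {x : V // x ≠ v} → ℝ) : extv v t x' v = t :=
  dif_pos rfl

@[simp] lemma extv_ne (v : V) (t : ℝ) (x' : {x : V // x ≠ v} → ℝ) (k : {x : V // x ≠ v}) :
    extv v t x' (k : V) = x' k :=
  dif_neg k.2

end Aux

lemma YDelta_key {V : Type*} [Fintype V] [DecidableEq V]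
    (Ge Go : SimpleGraph V) (v u₁ u₂ u₃ : V)
    (h12 : u₁ ≠ u₂) (h13 : u₁ ≠ u₃) (h23 : u₂ ≠ u₃)
    (hnbr : ∀ x, (Ge ⊔ Go).Adj v x ↔ (x = u₁ ∨ x = u₂ ∨ x = u₃))
    (hone : ∀ x, (x = u₁ ∨ x = u₂ ∨ x = u₃) → ¬(Ge.Adj v x ∧ Go.Adj v x))
    (Ge' Go' : SimpleGraph {x : V // x ≠ v})
    (hGe' : ∀ x y : {x : V // x ≠ v}, Ge'.Adj x y ↔
      (Ge.Adj (x : V) (y : V) ∨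
        (x ≠ y ∧ ((x : V) = u₁ ∨ (x : V) = u₂ ∨ (x : V) = u₃) ∧
          ((y : V) = u₁ ∨ (y : V) = u₂ ∨ (y : V) = u₃) ∧
          (Go.Adj v (x : V) ↔ Go.Adj v (y : V)))))
    (hGo' : ∀ x y : {x : V // x ≠ v}, Go'.Adj x y ↔
      (Go.Adj (x : V) (y : V) ∨
        (x ≠ y ∧ ((x : V) = u₁ ∨ (x : V) = u₂ ∨ (x : V) = u₃) ∧
          ((y : V) = u₁ ∨ (y : V) = u₂ ∨ (y : V) = u₃) ∧
          ¬(Go.Adj v (x : V) ↔ Go.Adj v (y : V)))))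
    (A : Matrix V V ℝ) (hA : A ∈ SignedSet Ge Go) (hPSD : A.PosSemidef) :
    ∃ A' ∈ SignedSet Ge' Go', A'.PosSemidef ∧ matNullity A' = matNullity A ∧
      (HasSAP Ge Go A → HasSAP Ge' Go' A') := by
  classical
  obtain ⟨hsymm, hsgn⟩ := hA
  have hsym : ∀ i j, A i j = A j i := fun i j => hsymm.apply j i
  set T : V → Prop := fun x => x = u₁ ∨ x = u₂ ∨ x = u₃ with hT
  -- every vector satisfies the quadratic inequality
  have hquad : ∀ x : V → ℝ, 0 ≤ x ⬝ᵥ (A *ᵥ x) := by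
    intro x
    simpa using (posSemidef_iff_dotProduct_mulVec.mp hPSD).2 x
  have hb0 : ∀ x, x ≠ v → ¬ T x → A v x = 0 := by
    intro x hxv hxT
    have h1 : ¬ (Ge ⊔ Go).Adj v x := fun h => hxT ((hnbr x).1 h)
    rw [SimpleGraph.sup_adj] at h1
    push_neg at h1
    exact (hsgn v x).2.2 ⟨Ne.symm hxv, h1.1, h1.2⟩
  have hbpos : ∀ x, T x → Go.Adj v x → 0 < A v x := by
    intro x hx h
    exact (hsgn v x).2.1 ⟨h, fun hge => hone x hx ⟨hge, h⟩⟩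
  have hbneg : ∀ x, T x → ¬ Go.Adj v x → A v x < 0 := by
    intro x hx h
    have hge : Ge.Adj v x := by
      have := (hnbr x).2 hx
      rw [SimpleGraph.sup_adj] at this
      exact this.resolve_right h
    exact (hsgn v x).1 ⟨hge, h⟩
  have hbne : ∀ x, T x → A v x ≠ 0 := by
    intro x hx
    by_cases h : Go.Adj v x
    · exact ne_of_gt (hbpos x hx h)
    · exact ne_of_lt (hbneg x hx h)
  have ha_nonneg : 0 ≤ A v v := by
    have := hquad (Pi.single v 1)
    simpa [Matrix.mulVec_single, single_dotProduct] using this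
  have ha : 0 < A v v := by
    rcases ha_nonneg.lt_or_eq with h | h
    · exact h
    · exfalso
      have hc : A v u₁ ≠ 0 := hbne u₁ (Or.inl rfl)
      set c := A v u₁ with hc_def
      set d := A u₁ u₁ with hd_def
      set t := -(d+1)/(2*c) with ht_def
      set y : V → ℝ := t • (Pi.single v (1:ℝ) : V → ℝ) + (Pi.single u₁ (1:ℝ) : V → ℝ) with hy_def
      have hq := hquad y
      have hvu : v ≠ u₁ := by
        intro hv
        have : (Ge ⊔ Go).Adj v v := (hnbr v).2 (Or.inl hv)
        exact (Ge ⊔ Go).irrefl this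
      have hexp : y ⬝ᵥ (A *ᵥ y) = A v v * t^2 + 2*t*c + d := by
        simp [hy_def, Matrix.mulVec_add, Matrix.mulVec_smul, add_dotProduct,
          smul_dotProduct, dotProduct_add, dotProduct_smul,
          Matrix.mulVec_single, single_dotProduct, smul_eq_mul]
        rw [hsym u₁ v]
        ring
      rw [hexp, ← h] at hq
      have h2 : 2 * t * c = -(d+1) := by
        rw [ht_def]; field_simp
      rw [h2] at hq
      nlinarith
  set a := A v v with ha_def
  have hane : a ≠ 0 := ne_of_gt ha
  set A' : Matrix {x : V // x ≠ v} {x : V // x ≠ v} ℝ :=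
    fun x y => A x y - A v x * A v y / a with hA'_def
  -- quadratic form of extended vectors
  have hext_quad : ∀ (t : ℝ) (x' : {x : V // x ≠ v} → ℝ),
      (extv v t x') ⬝ᵥ (A *ᵥ extv v t x') =
        a*t^2 + 2*t*(∑ u : {x : V // x ≠ v}, A v ↑u * x' u)
          + ∑ i : {x : V // x ≠ v}, ∑ j : {x : V // x ≠ v}, x' i * A ↑i ↑j * x' j := by
    intro t x'
    rw [dp, dsum v (fun i j => extv v t x' i * A i j * extv v t x' j)]
    simp only [extv_v, extv_ne]
    have h1 : ∑ j : {x : V // x ≠ v}, t * A v ↑j * x' j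
        = t * ∑ u : {x : V // x ≠ v}, A v ↑u * x' u := by
      rw [Finset.mul_sum]
      exact Finset.sum_congr rfl fun j _ => by ring
    have h2 : ∑ i : {x : V // x ≠ v}, x' i * A ↑i v * t
        = t * ∑ u : {x : V // x ≠ v}, A v ↑u * x' u := by
      rw [Finset.mul_sum]
      refine Finset.sum_congr rfl fun j _ => ?_
      rw [hsym (↑j) v]; ring
    rw [h1, h2]; ring
  have hA'quad : ∀ x' : {x : V // x ≠ v} → ℝ, x' ⬝ᵥ (A' *ᵥ x') =
      (∑ i : {x : V // x ≠ v}, ∑ j : {x : V // x ≠ v}, x' i * A ↑i ↑j * x' j)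
        - (∑ u : {x : V // x ≠ v}, A v ↑u * x' u)^2 / a := by
    intro x'
    rw [dp]
    rw [show (∑ u : {x : V // x ≠ v}, A v ↑u * x' u)^2
        = ∑ i : {x : V // x ≠ v}, ∑ j : {x : V // x ≠ v},
            (A v ↑i * x' i) * (A v ↑j * x' j) from by
      rw [sq, Finset.sum_mul_sum]]
    rw [Finset.sum_div, ← Finset.sum_sub_distrib]
    refine Finset.sum_congr rfl fun i _ => ?_
    rw [Finset.sum_div, ← Finset.sum_sub_distrib]
    refine Finset.sum_congr rfl fun j _ => ?_
    rw [hA'_def]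
    field_simp
  have hA'psd : A'.PosSemidef := by
    refine posSemidef_iff_dotProduct_mulVec.mpr ⟨?_, ?_⟩
    · show A'ᴴ = A'
      ext i j
      rw [conjTranspose_apply, star_trivial]; simp only [hA'_def]
      rw [hsym (↑j) (↑i)]
      ring
    · intro x'
      have hst : star x' = x' := funext fun i => star_trivial _
      rw [hst, hA'quad x']
      set s := ∑ u : {x : V // x ≠ v}, A v ↑u * x' u with hs_def
      have hq := hquad (extv v (-s/a) x')
      rw [hext_quad (-s/a) x'] at hq
      have he : a * (-s/a)^2 + 2*(-s/a)*s = -(s^2/a) := by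
        field_simp
        ring
      nlinarith [hq]
  -- row equations for kernel vectors
  have hrow : ∀ x : V → ℝ, A *ᵥ x = 0 → ∀ i : V,
      A i v * x v + ∑ j : {x : V // x ≠ v}, A i ↑j * x ↑j = 0 := by
    intro x hx i
    have h0 := congrFun hx i
    simp only [Pi.zero_apply] at h0
    have h1 : (A *ᵥ x) i = ∑ j, A i j * x j := by simp [mulVec, dotProduct]
    rw [h1, sum_split v (fun j => A i j * x j)] at h0
    exact h0
  have hrowA' : ∀ x' : {x : V // x ≠ v} → ℝ, A' *ᵥ x' = 0 → ∀ i : {x : V // x ≠ v},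
      ∑ j : {x : V // x ≠ v}, A ↑i ↑j * x' j
        = (A v ↑i / a) * ∑ u : {x : V // x ≠ v}, A v ↑u * x' u := by
    intro x' hx' i
    have h0 := congrFun hx' i
    simp only [Pi.zero_apply] at h0
    have h1 : (A' *ᵥ x') i = ∑ j, A' i j * x' j := by simp [mulVec, dotProduct]
    rw [h1] at h0
    have h2 : ∑ j : {x : V // x ≠ v}, A' i j * x' j
        = (∑ j : {x : V // x ≠ v}, A ↑i ↑j * x' j)
          - (A v ↑i / a) * ∑ u : {x : V // x ≠ v}, A v ↑u * x' u := by
      rw [Finset.mul_sum, ← Finset.sum_sub_distrib]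
      refine Finset.sum_congr rfl fun j _ => ?_
      rw [hA'_def]; field_simp
    rw [h2] at h0
    linarith
  have hker_fwd : ∀ x : V → ℝ, A *ᵥ x = 0 → A' *ᵥ (fun i => x ↑i) = 0 := by
    intro x hx
    have hrv := hrow x hx v
    funext i
    have hri := hrow x hx ↑i
    show (A' *ᵥ fun i => x ↑i) i = (0 : {x : V // x ≠ v} → ℝ) i
    have h1 : (A' *ᵥ fun i => x ↑i) i = ∑ j, A' i j * x ↑j := by
      simp [mulVec, dotProduct]
    rw [h1]
    have h2 : ∑ j : {x : V // x ≠ v}, A' i j * x ↑j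
        = (∑ j : {x : V // x ≠ v}, A ↑i ↑j * x ↑j)
          - (A v ↑i / a) * ∑ u : {x : V // x ≠ v}, A v ↑u * x ↑u := by
      rw [Finset.mul_sum, ← Finset.sum_sub_distrib]
      refine Finset.sum_congr rfl fun j _ => ?_
      rw [hA'_def]; field_simp
    have e1 : ∑ j : {x : V // x ≠ v}, A ↑i ↑j * x ↑j = -(A ↑i v * x v) := by linarith
    have e2 : ∑ j : {x : V // x ≠ v}, A v ↑j * x ↑j = -(a * x v) := by linarith
    rw [h2, e1, e2, hsym (↑i) v]
    have hfin : -(A v ↑i * x v) - A v ↑i / a * -(a * x v) = 0 := by field_simp; ring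
    rw [hfin]
    simp
  have hker_bwd : ∀ x' : {x : V // x ≠ v} → ℝ, A' *ᵥ x' = 0 →
      A *ᵥ (extv v (-(∑ u : {x : V // x ≠ v}, A v ↑u * x' u)/a) x') = 0 := by
    intro x' hx'
    set s := ∑ u : {x : V // x ≠ v}, A v ↑u * x' u with hs_def
    funext k
    show (A *ᵥ extv v (-s/a) x') k = (0 : V → ℝ) k
    have h1 : (A *ᵥ extv v (-s/a) x') k = ∑ j, A k j * extv v (-s/a) x' j := by
      simp [mulVec, dotProduct]
    rw [h1, sum_split v (fun j => A k j * extv v (-s/a) x' j)]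
    simp only [extv_v, extv_ne, Pi.zero_apply]
    by_cases hk : k = v
    · subst hk
      rw [← ha_def, ← hs_def]
      field_simp
      ring
    · have hrk := hrowA' x' hx' ⟨k, hk⟩
      rw [show (∑ j : {x : V // x ≠ v}, A k ↑j * x' j)
          = ∑ j : {x : V // x ≠ v}, A ↑(⟨k, hk⟩ : {x : V // x ≠ v}) ↑j * x' j from rfl, hrk]
      rw [show A k v = A v ↑(⟨k, hk⟩ : {x : V // x ≠ v}) from hsym k v]
      field_simp
      rw [← hs_def]; ring
  -- nullity equality
  have hnull : matNullity A' = matNullity A := by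
    have hmem : ∀ x ∈ LinearMap.ker A.mulVecLin,
        (LinearMap.funLeft ℝ ℝ (Subtype.val : {x : V // x ≠ v} → V)) x
          ∈ LinearMap.ker A'.mulVecLin := by
      intro x hx
      rw [LinearMap.mem_ker, mulVecLin_apply] at hx ⊢
      exact hker_fwd x hx
    set φ := (LinearMap.funLeft ℝ ℝ (Subtype.val : {x : V // x ≠ v} → V)).restrict hmem
      with hφ_def
    have hinj : Function.Injective φ := by
      rw [injective_iff_map_eq_zero]
      rintro ⟨x, hx⟩ h0
      rw [LinearMap.mem_ker, mulVecLin_apply] at hx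
      have hcomp : ∀ i : {x : V // x ≠ v}, x ↑i = 0 := by
        intro i
        have := congrFun (congrArg Subtype.val h0) i
        simpa [hφ_def, LinearMap.restrict_apply, LinearMap.funLeft] using this
      have hv : x v = 0 := by
        have hrv := hrow x hx v
        rw [← ha_def] at hrv
        have : ∑ j : {x : V // x ≠ v}, A v ↑j * x ↑j = 0 :=
          Finset.sum_eq_zero fun j _ => by rw [hcomp j, mul_zero]
        rw [this] at hrv
        nlinarith [hrv]
      ext k
      by_cases hk : k = v
      · subst hk; exact hv
      · exact hcomp ⟨k, hk⟩
    have hsurj : Function.Surjective φ := by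
      rintro ⟨x', hx'⟩
      rw [LinearMap.mem_ker, mulVecLin_apply] at hx'
      refine ⟨⟨extv v (-(∑ u : {x : V // x ≠ v}, A v ↑u * x' u)/a) x', ?_⟩, ?_⟩
      · rw [LinearMap.mem_ker, mulVecLin_apply]
        exact hker_bwd x' hx'
      · apply Subtype.ext
        funext i
        simp [hφ_def, LinearMap.restrict_apply, LinearMap.funLeft, extv_ne]
    exact ((LinearEquiv.ofBijective φ ⟨hinj, hsurj⟩).finrank_eq).symm
  -- membership of A' in SignedSet Ge' Go'
  have hA'symm : A'.IsSymm := by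
    apply Matrix.IsSymm.ext
    intro i j
    simp only [hA'_def]
    rw [hsym (↑j) (↑i)]
    ring
  have hA'mem : A' ∈ SignedSet Ge' Go' := by
    refine ⟨hA'symm, ?_⟩
    intro x y
    by_cases hxy : x = y
    · subst hxy
      refine ⟨?_, ?_, ?_⟩
      · rintro ⟨h, -⟩; exact absurd h (Ge'.irrefl)
      · rintro ⟨h, -⟩; exact absurd h (Go'.irrefl)
      · rintro ⟨h, -⟩; exact absurd rfl h
    · have hxyV : (x : V) ≠ (y : V) := Subtype.coe_ne_coe.2 hxy
      by_cases hx : T ↑x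
      · by_cases hy : T ↑y
        · -- triangle pair
          by_cases hp : Go.Adj v ↑x ↔ Go.Adj v ↑y
          · -- same parity: new even edge
            have hGe'xy : Ge'.Adj x y := (hGe' x y).2 (Or.inr ⟨hxy, hx, hy, hp⟩)
            have hGo'iff : Go'.Adj x y ↔ Go.Adj ↑x ↑y := by
              rw [hGo' x y]
              constructor
              · rintro (h | ⟨-, -, -, hp'⟩)
                · exact h
                · exact absurd hp hp'
              · exact Or.inl
            have hprod : 0 < A v ↑x * A v ↑y := by
              by_cases hgo : Go.Adj v ↑x
              · exact mul_pos (hbpos _ hx hgo) (hbpos _ hy (hp.1 hgo))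
              · exact mul_pos_of_neg_of_neg (hbneg _ hx hgo)
                  (hbneg _ hy (fun h => hgo (hp.2 h)))
            have ht : 0 < A v ↑x * A v ↑y / a := div_pos hprod ha
            refine ⟨?_, ?_, ?_⟩
            · rintro ⟨-, hngo⟩
              have hAxy : A ↑x ↑y ≤ 0 := by
                by_cases hge : Ge.Adj ↑x ↑y
                · exact le_of_lt ((hsgn ↑x ↑y).1 ⟨hge, fun h => hngo (hGo'iff.2 h)⟩)
                · exact le_of_eq ((hsgn ↑x ↑y).2.2 ⟨hxyV, hge, fun h => hngo (hGo'iff.2 h)⟩)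
              show A ↑x ↑y - A v ↑x * A v ↑y / a < 0
              linarith
            · rintro ⟨-, hnge⟩; exact absurd hGe'xy hnge
            · rintro ⟨-, hnge, -⟩; exact absurd hGe'xy hnge
          · -- different parity: new odd edge
            have hGo'xy : Go'.Adj x y := (hGo' x y).2 (Or.inr ⟨hxy, hx, hy, hp⟩)
            have hGe'iff : Ge'.Adj x y ↔ Ge.Adj ↑x ↑y := by
              rw [hGe' x y]
              constructor
              · rintro (h | ⟨-, -, -, hp'⟩)
                · exact h
                · exact absurd hp' hp
              · exact Or.inl
            have hprod : A v ↑x * A v ↑y < 0 := by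
              by_cases hgo : Go.Adj v ↑x
              · refine mul_neg_of_pos_of_neg (hbpos _ hx hgo) (hbneg _ hy fun h => hp ?_)
                exact ⟨fun _ => h, fun _ => hgo⟩
              · refine mul_neg_of_neg_of_pos (hbneg _ hx hgo) (hbpos _ hy ?_)
                by_contra h
                exact hp ⟨fun hh => absurd hh hgo, fun hh => absurd hh h⟩
            have ht : A v ↑x * A v ↑y / a < 0 := div_neg_of_neg_of_pos hprod ha
            refine ⟨?_, ?_, ?_⟩
            · rintro ⟨-, hngo⟩; exact absurd hGo'xy hngo
            · rintro ⟨-, hnge⟩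
              have hAxy : 0 ≤ A ↑x ↑y := by
                by_cases hgo : Go.Adj ↑x ↑y
                · exact le_of_lt ((hsgn ↑x ↑y).2.1 ⟨hgo, fun h => hnge (hGe'iff.2 h)⟩)
                · exact ge_of_eq ((hsgn ↑x ↑y).2.2 ⟨hxyV, fun h => hnge (hGe'iff.2 h), hgo⟩)
              show 0 < A ↑x ↑y - A v ↑x * A v ↑y / a
              linarith
            · rintro ⟨-, -, hngo⟩; exact absurd hGo'xy hngo
        · -- y not in triangle
          have hb0y : A v ↑y = 0 := hb0 _ y.2 hy
          have hA'e : A' x y = A ↑x ↑y := by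
            simp only [hA'_def]
            rw [hb0y]
            ring
          have he : Ge'.Adj x y ↔ Ge.Adj ↑x ↑y := by
            rw [hGe' x y]
            constructor
            · rintro (h | ⟨-, -, hy', -⟩)
              · exact h
              · exact absurd hy' hy
            · exact Or.inl
          have ho : Go'.Adj x y ↔ Go.Adj ↑x ↑y := by
            rw [hGo' x y]
            constructor
            · rintro (h | ⟨-, -, hy', -⟩)
              · exact h
              · exact absurd hy' hy
            · exact Or.inl
          refine ⟨?_, ?_, ?_⟩
          · rintro ⟨h1, h2⟩
            rw [hA'e]
            exact (hsgn ↑x ↑y).1 ⟨he.1 h1, fun h => h2 (ho.2 h)⟩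
          · rintro ⟨h1, h2⟩
            rw [hA'e]
            exact (hsgn ↑x ↑y).2.1 ⟨ho.1 h1, fun h => h2 (he.2 h)⟩
          · rintro ⟨-, h1, h2⟩
            rw [hA'e]
            exact (hsgn ↑x ↑y).2.2 ⟨hxyV, fun h => h1 (he.2 h), fun h => h2 (ho.2 h)⟩
      · -- x not in triangle
        have hb0x : A v ↑x = 0 := hb0 _ x.2 hx
        have hA'e : A' x y = A ↑x ↑y := by
          simp only [hA'_def]
          rw [hb0x]
          ring
        have he : Ge'.Adj x y ↔ Ge.Adj ↑x ↑y := by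
          rw [hGe' x y]
          constructor
          · rintro (h | ⟨-, hx', -, -⟩)
            · exact h
            · exact absurd hx' hx
          · exact Or.inl
        have ho : Go'.Adj x y ↔ Go.Adj ↑x ↑y := by
          rw [hGo' x y]
          constructor
          · rintro (h | ⟨-, hx', -, -⟩)
            · exact h
            · exact absurd hx' hx
          · exact Or.inl
        refine ⟨?_, ?_, ?_⟩
        · rintro ⟨h1, h2⟩
          rw [hA'e]
          exact (hsgn ↑x ↑y).1 ⟨he.1 h1, fun h => h2 (ho.2 h)⟩
        · rintro ⟨h1, h2⟩
          rw [hA'e]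
          exact (hsgn ↑x ↑y).2.1 ⟨ho.1 h1, fun h => h2 (he.2 h)⟩
        · rintro ⟨-, h1, h2⟩
          rw [hA'e]
          exact (hsgn ↑x ↑y).2.2 ⟨hxyV, fun h => h1 (he.2 h), fun h => h2 (ho.2 h)⟩
  -- SAP transfer
  have hsap : HasSAP Ge Go A → HasSAP Ge' Go' A' := by
    intro hSAP X' hX'symm hX'zero hAX'
    have hX'sym : ∀ i j, X' i j = X' j i := fun i j => hX'symm.apply j i
    have htriadj : ∀ x y : {x : V // x ≠ v}, T ↑x → T ↑y → x ≠ y → (Ge' ⊔ Go').Adj x y := by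
      intro x y hx hy hxy
      rw [SimpleGraph.sup_adj]
      by_cases hp : Go.Adj v ↑x ↔ Go.Adj v ↑y
      · exact Or.inl ((hGe' x y).2 (Or.inr ⟨hxy, hx, hy, hp⟩))
      · exact Or.inr ((hGo' x y).2 (Or.inr ⟨hxy, hx, hy, hp⟩))
    have hX'tri : ∀ u j : {x : V // x ≠ v}, T ↑u → T ↑j → X' u j = 0 := by
      intro u j hu hj
      by_cases huj : u = j
      · exact hX'zero u j (Or.inl huj)
      · exact hX'zero u j (Or.inr (htriadj u j hu hj huj))
    set w : {x : V // x ≠ v} → ℝ :=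
      fun j => ∑ u : {x : V // x ≠ v}, A v ↑u * X' u j with hw_def
    have hw0 : ∀ j : {x : V // x ≠ v}, T ↑j → w j = 0 := by
      intro j hj
      refine Finset.sum_eq_zero fun u _ => ?_
      by_cases hu : T ↑u
      · rw [hX'tri u j hu hj, mul_zero]
      · rw [hb0 _ u.2 hu, zero_mul]
    have hbw : ∑ u : {x : V // x ≠ v}, A v ↑u * w u = 0 := by
      refine Finset.sum_eq_zero fun u _ => ?_
      by_cases hu : T ↑u
      · rw [hw0 u hu, mul_zero]
      · rw [hb0 _ u.2 hu, zero_mul]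
    have hAX'' : ∀ i j : {x : V // x ≠ v},
        ∑ k : {x : V // x ≠ v}, A ↑i ↑k * X' k j = A v ↑i / a * w j := by
      intro i j
      have h0 := congrFun (congrFun hAX' i) j
      rw [Matrix.mul_apply, Matrix.zero_apply] at h0
      have h2 : ∑ k : {x : V // x ≠ v}, A' i k * X' k j
          = (∑ k : {x : V // x ≠ v}, A ↑i ↑k * X' k j) - A v ↑i / a * w j := by
        rw [hw_def, Finset.mul_sum, ← Finset.sum_sub_distrib]
        refine Finset.sum_congr rfl fun k _ => ?_
        rw [hA'_def]; field_simp
      rw [h2] at h0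
      linarith
    have hrowW : ∀ i : {x : V // x ≠ v},
        ∑ k : {x : V // x ≠ v}, A ↑i ↑k * w k = 0 := by
      intro i
      calc ∑ k : {x : V // x ≠ v}, A ↑i ↑k * w k
          = ∑ k : {x : V // x ≠ v}, ∑ u : {x : V // x ≠ v},
              A ↑i ↑k * (A v ↑u * X' u k) :=
            Finset.sum_congr rfl fun k _ => by rw [hw_def, Finset.mul_sum]
        _ = ∑ u : {x : V // x ≠ v}, ∑ k : {x : V // x ≠ v},
              A ↑i ↑k * (A v ↑u * X' u k) := Finset.sum_comm
        _ = ∑ u : {x : V // x ≠ v}, A v ↑u * (A v ↑i / a * w u) := by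
            refine Finset.sum_congr rfl fun u _ => ?_
            have e1 : ∑ k : {x : V // x ≠ v}, A ↑i ↑k * (A v ↑u * X' u k)
                = A v ↑u * ∑ k : {x : V // x ≠ v}, A ↑i ↑k * X' k u := by
              rw [Finset.mul_sum]
              refine Finset.sum_congr rfl fun k _ => ?_
              rw [hX'sym u k]; ring
            rw [e1, hAX'' i u]
        _ = A v ↑i / a * ∑ u : {x : V // x ≠ v}, A v ↑u * w u := by
            rw [Finset.mul_sum]
            exact Finset.sum_congr rfl fun u _ => by ring
        _ = 0 := by rw [hbw, mul_zero]
    set X : Matrix V V ℝ := fun i j =>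
      if hi : i = v then (if hj : j = v then 0 else -w ⟨j, hj⟩ / a)
      else (if hj : j = v then -w ⟨i, hi⟩ / a else X' ⟨i, hi⟩ ⟨j, hj⟩) with hX_def
    have hXvv : X v v = 0 := by simp [hX_def]
    have hXvj : ∀ j : {x : V // x ≠ v}, X v ↑j = -w j / a := by
      intro j; simp [hX_def, j.2]
    have hXiv : ∀ i : {x : V // x ≠ v}, X ↑i v = -w i / a := by
      intro i; simp [hX_def, i.2]
    have hXij : ∀ i j : {x : V // x ≠ v}, X ↑i ↑j = X' i j := by
      intro i j; simp [hX_def, i.2, j.2]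
    have hXsymm : X.IsSymm := by
      apply Matrix.IsSymm.ext
      intro i j
      by_cases hi : i = v <;> by_cases hj : j = v
      · subst hi; subst hj; rfl
      · subst hi
        have e1 : X j i = -w ⟨j, hj⟩ / a := hXiv ⟨j, hj⟩
        have e2 : X i j = -w ⟨j, hj⟩ / a := hXvj ⟨j, hj⟩
        rw [e1, e2]
      · subst hj
        have e1 : X j i = -w ⟨i, hi⟩ / a := hXvj ⟨i, hi⟩
        have e2 : X i j = -w ⟨i, hi⟩ / a := hXiv ⟨i, hi⟩
        rw [e1, e2]
      · have e1 : X j i = X' ⟨j, hj⟩ ⟨i, hi⟩ := hXij ⟨j, hj⟩ ⟨i, hi⟩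
        have e2 : X i j = X' ⟨i, hi⟩ ⟨j, hj⟩ := hXij ⟨i, hi⟩ ⟨j, hj⟩
        rw [e1, e2]
        exact hX'sym _ _
    have hTadj : ∀ x : V, (Ge ⊔ Go).Adj v x → T x := fun x h => (hnbr x).1 h
    have hXzero : ∀ i j, (i = j ∨ (Ge ⊔ Go).Adj i j) → X i j = 0 := by
      rintro i j (rfl | hadj)
      · by_cases hi : i = v
        · subst hi; exact hXvv
        · have e1 : X i i = X' ⟨i, hi⟩ ⟨i, hi⟩ := hXij ⟨i, hi⟩ ⟨i, hi⟩
          rw [e1]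
          exact hX'zero _ _ (Or.inl rfl)
      · by_cases hi : i = v
        · have hj : j ≠ v := by
            intro h
            rw [hi, h] at hadj
            exact (Ge ⊔ Go).irrefl hadj
          have hTj : T j := hTadj j (by rwa [hi] at hadj)
          have e1 : X i j = -w ⟨j, hj⟩ / a := by rw [hi]; exact hXvj ⟨j, hj⟩
          rw [e1, hw0 ⟨j, hj⟩ hTj]
          simp
        · by_cases hj : j = v
          · have hTi : T i := hTadj i (by rw [hj] at hadj; exact hadj.symm)
            have e1 : X i j = -w ⟨i, hi⟩ / a := by rw [hj]; exact hXiv ⟨i, hi⟩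
            rw [e1, hw0 ⟨i, hi⟩ hTi]
            simp
          · have e1 : X i j = X' ⟨i, hi⟩ ⟨j, hj⟩ := hXij ⟨i, hi⟩ ⟨j, hj⟩
            rw [e1]
            apply hX'zero
            right
            rw [SimpleGraph.sup_adj] at hadj ⊢
            rcases hadj with h | h
            · exact Or.inl ((hGe' _ _).2 (Or.inl h))
            · exact Or.inr ((hGo' _ _).2 (Or.inl h))
    have hAX : A * X = 0 := by
      ext i j
      rw [Matrix.mul_apply, Matrix.zero_apply,
        sum_split v (fun k => A i k * X k j)]
      by_cases hj : j = v
      · rw [hj, hXvv, mul_zero, zero_add]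
        rw [show (∑ k : {x : V // x ≠ v}, A i ↑k * X ↑k v)
            = ∑ k : {x : V // x ≠ v}, A i ↑k * (-w k / a) from
          Finset.sum_congr rfl fun k _ => by rw [hXiv k]]
        rw [show (∑ k : {x : V // x ≠ v}, A i ↑k * (-w k / a))
            = (∑ k : {x : V // x ≠ v}, A i ↑k * w k) * (-1/a) from by
          rw [Finset.sum_mul]
          exact Finset.sum_congr rfl fun k _ => by ring]
        by_cases hi : i = v
        · rw [hi, hbw, zero_mul]
        · rw [show (∑ k : {x : V // x ≠ v}, A i ↑k * w k) = 0 from hrowW ⟨i, hi⟩, zero_mul]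
      · have e0 : X v j = -w ⟨j, hj⟩ / a := hXvj ⟨j, hj⟩
        rw [e0]
        rw [show (∑ k : {x : V // x ≠ v}, A i ↑k * X ↑k j)
            = ∑ k : {x : V // x ≠ v}, A i ↑k * X' k ⟨j, hj⟩ from
          Finset.sum_congr rfl fun k _ => by rw [show X ↑k j = X' k ⟨j, hj⟩ from hXij k ⟨j, hj⟩]]
        by_cases hi : i = v
        · rw [hi]
          have e1 : ∑ k : {x : V // x ≠ v}, A v ↑k * X' k ⟨j, hj⟩ = w ⟨j, hj⟩ := rfl
          rw [e1, ← ha_def]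
          field_simp
          ring
        · have e1 : ∑ k : {x : V // x ≠ v}, A i ↑k * X' k ⟨j, hj⟩
              = A v i / a * w ⟨j, hj⟩ := hAX'' ⟨i, hi⟩ ⟨j, hj⟩
          rw [e1, show A i v = A v i from hsym i v]
          field_simp
          ring
    have hX0 : X = 0 := hSAP X hXsymm hXzero hAX
    ext i j
    have e1 : X' i j = X ↑i ↑j := (hXij i j).symm
    rw [e1, hX0]
    simp
  exact ⟨A', hA'mem, hA'psd, hnull, hsap⟩


/-- a `YΔ`-transformation at a degree-three vertex `v` does not decrease
`M₊` nor `ν`. -/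
theorem stmt5 {V : Type*} [Fintype V] [DecidableEq V]
    (Ge Go : SimpleGraph V) (v u₁ u₂ u₃ : V)
    (h12 : u₁ ≠ u₂) (h13 : u₁ ≠ u₃) (h23 : u₂ ≠ u₃)
    (hnbr : ∀ x, (Ge ⊔ Go).Adj v x ↔ (x = u₁ ∨ x = u₂ ∨ x = u₃))
    (hone : ∀ x, (x = u₁ ∨ x = u₂ ∨ x = u₃) → ¬(Ge.Adj v x ∧ Go.Adj v x))
    (Ge' Go' : SimpleGraph {x : V // x ≠ v})
    (hGe' : ∀ x y : {x : V // x ≠ v}, Ge'.Adj x y ↔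
      (Ge.Adj (x : V) (y : V) ∨
        (x ≠ y ∧ ((x : V) = u₁ ∨ (x : V) = u₂ ∨ (x : V) = u₃) ∧
          ((y : V) = u₁ ∨ (y : V) = u₂ ∨ (y : V) = u₃) ∧
          (Go.Adj v (x : V) ↔ Go.Adj v (y : V)))))
    (hGo' : ∀ x y : {x : V // x ≠ v}, Go'.Adj x y ↔
      (Go.Adj (x : V) (y : V) ∨
        (x ≠ y ∧ ((x : V) = u₁ ∨ (x : V) = u₂ ∨ (x : V) = u₃) ∧
          ((y : V) = u₁ ∨ (y : V) = u₂ ∨ (y : V) = u₃) ∧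
          ¬(Go.Adj v (x : V) ↔ Go.Adj v (y : V))))) :
    MplusSigned Ge Go ≤ MplusSigned Ge' Go' ∧ nuSigned Ge Go ≤ nuSigned Ge' Go' := by
  have hbdd : ∀ S : Set ℕ, (∀ n ∈ S, ∃ B : Matrix {x : V // x ≠ v} {x : V // x ≠ v} ℝ,
      matNullity B = n) → BddAbove S := by
    intro S hS
    refine ⟨Fintype.card {x : V // x ≠ v}, fun n hn => ?_⟩
    obtain ⟨B, hB⟩ := hS n hn
    rw [← hB]
    calc matNullity B ≤ Module.finrank ℝ ({x : V // x ≠ v} → ℝ) :=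
          Submodule.finrank_le _
      _ = Fintype.card {x : V // x ≠ v} := by
          simp [Module.finrank_pi]
  have hmono : ∀ S T : Set ℕ, BddAbove T → S ⊆ T → sSup S ≤ sSup T := by
    intro S T hT h
    rcases S.eq_empty_or_nonempty with rfl | hS
    · simp [csSup_empty]
    · exact csSup_le_csSup hT hS h
  constructor
  · apply hmono
    · apply hbdd
      rintro n ⟨B, _, _, hB⟩
      exact ⟨B, hB⟩
    rintro n ⟨A, hA, hPSD, hn⟩
    obtain ⟨A', hA', hPSD', hnull, _⟩ := YDelta_key Ge Go v u₁ u₂ u₃ h12 h13 h23 hnbr hone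
      Ge' Go' hGe' hGo' A hA hPSD
    exact ⟨A', hA', hPSD', hnull.trans hn⟩
  · apply hmono
    · apply hbdd
      rintro n ⟨B, _, _, _, hB⟩
      exact ⟨B, hB⟩
    rintro n ⟨A, hA, hPSD, hSAP, hn⟩
    obtain ⟨A', hA', hPSD', hnull, hSAP'⟩ := YDelta_key Ge Go v u₁ u₂ u₃ h12 h13 h23 hnbr hone
      Ge' Go' hGe' hGo' A hA hPSD
    exact ⟨A', hA', hPSD', hSAP' hSAP, hnull.trans hn⟩
end

section
/- Let (Ge, Go) be a signed graph on a finite vertex type V and let v₁, v₂, v₃ be distinct vertices that are pairwise adjacent in Ge ⊔ Go, with each pair vᵢ, vⱼ adjacent in exactly one of Ge, Go, and with an even number (0 or 2) of the three pairs adjacent in Go (an even triangle). Let (Ge', Go') be the signed graph on Option V with new vertex w (the ΔY-transformation on the triangle): on pairs of old vertices, Ge'.Adj x y iff Ge.Adj x y and {x, y} is not one of the three triangle pairs, and Go'.Adj x y iff Go.Adj x y and {x, y} is not one of the three triangle pairs; w is adjacent to exactly v₁, v₂, v₃, where if none of the three triangle edges is odd then wv₁, wv₂, wv₃ are all even, and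 if exactly two triangle edges are odd, with vₖ the common end of the two odd edges, then wvₖ is odd and the other two new edges are even. Then M₊(Ge, Go) ≤ M₊(Ge', Go') and ν(Ge, Go) ≤ ν(Ge', Go'). -/
open Matrix

private lemma sSup_mono_nat {S T : Set ℕ} (h : S ⊆ T) (hT : BddAbove T) :
    sSup S ≤ sSup T := by
  rcases S.eq_empty_or_nonempty with hS | hS
  · simp [hS]
  · exact csSup_le_csSup hT hS h

set_option maxHeartbeats 1600000 in
/-- a `ΔY`-transformation on an even triangle does not decrease `M₊` nor `ν`. -/
theorem stmt6 {V : Type*} [Fintype V] [DecidableEq V]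
    (Ge Go : SimpleGraph V) (v₁ v₂ v₃ : V)
    (h12 : v₁ ≠ v₂) (h13 : v₁ ≠ v₃) (h23 : v₂ ≠ v₃)
    (hadj12 : (Ge ⊔ Go).Adj v₁ v₂) (hadj13 : (Ge ⊔ Go).Adj v₁ v₃)
    (hadj23 : (Ge ⊔ Go).Adj v₂ v₃)
    (hone12 : ¬(Ge.Adj v₁ v₂ ∧ Go.Adj v₁ v₂))
    (hone13 : ¬(Ge.Adj v₁ v₃ ∧ Go.Adj v₁ v₃))
    (hone23 : ¬(Ge.Adj v₂ v₃ ∧ Go.Adj v₂ v₃))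
    (heven : ¬ Xor' (Go.Adj v₁ v₂) (Xor' (Go.Adj v₁ v₃) (Go.Adj v₂ v₃)))
    (Ge' Go' : SimpleGraph (Option V))
    (hGe'old : ∀ x y : V, Ge'.Adj (some x) (some y) ↔
      (Ge.Adj x y ∧ ¬(x ∈ ({v₁, v₂, v₃} : Set V) ∧ y ∈ ({v₁, v₂, v₃} : Set V))))
    (hGo'old : ∀ x y : V, Go'.Adj (some x) (some y) ↔
      (Go.Adj x y ∧ ¬(x ∈ ({v₁, v₂, v₃} : Set V) ∧ y ∈ ({v₁, v₂, v₃} : Set V))))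
    (hGo'w : ∀ x : V, Go'.Adj none (some x) ↔
      ((x = v₁ ∧ Go.Adj v₁ v₂ ∧ Go.Adj v₁ v₃) ∨
       (x = v₂ ∧ Go.Adj v₂ v₁ ∧ Go.Adj v₂ v₃) ∨
       (x = v₃ ∧ Go.Adj v₃ v₁ ∧ Go.Adj v₃ v₂)))
    (hGe'w : ∀ x : V, Ge'.Adj none (some x) ↔
      ((x = v₁ ∨ x = v₂ ∨ x = v₃) ∧ ¬ Go'.Adj none (some x))) :
    MplusSigned Ge Go ≤ MplusSigned Ge' Go' ∧ nuSigned Ge Go ≤ nuSigned Ge' Go' := by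
  classical
  have hsup12 : Ge.Adj v₁ v₂ ∨ Go.Adj v₁ v₂ := (SimpleGraph.sup_adj _ _ _ _).mp hadj12
  have hsup13 : Ge.Adj v₁ v₃ ∨ Go.Adj v₁ v₃ := (SimpleGraph.sup_adj _ _ _ _).mp hadj13
  have hsup23 : Ge.Adj v₂ v₃ ∨ Go.Adj v₂ v₃ := (SimpleGraph.sup_adj _ _ _ _).mp hadj23
  have key : ∀ A ∈ SignedSet Ge Go, A.PosSemidef →
      ∃ A' ∈ SignedSet Ge' Go', A'.PosSemidef ∧ matNullity A' = matNullity A ∧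
        (HasSAP Ge Go A → HasSAP Ge' Go' A') := by
    intro A hA hApsd
    obtain ⟨hAsymm, hAcond⟩ := hA
    have hAs : ∀ i j, A j i = A i j := fun i j => hAsymm.apply i j
    -- sign facts for the triangle entries
    have hsgn : ∀ p q : V, (Ge.Adj p q ∨ Go.Adj p q) → ¬(Ge.Adj p q ∧ Go.Adj p q) →
        ((0 < A p q ↔ Go.Adj p q) ∧ (A p q < 0 ↔ Ge.Adj p q)) := by
      intro p q hor hnot
      rcases hor with hge | hgo
      · have hgo' : ¬ Go.Adj p q := fun hx => hnot ⟨hge, hx⟩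
        have hlt := (hAcond p q).1 ⟨hge, hgo'⟩
        exact ⟨⟨fun h => absurd hlt (by linarith), fun h => absurd h hgo'⟩,
          ⟨fun _ => hge, fun _ => hlt⟩⟩
      · have hge' : ¬ Ge.Adj p q := fun hx => hnot ⟨hx, hgo⟩
        have hgt := (hAcond p q).2.1 ⟨hgo, hge'⟩
        exact ⟨⟨fun _ => hgo, fun _ => hgt⟩,
          ⟨fun h => absurd hgt (by linarith), fun h => absurd h hge'⟩⟩
    obtain ⟨ha_pos, ha_neg⟩ := hsgn v₁ v₂ hsup12 hone12
    obtain ⟨hd_pos, hd_neg⟩ := hsgn v₁ v₃ hsup13 hone13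
    obtain ⟨he_pos, he_neg⟩ := hsgn v₂ v₃ hsup23 hone23
    have ha_neg' : ¬ Go.Adj v₁ v₂ → A v₁ v₂ < 0 :=
      fun h => ha_neg.mpr (hsup12.resolve_right h)
    have hd_neg' : ¬ Go.Adj v₁ v₃ → A v₁ v₃ < 0 :=
      fun h => hd_neg.mpr (hsup13.resolve_right h)
    have he_neg' : ¬ Go.Adj v₂ v₃ → A v₂ v₃ < 0 :=
      fun h => he_neg.mpr (hsup23.resolve_right h)
    have hcase : (0 < A v₁ v₂ ∧ 0 < A v₁ v₃ ∧ A v₂ v₃ < 0) ∨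
        (0 < A v₁ v₂ ∧ A v₁ v₃ < 0 ∧ 0 < A v₂ v₃) ∨
        (A v₁ v₂ < 0 ∧ 0 < A v₁ v₃ ∧ 0 < A v₂ v₃) ∨
        (A v₁ v₂ < 0 ∧ A v₁ v₃ < 0 ∧ A v₂ v₃ < 0) := by
      by_cases o12 : Go.Adj v₁ v₂ <;> by_cases o13 : Go.Adj v₁ v₃ <;>
        by_cases o23 : Go.Adj v₂ v₃
      · exact absurd (by simp [Xor', o12, o13, o23]) heven
      · exact Or.inl ⟨ha_pos.mpr o12, hd_pos.mpr o13, he_neg' o23⟩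
      · exact Or.inr (Or.inl ⟨ha_pos.mpr o12, hd_neg' o13, he_pos.mpr o23⟩)
      · exact absurd (by simp [Xor', o12, o13, o23]) heven
      · exact Or.inr (Or.inr (Or.inl ⟨ha_neg' o12, hd_pos.mpr o13, he_pos.mpr o23⟩))
      · exact absurd (by simp [Xor', o12, o13, o23]) heven
      · exact absurd (by simp [Xor', o12, o13, o23]) heven
      · exact Or.inr (Or.inr (Or.inr ⟨ha_neg' o12, hd_neg' o13, he_neg' o23⟩))
    have ha0 : A v₁ v₂ ≠ 0 := by
      rcases hcase with ⟨h1, _, _⟩ | ⟨h1, _, _⟩ | ⟨h1, _, _⟩ | ⟨h1, _, _⟩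
      exacts [h1.ne', h1.ne', h1.ne, h1.ne]
    have hd0 : A v₁ v₃ ≠ 0 := by
      rcases hcase with ⟨_, h2, _⟩ | ⟨_, h2, _⟩ | ⟨_, h2, _⟩ | ⟨_, h2, _⟩
      exacts [h2.ne', h2.ne, h2.ne', h2.ne]
    have he0 : A v₂ v₃ ≠ 0 := by
      rcases hcase with ⟨_, _, h3⟩ | ⟨_, _, h3⟩ | ⟨_, _, h3⟩ | ⟨_, _, h3⟩
      exacts [h3.ne, h3.ne', h3.ne', h3.ne]
    have had : A v₁ v₂ * A v₁ v₃ ≠ 0 := mul_ne_zero ha0 hd0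
    -- the new entries
    set c : ℝ := -(A v₂ v₃) / (A v₁ v₂ * A v₁ v₃) with hc_def
    have hcad : c * (A v₁ v₂ * A v₁ v₃) = -(A v₂ v₃) := div_mul_cancel₀ _ had
    have hc : 0 < c := by
      rw [hc_def, div_pos_iff]
      rcases hcase with ⟨h1, h2, h3⟩ | ⟨h1, h2, h3⟩ | ⟨h1, h2, h3⟩ | ⟨h1, h2, h3⟩
      · exact Or.inl ⟨by linarith, mul_pos h1 h2⟩
      · exact Or.inr ⟨by linarith, mul_neg_of_pos_of_neg h1 h2⟩
      · exact Or.inr ⟨by linarith, mul_neg_of_neg_of_pos h1 h2⟩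
      · exact Or.inl ⟨by linarith, mul_pos_of_neg_of_neg h1 h2⟩
    set s1 : ℝ := if 0 < A v₁ v₂ ∧ 0 < A v₁ v₃ then (1 : ℝ) else -1 with hs1_def
    have hs1sq : s1 * s1 = 1 := by rw [hs1_def]; split_ifs <;> norm_num
    have hs1ne : s1 ≠ 0 := by rw [hs1_def]; split_ifs <;> norm_num
    set bv2 : ℝ := -(c * A v₁ v₂) * s1 with hbv2_def
    set bv3 : ℝ := -(c * A v₁ v₃) * s1 with hbv3_def
    have hprod12 : s1 * bv2 = -(c * A v₁ v₂) := by
      rw [hbv2_def]; linear_combination (-(c * A v₁ v₂)) * hs1sq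
    have hprod13 : s1 * bv3 = -(c * A v₁ v₃) := by
      rw [hbv3_def]; linear_combination (-(c * A v₁ v₃)) * hs1sq
    have hprod23 : bv2 * bv3 = -(c * A v₂ v₃) := by
      rw [hbv2_def, hbv3_def]
      linear_combination (c * A v₁ v₂ * (c * A v₁ v₃)) * hs1sq + c * hcad
    have hbv2ne : bv2 ≠ 0 := by
      intro h
      rw [h, mul_zero] at hprod12
      exact mul_ne_zero hc.ne' ha0 (by linarith)
    have hbv3ne : bv3 ≠ 0 := by
      intro h
      rw [h, mul_zero] at hprod13
      exact mul_ne_zero hc.ne' hd0 (by linarith)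
    -- signs of the new entries
    have hs1pos : (0 < A v₁ v₂ ∧ 0 < A v₁ v₃) → 0 < s1 := by
      intro h; rw [hs1_def, if_pos h]; norm_num
    have hs1neg : ¬(0 < A v₁ v₂ ∧ 0 < A v₁ v₃) → s1 < 0 := by
      intro h; rw [hs1_def, if_neg h]; norm_num
    have hbv2pos : (0 < A v₁ v₂ ∧ 0 < A v₂ v₃) → 0 < bv2 := by
      rintro ⟨ha', he'⟩
      rcases hcase with ⟨h1, h2, h3⟩ | ⟨h1, h2, h3⟩ | ⟨h1, h2, h3⟩ | ⟨h1, h2, h3⟩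
      · linarith
      · have hs : s1 = -1 := by
          rw [hs1_def, if_neg]; rintro ⟨-, hh⟩; linarith
        rw [hbv2_def, hs]; nlinarith [mul_pos hc ha']
      · linarith
      · linarith
    have hbv2neg : ¬(0 < A v₁ v₂ ∧ 0 < A v₂ v₃) → bv2 < 0 := by
      intro h
      rcases hcase with ⟨h1, h2, h3⟩ | ⟨h1, h2, h3⟩ | ⟨h1, h2, h3⟩ | ⟨h1, h2, h3⟩
      · have hs : s1 = 1 := by rw [hs1_def, if_pos ⟨h1, h2⟩]
        rw [hbv2_def, hs]; nlinarith [mul_pos hc h1]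
      · exact absurd ⟨h1, h3⟩ h
      · have hs : s1 = -1 := by
          rw [hs1_def, if_neg]; rintro ⟨hh, -⟩; linarith
        rw [hbv2_def, hs]; nlinarith [mul_pos hc (neg_pos.mpr h1)]
      · have hs : s1 = -1 := by
          rw [hs1_def, if_neg]; rintro ⟨hh, -⟩; linarith
        rw [hbv2_def, hs]; nlinarith [mul_pos hc (neg_pos.mpr h1)]
    have hbv3pos : (0 < A v₁ v₃ ∧ 0 < A v₂ v₃) → 0 < bv3 := by
      rintro ⟨hd', he'⟩
      rcases hcase with ⟨h1, h2, h3⟩ | ⟨h1, h2, h3⟩ | ⟨h1, h2, h3⟩ | ⟨h1, h2, h3⟩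
      · linarith
      · linarith
      · have hs : s1 = -1 := by
          rw [hs1_def, if_neg]; rintro ⟨hh, -⟩; linarith
        rw [hbv3_def, hs]; nlinarith [mul_pos hc hd']
      · linarith
    have hbv3neg : ¬(0 < A v₁ v₃ ∧ 0 < A v₂ v₃) → bv3 < 0 := by
      intro h
      rcases hcase with ⟨h1, h2, h3⟩ | ⟨h1, h2, h3⟩ | ⟨h1, h2, h3⟩ | ⟨h1, h2, h3⟩
      · have hs : s1 = 1 := by rw [hs1_def, if_pos ⟨h1, h2⟩]
        rw [hbv3_def, hs]; nlinarith [mul_pos hc h2]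
      · have hs : s1 = -1 := by
          rw [hs1_def, if_neg]; rintro ⟨-, hh⟩; linarith
        rw [hbv3_def, hs]; nlinarith [mul_pos hc (neg_pos.mpr h2)]
      · exact absurd ⟨h2, h3⟩ h
      · have hs : s1 = -1 := by
          rw [hs1_def, if_neg]; rintro ⟨-, hh⟩; linarith
        rw [hbv3_def, hs]; nlinarith [mul_pos hc (neg_pos.mpr h2)]
    -- the vector b
    set bvec : V → ℝ :=
      fun x => if x = v₁ then s1 else if x = v₂ then bv2 else if x = v₃ then bv3 else 0
      with hbvec_def
    have hbvec1 : bvec v₁ = s1 := by rw [hbvec_def]; simp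
    have hbvec2 : bvec v₂ = bv2 := by rw [hbvec_def]; simp [Ne.symm h12]
    have hbvec3 : bvec v₃ = bv3 := by rw [hbvec_def]; simp [Ne.symm h13, Ne.symm h23]
    have hbvec0 : ∀ x, ¬(x = v₁ ∨ x = v₂ ∨ x = v₃) → bvec x = 0 := by
      intro x hx
      push_neg at hx
      rw [hbvec_def]
      simp [hx.1, hx.2.1, hx.2.2]
    have hsum : ∀ f : V → ℝ,
        ∑ x, bvec x * f x = s1 * f v₁ + bv2 * f v₂ + bv3 * f v₃ := by
      intro f
      have h0 : ∀ x ∈ (Finset.univ : Finset V), x ∉ ({v₁, v₂, v₃} : Finset V) →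
          bvec x * f x = 0 := by
        intro x _ hx
        rw [hbvec0 x (by simpa using hx), zero_mul]
      rw [← Finset.sum_subset (Finset.subset_univ ({v₁, v₂, v₃} : Finset V)) h0]
      rw [Finset.sum_insert (by simp [h12, h13]), Finset.sum_insert (by simp [h23]),
        Finset.sum_singleton, hbvec1, hbvec2, hbvec3]
      ring
    -- the matrix A'
    obtain ⟨A', hA'nn, hA'ns, hA'sn, hA'ss⟩ :
        ∃ A' : Matrix (Option V) (Option V) ℝ,
          A' none none = c ∧ (∀ x, A' none (some x) = bvec x) ∧
          (∀ x, A' (some x) none = bvec x) ∧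
          (∀ x y, A' (some x) (some y) = A x y + bvec x * bvec y / c) :=
      ⟨fun p q => p.elim (q.elim c bvec)
          (fun x => q.elim (bvec x) (fun y => A x y + bvec x * bvec y / c)),
        rfl, fun _ => rfl, fun _ => rfl, fun _ _ => rfl⟩
    have hA'symm : A'.IsSymm := by
      show A'ᵀ = A'
      ext p q
      rw [Matrix.transpose_apply]
      match p, q with
      | none, none => rfl
      | none, some x => rw [hA'ns, hA'sn]
      | some x, none => rw [hA'ns, hA'sn]
      | some x, some y => rw [hA'ss, hA'ss, hAs x y, mul_comm (bvec y)]
    -- triangle entries of A' vanish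
    have htz12 : A v₁ v₂ + s1 * bv2 / c = 0 := by
      rw [hprod12]; field_simp; ring
    have htz13 : A v₁ v₃ + s1 * bv3 / c = 0 := by
      rw [hprod13]; field_simp; ring
    have htz23 : A v₂ v₃ + bv2 * bv3 / c = 0 := by
      rw [hprod23]; field_simp; ring
    -- membership in the signed set
    have hmemT : ∀ x : V, (x = v₁ ∨ x = v₂ ∨ x = v₃) ↔ x ∈ ({v₁, v₂, v₃} : Set V) := by
      intro x; simp
    have hbb0 : ∀ x y : V, ¬(x ∈ ({v₁, v₂, v₃} : Set V) ∧ y ∈ ({v₁, v₂, v₃} : Set V)) →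
        bvec x * bvec y = 0 := by
      intro x y hT
      rcases not_and_or.mp hT with hx | hx
      · rw [hbvec0 x (by simpa using fun h => hx ((hmemT x).mp h)), zero_mul]
      · rw [hbvec0 y (by simpa using fun h => hx ((hmemT y).mp h)), mul_zero]
    have hA'mem : A' ∈ SignedSet Ge' Go' := by
      refine ⟨hA'symm, ?_⟩
      -- condition at (none, some x)
      have hcondw : ∀ x : V,
          ((Ge'.Adj none (some x) ∧ ¬ Go'.Adj none (some x)) → A' none (some x) < 0) ∧
          ((Go'.Adj none (some x) ∧ ¬ Ge'.Adj none (some x)) → 0 < A' none (some x)) ∧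
          ((¬ Ge'.Adj none (some x) ∧ ¬ Go'.Adj none (some x)) → A' none (some x) = 0) := by
        intro x
        refine ⟨?_, ?_, ?_⟩
        · rintro ⟨hge, hngo⟩
          rw [hA'ns]
          obtain ⟨hx, hngo'⟩ := (hGe'w x).mp hge
          rcases hx with rfl | rfl | rfl
          · rw [hbvec1]
            apply hs1neg
            rintro ⟨ha', hd'⟩
            exact hngo' ((hGo'w _).mpr (Or.inl ⟨rfl, ha_pos.mp ha', hd_pos.mp hd'⟩))
          · rw [hbvec2]
            apply hbv2neg
            rintro ⟨ha', he'⟩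
            exact hngo' ((hGo'w _).mpr
              (Or.inr (Or.inl ⟨rfl, (ha_pos.mp ha').symm, he_pos.mp he'⟩)))
          · rw [hbvec3]
            apply hbv3neg
            rintro ⟨hd', he'⟩
            exact hngo' ((hGo'w _).mpr
              (Or.inr (Or.inr ⟨rfl, (hd_pos.mp hd').symm, (he_pos.mp he').symm⟩)))
        · rintro ⟨hgo, -⟩
          rw [hA'ns]
          rcases (hGo'w x).mp hgo with ⟨rfl, hx1, hx2⟩ | ⟨rfl, hx1, hx2⟩ | ⟨rfl, hx1, hx2⟩
          · rw [hbvec1]; exact hs1pos ⟨ha_pos.mpr hx1, hd_pos.mpr hx2⟩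
          · rw [hbvec2]; exact hbv2pos ⟨ha_pos.mpr hx1.symm, he_pos.mpr hx2⟩
          · rw [hbvec3]; exact hbv3pos ⟨hd_pos.mpr hx1.symm, he_pos.mpr hx2.symm⟩
        · rintro ⟨hnge, hngo⟩
          rw [hA'ns]
          apply hbvec0
          intro hx
          exact hnge ((hGe'w x).mpr ⟨hx, hngo⟩)
      intro i j
      match i, j with
      | none, none =>
        exact ⟨fun h => absurd h.1 (SimpleGraph.irrefl Ge'),
          fun h => absurd h.1 (SimpleGraph.irrefl Go'),
          fun h => absurd rfl h.1⟩
      | none, some x =>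
        obtain ⟨c1, c2, c3⟩ := hcondw x
        exact ⟨c1, c2, fun h => c3 ⟨h.2.1, h.2.2⟩⟩
      | some x, none =>
        obtain ⟨c1, c2, c3⟩ := hcondw x
        have hval : A' (some x) none = A' none (some x) := by rw [hA'sn, hA'ns]
        refine ⟨fun h => ?_, fun h => ?_, fun h => ?_⟩
        · rw [hval]; exact c1 ⟨h.1.symm, fun hh => h.2 hh.symm⟩
        · rw [hval]; exact c2 ⟨h.1.symm, fun hh => h.2 hh.symm⟩
        · rw [hval]
          exact c3 ⟨fun hh => h.2.1 hh.symm, fun hh => h.2.2 hh.symm⟩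
      | some x, some y =>
        refine ⟨?_, ?_, ?_⟩
        · rintro ⟨hge, hngo⟩
          rw [hA'ss]
          obtain ⟨hgexy, hnT⟩ := (hGe'old x y).mp hge
          have hngoxy : ¬ Go.Adj x y := fun hh => hngo ((hGo'old x y).mpr ⟨hh, hnT⟩)
          have h1 := (hAcond x y).1 ⟨hgexy, hngoxy⟩
          rw [hbb0 x y hnT, zero_div, add_zero]
          exact h1
        · rintro ⟨hgo, hnge⟩
          rw [hA'ss]
          obtain ⟨hgoxy, hnT⟩ := (hGo'old x y).mp hgo
          have hngexy : ¬ Ge.Adj x y := fun hh => hnge ((hGe'old x y).mpr ⟨hh, hnT⟩)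
          have h1 := (hAcond x y).2.1 ⟨hgoxy, hngexy⟩
          rw [hbb0 x y hnT, zero_div, add_zero]
          exact h1
        · rintro ⟨hne, hnge, hngo⟩
          have hxy : x ≠ y := fun h => hne (by rw [h])
          rw [hA'ss]
          by_cases hT : x ∈ ({v₁, v₂, v₃} : Set V) ∧ y ∈ ({v₁, v₂, v₃} : Set V)
          · have hx := (hmemT x).mpr hT.1
            have hy := (hmemT y).mpr hT.2
            rcases hx with rfl | rfl | rfl <;> rcases hy with rfl | rfl | rfl
            · exact absurd rfl hxy
            · rw [hbvec1, hbvec2]; exact htz12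
            · rw [hbvec1, hbvec3]; exact htz13
            · rw [hbvec2, hbvec1, hAs, mul_comm bv2 s1]; exact htz12
            · exact absurd rfl hxy
            · rw [hbvec2, hbvec3]; exact htz23
            · rw [hbvec3, hbvec1, hAs, mul_comm bv3 s1]; exact htz13
            · rw [hbvec3, hbvec2, hAs, mul_comm bv3 bv2]; exact htz23
            · exact absurd rfl hxy
          · have h1 : ¬ Ge.Adj x y := fun hh => hnge ((hGe'old x y).mpr ⟨hh, hT⟩)
            have h2 : ¬ Go.Adj x y := fun hh => hngo ((hGo'old x y).mpr ⟨hh, hT⟩)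
            rw [(hAcond x y).2.2 ⟨hxy, h1, h2⟩, hbb0 x y hT, zero_div, add_zero]
    -- mulVec entry formulas
    have hmv_none : ∀ z : Option V → ℝ,
        (A' *ᵥ z) none = c * z none + ∑ x, bvec x * z (some x) := by
      intro z
      show ∑ q, A' none q * z q = _
      rw [Fintype.sum_option, hA'nn]
      congr 1
      exact Finset.sum_congr rfl fun x _ => by rw [hA'ns]
    have hmv_some : ∀ (z : Option V → ℝ) (x : V),
        (A' *ᵥ z) (some x) = bvec x * z none + (A *ᵥ fun y => z (some y)) x
          + (bvec x / c) * ∑ y, bvec y * z (some y) := by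
      intro z x
      show ∑ q, A' (some x) q * z q = _
      rw [Fintype.sum_option, hA'sn]
      have h2 : ∑ y, A' (some x) (some y) * z (some y)
          = ∑ y, (A x y * z (some y) + (bvec x / c) * (bvec y * z (some y))) := by
        refine Finset.sum_congr rfl fun y _ => ?_
        rw [hA'ss]; ring
      rw [h2, Finset.sum_add_distrib, ← Finset.mul_sum]
      have h3 : (A *ᵥ fun y => z (some y)) x = ∑ y, A x y * z (some y) := rfl
      rw [h3]; ring
    -- positive semidefiniteness
    have hA'psd : A'.PosSemidef := by
      rw [Matrix.posSemidef_iff_dotProduct_mulVec]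
      constructor
      · rw [Matrix.IsHermitian, Matrix.conjTranspose_eq_transpose_of_trivial]
        exact hA'symm
      · intro z
        have hstar : star z = z := funext fun p => star_trivial _
        rw [hstar]
        have h1 : z ⬝ᵥ (A' *ᵥ z) = z none * (A' *ᵥ z) none
            + ∑ x, z (some x) * (A' *ᵥ z) (some x) := by
          simp [dotProduct, Fintype.sum_option]
        have h2 : ∑ x, z (some x) * (A' *ᵥ z) (some x)
            = ∑ x, (z (some x) * (A *ᵥ fun y => z (some y)) x
              + (z none + (∑ y, bvec y * z (some y)) / c) * (bvec x * z (some x))) := by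
          refine Finset.sum_congr rfl fun x _ => ?_
          rw [hmv_some z x]; ring
        have h3 : (fun x => z (some x)) ⬝ᵥ (A *ᵥ fun y => z (some y))
            = ∑ x, z (some x) * (A *ᵥ fun y => z (some y)) x := rfl
        have h4 : z ⬝ᵥ (A' *ᵥ z)
            = (c * z none + ∑ x, bvec x * z (some x)) ^ 2 / c
              + (fun x => z (some x)) ⬝ᵥ (A *ᵥ fun y => z (some y)) := by
          rw [h1, hmv_none z, h2, Finset.sum_add_distrib, ← Finset.mul_sum, h3]
          field_simp
          ring
        rw [h4]
        have h5 := hApsd.dotProduct_mulVec_nonneg (fun x => z (some x))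
        rw [show star (fun x => z (some x)) = fun x => z (some x)
          from funext fun p => star_trivial _] at h5
        have h6 : (0:ℝ) ≤ (c * z none + ∑ x, bvec x * z (some x)) ^ 2 / c :=
          div_nonneg (sq_nonneg _) hc.le
        linarith
    -- kernel description
    have hker : ∀ z : Option V → ℝ, A' *ᵥ z = 0 ↔
        ((A *ᵥ fun x => z (some x)) = 0 ∧
          c * z none + ∑ x, bvec x * z (some x) = 0) := by
      intro z
      constructor
      · intro h
        have hn : c * z none + ∑ x, bvec x * z (some x) = 0 := by
          have h0 := congrFun h none
          rw [hmv_none z] at h0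
          simpa using h0
        refine ⟨funext fun x => ?_, hn⟩
        have hx := congrFun h (some x)
        rw [hmv_some z x] at hx
        have hS : ∑ y, bvec y * z (some y) = -(c * z none) := by linarith
        rw [hS] at hx
        have hfc : bvec x / c * -(c * z none) = -(bvec x * z none) := by
          field_simp
        rw [hfc] at hx
        simp only [Pi.zero_apply] at hx
        show (A *ᵥ fun y => z (some y)) x = (0 : V → ℝ) x
        simp only [Pi.zero_apply]
        linarith
      · rintro ⟨hAw, hn⟩
        funext p
        match p with
        | none =>
          show (A' *ᵥ z) none = (0 : Option V → ℝ) none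
          rw [hmv_none z]; exact hn
        | some x =>
          show (A' *ᵥ z) (some x) = (0 : Option V → ℝ) (some x)
          rw [hmv_some z x]
          have h1 : (A *ᵥ fun y => z (some y)) x = 0 := congrFun hAw x
          have hS : ∑ y, bvec y * z (some y) = -(c * z none) := by linarith
          rw [h1, hS]
          have hfc : bvec x / c * -(c * z none) = -(bvec x * z none) := by
            field_simp
          rw [hfc]
          simp
    -- nullity is preserved
    have hnull : matNullity A' = matNullity A := by
      have hmap : ∀ z ∈ LinearMap.ker A'.mulVecLin,
          LinearMap.funLeft ℝ ℝ (some : V → Option V) z ∈ LinearMap.ker A.mulVecLin := by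
        intro z hz
        rw [LinearMap.mem_ker, Matrix.mulVecLin_apply] at hz ⊢
        exact ((hker z).mp hz).1
      have hbij : Function.Bijective
          ((LinearMap.funLeft ℝ ℝ (some : V → Option V)).restrict hmap) := by
        constructor
        · rintro ⟨z1, hz1⟩ ⟨z2, hz2⟩ heq
          have heq' : (fun x => z1 (some x)) = fun x => z2 (some x) := by
            have := Subtype.ext_iff.mp heq
            exact this
          rw [LinearMap.mem_ker, Matrix.mulVecLin_apply] at hz1 hz2
          have e1 := ((hker z1).mp hz1).2
          have e2 := ((hker z2).mp hz2).2
          have hsum_eq : ∑ x, bvec x * z1 (some x) = ∑ x, bvec x * z2 (some x) := by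
            refine Finset.sum_congr rfl fun x _ => ?_
            rw [congrFun heq' x]
          have hnone : z1 none = z2 none := by
            have : c * z1 none = c * z2 none := by linarith
            exact mul_left_cancel₀ hc.ne' this
          apply Subtype.ext
          funext p
          match p with
          | none => exact hnone
          | some x => exact congrFun heq' x
        · rintro ⟨w, hw⟩
          rw [LinearMap.mem_ker, Matrix.mulVecLin_apply] at hw
          refine ⟨⟨fun p => p.elim (-(∑ x, bvec x * w x) / c) w, ?_⟩, ?_⟩
          · rw [LinearMap.mem_ker, Matrix.mulVecLin_apply, hker]
            constructor
            · exact hw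
            · show c * (-(∑ x, bvec x * w x) / c) + ∑ x, bvec x * w x = 0
              field_simp
              ring
          · apply Subtype.ext
            funext x
            rfl
      exact (LinearEquiv.ofBijective _ hbij).finrank_eq
    -- SAP is preserved
    have hsap : HasSAP Ge Go A → HasSAP Ge' Go' A' := by
      intro hSAP X' hX'symm hX'zero hAX'
      have hXs : ∀ p q : Option V, X' q p = X' p q := fun p q => hX'symm.apply p q
      set X : Matrix V V ℝ := X'.submatrix some some with hX_def
      have hXapp : ∀ x y, X x y = X' (some x) (some y) := fun x y => rfl
      set y : V → ℝ := fun x => X' none (some x) with hy_def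
      -- entries of A' * X'
      have hent : ∀ p q : Option V, ∑ r, A' p r * X' r q = 0 := by
        intro p q
        have := congrFun (congrFun hAX' p) q
        rwa [Matrix.mul_apply] at this
      have hrow : ∀ u : V, c * y u + ∑ x, bvec x * X x u = 0 := by
        intro u
        have := hent none (some u)
        rw [Fintype.sum_option, hA'nn] at this
        have h2 : ∑ x, A' none (some x) * X' (some x) (some u)
            = ∑ x, bvec x * X x u := by
          refine Finset.sum_congr rfl fun x _ => ?_
          rw [hA'ns, hXapp]
        rw [h2] at this
        exact this
      have hAX : A * X = 0 := by
        ext x u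
        have h0 := hent (some x) (some u)
        rw [Fintype.sum_option, hA'sn] at h0
        have h2 : ∑ p, A' (some x) (some p) * X' (some p) (some u)
            = ∑ p, (A x p * X p u + (bvec x / c) * (bvec p * X p u)) := by
          refine Finset.sum_congr rfl fun p _ => ?_
          rw [hA'ss, hXapp]; ring
        rw [h2, Finset.sum_add_distrib, ← Finset.mul_sum] at h0
        have hS : ∑ p, bvec p * X p u = -(c * y u) := by linarith [hrow u]
        rw [hS] at h0
        have hfc : bvec x / c * -(c * y u) = -(bvec x * y u) := by field_simp
        rw [hfc] at h0
        have : (A * X) x u = ∑ p, A x p * X p u := Matrix.mul_apply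
        rw [this]
        show _ = (0 : Matrix V V ℝ) x u
        simp only [Matrix.zero_apply]
        linarith
      -- w-adjacency in the union
      have hwadj : ∀ x : V, (x = v₁ ∨ x = v₂ ∨ x = v₃) →
          (Ge' ⊔ Go').Adj none (some x) := by
        intro x hx
        by_cases hgo : Go'.Adj none (some x)
        · exact (SimpleGraph.sup_adj _ _ _ _).mpr (Or.inr hgo)
        · exact (SimpleGraph.sup_adj _ _ _ _).mpr (Or.inl ((hGe'w x).mpr ⟨hx, hgo⟩))
      have hyT1 : y v₁ = 0 := hX'zero none (some v₁) (Or.inr (hwadj v₁ (Or.inl rfl)))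
      have hyT2 : y v₂ = 0 := hX'zero none (some v₂) (Or.inr (hwadj v₂ (Or.inr (Or.inl rfl))))
      have hyT3 : y v₃ = 0 := hX'zero none (some v₃) (Or.inr (hwadj v₃ (Or.inr (Or.inr rfl))))
      have hXdiag : ∀ x, X x x = 0 := fun x => hX'zero (some x) (some x) (Or.inl rfl)
      have hXsy : ∀ p q, X q p = X p q := fun p q => hXs (some p) (some q)
      -- the three triangle equations
      have heq1 : bv2 * X v₁ v₂ + bv3 * X v₁ v₃ = 0 := by
        have h := hrow v₁
        rw [hsum (fun x => X x v₁), hyT1, hXdiag v₁, hXsy v₁ v₂, hXsy v₁ v₃] at h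
        linarith
      have heq2 : s1 * X v₁ v₂ + bv3 * X v₂ v₃ = 0 := by
        have h := hrow v₂
        rw [hsum (fun x => X x v₂), hyT2, hXdiag v₂, hXsy v₂ v₃] at h
        linarith
      have heq3 : s1 * X v₁ v₃ + bv2 * X v₂ v₃ = 0 := by
        have h := hrow v₃
        rw [hsum (fun x => X x v₃), hyT3, hXdiag v₃] at h
        linarith
      have hx12 : X v₁ v₂ = 0 := by
        have h2b : (2 * (s1 * bv2)) * X v₁ v₂ = 0 := by
          linear_combination s1 * heq1 + bv2 * heq2 - bv3 * heq3
        exact (mul_eq_zero.mp h2b).resolve_left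
          (mul_ne_zero two_ne_zero (mul_ne_zero hs1ne hbv2ne))
      have hx13 : X v₁ v₃ = 0 := by
        have h2b : (2 * (s1 * bv3)) * X v₁ v₃ = 0 := by
          linear_combination s1 * heq1 - bv2 * heq2 + bv3 * heq3
        exact (mul_eq_zero.mp h2b).resolve_left
          (mul_ne_zero two_ne_zero (mul_ne_zero hs1ne hbv3ne))
      have hx23 : X v₂ v₃ = 0 := by
        have h2b : (2 * (bv2 * bv3)) * X v₂ v₃ = 0 := by
          linear_combination -(s1 * heq1) + bv2 * heq2 + bv3 * heq3
        exact (mul_eq_zero.mp h2b).resolve_left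
          (mul_ne_zero two_ne_zero (mul_ne_zero hbv2ne hbv3ne))
      -- X satisfies the SAP hypotheses for A
      have hXsymm : X.IsSymm := by
        show Xᵀ = X
        ext p q
        rw [Matrix.transpose_apply]
        exact hXsy p q
      have hXzero : ∀ i j, (i = j ∨ (Ge ⊔ Go).Adj i j) → X i j = 0 := by
        intro i j hij
        rcases hij with rfl | hadj
        · exact hXdiag i
        · have hne : i ≠ j := hadj.ne
          by_cases hT : i ∈ ({v₁, v₂, v₃} : Set V) ∧ j ∈ ({v₁, v₂, v₃} : Set V)
          · have hi := (hmemT i).mpr hT.1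
            have hj := (hmemT j).mpr hT.2
            rcases hi with rfl | rfl | rfl <;> rcases hj with rfl | rfl | rfl
            · exact absurd rfl hne
            · exact hx12
            · exact hx13
            · rw [hXsy]; exact hx12
            · exact absurd rfl hne
            · exact hx23
            · rw [hXsy]; exact hx13
            · rw [hXsy]; exact hx23
            · exact absurd rfl hne
          · rcases (SimpleGraph.sup_adj _ _ _ _).mp hadj with hge | hgo
            · exact hX'zero (some i) (some j) (Or.inr ((SimpleGraph.sup_adj _ _ _ _).mpr
                (Or.inl ((hGe'old i j).mpr ⟨hge, hT⟩))))
            · exact hX'zero (some i) (some j) (Or.inr ((SimpleGraph.sup_adj _ _ _ _).mpr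
                (Or.inr ((hGo'old i j).mpr ⟨hgo, hT⟩))))
      have hX0 : X = 0 := hSAP X hXsymm hXzero hAX
      have hXentry0 : ∀ x u : V, X x u = 0 := by
        intro x u
        have := congrFun (congrFun hX0 x) u
        simpa using this
      have hy0 : ∀ u, y u = 0 := by
        intro u
        have h := hrow u
        have hs0 : ∑ x, bvec x * X x u = 0 := by
          refine Finset.sum_eq_zero fun x _ => ?_
          rw [hXentry0 x u, mul_zero]
        rw [hs0, add_zero] at h
        exact (mul_eq_zero.mp h).resolve_left hc.ne'
      ext p q
      show X' p q = (0 : Matrix (Option V) (Option V) ℝ) p q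
      rw [Matrix.zero_apply]
      match p, q with
      | none, none => exact hX'zero none none (Or.inl rfl)
      | none, some x => exact hy0 x
      | some x, none => rw [hXs none (some x)]; exact hy0 x
      | some x, some u => exact hXentry0 x u
    exact ⟨A', hA'mem, hA'psd, hnull, hsap⟩
  constructor
  · apply sSup_mono_nat
    · rintro n ⟨A, hA, hpsd, rfl⟩
      obtain ⟨A', hA'mem, hA'psd, hnull, -⟩ := key A hA hpsd
      exact ⟨A', hA'mem, hA'psd, hnull⟩
    · refine ⟨Module.finrank ℝ (Option V → ℝ), ?_⟩
      rintro m ⟨B, -, -, rfl⟩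
      exact Submodule.finrank_le _
  · apply sSup_mono_nat
    · rintro n ⟨A, hA, hpsd, hsap, rfl⟩
      obtain ⟨A', hA'mem, hA'psd, hnull, hsap'⟩ := key A hA hpsd
      exact ⟨A', hA'mem, hA'psd, hsap' hsap, hnull⟩
    · refine ⟨Module.finrank ℝ (Option V → ℝ), ?_⟩
      rintro m ⟨B, -, -, -, rfl⟩
      exact Submodule.finrank_le _
end

section
/- Let (Ge, Go) be a signed graph on a finite vertex type V and let v ∈ V be a vertex adjacent to w in both Ge and Go, whose neighbor set in Ge ⊔ Go is exactly {u, w} with u, v, w distinct, and such that v is adjacent to u in exactly one of Ge, Go. Let (Ge₁, Go₁) be the signed graph on V \ {v} (the series-parallel reduction at v, contracting the edge vu) defined by: Ge₁.Adj x y iff Ge.Adj x y or {x, y} = {u, w}, and Go₁.Adj x y iff Go.Adj x y or {x, y} = {u, w}. Then ν(Ge₁, Go₁) = ν(Ge, Go). -/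
open Matrix

set_option linter.unusedSectionVars false
set_option linter.unusedVariables false
set_option maxHeartbeats 1000000
namespace Stmt8Aux

variable {V : Type*} [Fintype V] [DecidableEq V] (v : V)

lemma sum_split (f : V → ℝ) : ∑ x, f x = f v + ∑ x : {x : V // x ≠ v}, f ↑x := by
  rw [← Finset.sum_subtype (Finset.univ.erase v) (fun x => by simp [Finset.mem_erase]) f]
  exact (Finset.add_sum_erase _ f (Finset.mem_univ v)).symm

variable (A : Matrix V V ℝ)

/-- Schur complement of the single entry `A v v`. -/
noncomputable def schur : Matrix {x : V // x ≠ v} {x : V // x ≠ v} ℝ :=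
  fun x y => A x y - A x v * A v y / A v v

/-- extension of a vector on `V \ {v}` to `V`. -/
noncomputable def extv (z : {x : V // x ≠ v} → ℝ) : V → ℝ :=
  fun x => if h : x = v then -(∑ y : {x : V // x ≠ v}, A (v : V) (y : V) * z y) / A v v
    else z ⟨x, h⟩

@[simp] lemma extv_apply_ne (z : {x : V // x ≠ v} → ℝ) (x : {x : V // x ≠ v}) :
    extv v A z ↑x = z x := by
  simp [extv, x.2]

lemma extv_apply_v (z : {x : V // x ≠ v} → ℝ) :
    extv v A z v = -(∑ y : {x : V // x ≠ v}, A (v : V) (y : V) * z y) / A v v := by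
  simp [extv]

lemma mulVec_eq (z : V → ℝ) (x : V) :
    A.mulVec z x = A x v * z v + ∑ y : {x : V // x ≠ v}, A x (y : V) * z ↑y := by
  rw [Matrix.mulVec, dotProduct, sum_split v]

lemma schur_mulVec (z : {x : V // x ≠ v} → ℝ) (x : {x : V // x ≠ v}) :
    (schur v A).mulVec z x
      = (∑ y : {x : V // x ≠ v}, A (x : V) (y : V) * z y)
        - A (x : V) v / A v v * ∑ y : {x : V // x ≠ v}, A v (y : V) * z y := by
  rw [Matrix.mulVec, dotProduct]
  simp only [schur, sub_mul, Finset.sum_sub_distrib, Finset.mul_sum]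
  congr 1
  apply Finset.sum_congr rfl
  intro y _
  ring

lemma restrict_ker (hs : A v v ≠ 0) (z : V → ℝ) (hz : A.mulVec z = 0) :
    (schur v A).mulVec (fun x => z ↑x) = 0 := by
  have hrow : ∀ x : V, A x v * z v + ∑ y : {x : V // x ≠ v}, A x (y : V) * z ↑y = 0 := by
    intro x; rw [← mulVec_eq, hz]; rfl
  funext x
  rw [schur_mulVec]
  have h1 := hrow ↑x
  have h2 := hrow v
  have hsum : ∑ y : {x : V // x ≠ v}, A v (y : V) * z ↑y = -(A v v * z v) := by linarith
  rw [hsum]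
  have e : A (x : V) v / A v v * -(A v v * z v) = -(A (x : V) v * z v) := by
    field_simp
  rw [e]
  simp only [Pi.zero_apply]
  linarith

lemma extv_ker (hs : A v v ≠ 0) (z : {x : V // x ≠ v} → ℝ)
    (hz : (schur v A).mulVec z = 0) : A.mulVec (extv v A z) = 0 := by
  funext x
  rw [mulVec_eq v]
  simp only [extv_apply_ne, Pi.zero_apply]
  by_cases hx : x = v
  · rw [hx, extv_apply_v]
    field_simp
    ring
  · have h := congrFun hz ⟨x, hx⟩
    rw [schur_mulVec] at h
    simp only [Pi.zero_apply] at h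
    rw [extv_apply_v]
    have e : A x v * (-(∑ y : {x : V // x ≠ v}, A v (y : V) * z y) / A v v)
        = - (A x v / A v v * ∑ y : {x : V // x ≠ v}, A v (y : V) * z y) := by ring
    rw [e]
    linarith

lemma eq_extv_of_ker (hs : A v v ≠ 0) (z : V → ℝ) (hz : A.mulVec z = 0) :
    z = extv v A (fun x => z ↑x) := by
  funext x
  by_cases hx : x = v
  · rw [hx, extv_apply_v]
    have h2 : A v v * z v + ∑ y : {x : V // x ≠ v}, A v (y : V) * z ↑y = 0 := by
      rw [← mulVec_eq, hz]; rfl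
    have : (∑ y : {x : V // x ≠ v}, A v (y : V) * z ↑y) = -(A v v * z v) := by linarith
    rw [this]
    field_simp
  · simp [extv, hx]

lemma nullity_schur (hs : A v v ≠ 0) :
    Module.finrank ℝ (LinearMap.ker (schur v A).mulVecLin)
      = Module.finrank ℝ (LinearMap.ker A.mulVecLin) := by
  have e :
      LinearMap.ker A.mulVecLin ≃ₗ[ℝ] LinearMap.ker (schur v A).mulVecLin :=
    { toFun := fun z => ⟨fun x => z.1 ↑x, LinearMap.mem_ker.2 (by
        rw [Matrix.mulVecLin_apply]
        exact restrict_ker v A hs z.1 (by rw [← Matrix.mulVecLin_apply]; exact z.2))⟩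
      map_add' := fun a b => rfl
      map_smul' := fun c a => rfl
      invFun := fun z => ⟨extv v A z.1, LinearMap.mem_ker.2 (by
        rw [Matrix.mulVecLin_apply]
        exact extv_ker v A hs z.1 (by rw [← Matrix.mulVecLin_apply]; exact z.2))⟩
      left_inv := fun z => Subtype.ext
        (eq_extv_of_ker v A hs z.1 (by rw [← Matrix.mulVecLin_apply]; exact z.2)).symm
      right_inv := fun z => Subtype.ext (funext fun x => by simp) }
  exact (LinearEquiv.finrank_eq e).symm

lemma schur_isSymm (hA : A.IsSymm) : (schur v A).IsSymm := by
  ext x y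
  simp only [Matrix.transpose_apply, schur]
  rw [hA.apply (x : V) (y : V), hA.apply (x : V) v, hA.apply v (y : V)]
  ring

lemma dot_schur (hA : A.IsSymm) (hs : A v v ≠ 0) (z : {x : V // x ≠ v} → ℝ) :
    z ⬝ᵥ (schur v A).mulVec z = (extv v A z) ⬝ᵥ A.mulVec (extv v A z) := by
  set s := A v v with hsdef
  set c := ∑ y : {x : V // x ≠ v}, A (v : V) (y : V) * z y with hc
  have key1 : ∑ x : {x : V // x ≠ v}, z x * A (x : V) v = c := by
    rw [hc]
    exact Finset.sum_congr rfl fun x _ => by rw [hA.apply v (x : V)]; ring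
  have hv0 : A.mulVec (extv v A z) v = 0 := by
    rw [mulVec_eq v, extv_apply_v]
    simp only [extv_apply_ne, ← hc, ← hsdef]
    field_simp
    ring
  have lhs : z ⬝ᵥ (schur v A).mulVec z
      = (∑ x : {x : V // x ≠ v}, z x * ∑ y : {x : V // x ≠ v}, A (x : V) (y : V) * z y)
        - c * (c / s) := by
    rw [dotProduct]
    simp only [schur_mulVec, ← hc, ← hsdef]
    rw [Finset.sum_congr rfl (fun x _ => mul_sub (z x) _ _), Finset.sum_sub_distrib]
    congr 1
    have e : ∀ x : {x : V // x ≠ v}, z x * (A (x : V) v / s * c)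
        = (z x * A (x : V) v) * (c / s) := fun x => by ring
    rw [Finset.sum_congr rfl fun x _ => e x, ← Finset.sum_mul, key1]
  have rhs : (extv v A z) ⬝ᵥ A.mulVec (extv v A z)
      = (∑ x : {x : V // x ≠ v}, z x * ∑ y : {x : V // x ≠ v}, A (x : V) (y : V) * z y)
        - c * (c / s) := by
    rw [dotProduct, sum_split v, hv0, mul_zero, zero_add]
    have : ∀ x : {x : V // x ≠ v},
        extv v A z ↑x * A.mulVec (extv v A z) ↑x
          = z x * (∑ y : {x : V // x ≠ v}, A (x : V) (y : V) * z y)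
            + z x * A (x : V) v * (-c / s) := by
      intro x
      rw [extv_apply_ne, mulVec_eq v, extv_apply_v]
      simp only [extv_apply_ne, ← hc, ← hsdef]
      ring
    rw [Finset.sum_congr rfl fun x _ => this x, Finset.sum_add_distrib]
    have h2 : ∑ x : {x : V // x ≠ v}, z x * A (x : V) v * (-c / s) = c * (-c / s) := by
      rw [← Finset.sum_mul, key1]
    rw [h2]
    ring
  rw [lhs, rhs]


lemma isHermitian_of_isSymm (h : A.IsSymm) : A.IsHermitian := by
  exact Matrix.isHermitian_iff_isSymm.2 h

lemma isSymm_of_posSemidef (h : A.PosSemidef) : A.IsSymm := by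
  exact Matrix.isHermitian_iff_isSymm.1 h.1

lemma schur_posSemidef (hA : A.IsSymm) (hs : A v v ≠ 0) (hP : A.PosSemidef) :
    (schur v A).PosSemidef := by
  refine Matrix.PosSemidef.of_dotProduct_mulVec_nonneg
    (isHermitian_of_isSymm _ (schur_isSymm v A hA)) fun z => ?_
  have := hP.dotProduct_mulVec_nonneg (extv v A z)
  simp only [star_trivial] at this ⊢
  rw [dot_schur v A hA hs z]
  exact this

lemma diag_ne_zero {u : V} (hP : A.PosSemidef) (ha : A v u ≠ 0) : A v v ≠ 0 := by
  intro h0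
  have huv : u ≠ v := by rintro rfl; exact ha (by rw [h0])
  have hsym : A u v = A v u := (isSymm_of_posSemidef A hP).apply v u
  set t : ℝ := -(A u u + 1) / (2 * A v u) with ht
  have hq := hP.dotProduct_mulVec_nonneg ((Pi.single u 1 : V → ℝ) + t • (Pi.single v 1 : V → ℝ))
  simp only [star_trivial, Matrix.mulVec_add, Matrix.mulVec_smul, Matrix.mulVec_single,
    add_dotProduct, smul_dotProduct, single_dotProduct, Pi.add_apply, Pi.smul_apply,
    smul_eq_mul, mul_one, op_smul_eq_mul, Matrix.col_apply] at hq
  rw [h0, hsym] at hq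
  have h2 : (2 : ℝ) * A v u ≠ 0 := mul_ne_zero two_ne_zero ha
  have : A u u + t * A v u + t * (A v u + t * 0) = -1 := by
    rw [ht]; field_simp; ring
  nlinarith [hq, this]

lemma sum_two {u w : V} (huv : u ≠ v) (hwv : w ≠ v) (huw : u ≠ w)
    (g : V → ℝ) (hg : ∀ x : V, x ≠ u → x ≠ v → x ≠ w → g x = 0)
    (f : {x : V // x ≠ v} → ℝ) :
    ∑ t : {x : V // x ≠ v}, g ↑t * f t = g u * f ⟨u, huv⟩ + g w * f ⟨w, hwv⟩ := by
  have key : ∀ t : {x : V // x ≠ v}, g ↑t * f t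
      = (if t = ⟨u, huv⟩ then g u * f ⟨u, huv⟩ else 0)
        + (if t = ⟨w, hwv⟩ then g w * f ⟨w, hwv⟩ else 0) := by
    intro t
    by_cases h1 : t = ⟨u, huv⟩
    · subst h1
      have : (⟨u, huv⟩ : {x : V // x ≠ v}) ≠ ⟨w, hwv⟩ := by
        simp [Subtype.ext_iff, huw]
      simp [this]
    · by_cases h2 : t = ⟨w, hwv⟩
      · subst h2; simp [h1]
      · have e1 : (t : V) ≠ u := fun h => h1 (Subtype.ext h)
        have e2 : (t : V) ≠ w := fun h => h2 (Subtype.ext h)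
        rw [hg ↑t e1 t.2 e2]
        simp [h1, h2]
  rw [Finset.sum_congr rfl fun t _ => key t, Finset.sum_add_distrib,
    Finset.sum_ite_eq' Finset.univ, Finset.sum_ite_eq' Finset.univ]
  simp

/-- SAP passes from `A` to its Schur complement. -/
lemma sap_forward {u w : V} (huv : u ≠ v) (hwv : w ≠ v) (huw : u ≠ w)
    (G : SimpleGraph V) (G₁ : SimpleGraph {x : V // x ≠ v})
    (hG₁ : ∀ x y : {x : V // x ≠ v}, G₁.Adj x y ↔
      (G.Adj ↑x ↑y ∨ ((x : V) = u ∧ (y : V) = w) ∨ ((x : V) = w ∧ (y : V) = u)))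
    (hGvu : G.Adj v u) (hGvw : G.Adj v w)
    (hGv : ∀ x, G.Adj v x → (x = u ∨ x = w))
    (hA : A.IsSymm) (hs : A v v ≠ 0)
    (hAv : ∀ x, x ≠ u → x ≠ v → x ≠ w → A v x = 0)
    (sapA : ∀ X : Matrix V V ℝ, X.IsSymm →
      (∀ i j, (i = j ∨ G.Adj i j) → X i j = 0) → A * X = 0 → X = 0)
    (X₁ : Matrix {x : V // x ≠ v} {x : V // x ≠ v} ℝ) (hX₁s : X₁.IsSymm)
    (hX₁p : ∀ i j, (i = j ∨ G₁.Adj i j) → X₁ i j = 0)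
    (hX₁0 : (schur v A) * X₁ = 0) : X₁ = 0 := by
  classical
  set uu : {x : V // x ≠ v} := ⟨u, huv⟩
  set ww : {x : V // x ≠ v} := ⟨w, hwv⟩
  set ev : {x : V // x ≠ v} → ℝ :=
    fun y => -(∑ t : {x : V // x ≠ v}, A v ↑t * X₁ t y) / A v v with hev
  have hne_uw : uu ≠ ww := fun h => huw (by simpa [uu, ww, Subtype.ext_iff] using h)
  have hsum : ∀ f : {x : V // x ≠ v} → ℝ,
      ∑ t : {x : V // x ≠ v}, A v ↑t * f t = A v u * f uu + A v w * f ww :=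
    fun f => sum_two v huv hwv huw (fun x => A v x) hAv f
  have hev_eq : ∀ y, ev y = -(A v u * X₁ uu y + A v w * X₁ ww y) / A v v := by
    intro y
    exact congrArg (fun S => -S / A v v) (hsum (fun t => X₁ t y))
  have hev_u : ev uu = 0 := by
    rw [hev_eq]
    rw [hX₁p uu uu (Or.inl rfl), hX₁p ww uu (Or.inr ((hG₁ ww uu).2 (Or.inr (Or.inr ⟨rfl, rfl⟩))))]
    simp
  have hev_w : ev ww = 0 := by
    rw [hev_eq]
    rw [hX₁p uu ww (Or.inr ((hG₁ uu ww).2 (Or.inr (Or.inl ⟨rfl, rfl⟩)))), hX₁p ww ww (Or.inl rfl)]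
    simp
  set X : Matrix V V ℝ := Matrix.of fun x y =>
    if hx : x = v then (if hy : y = v then 0 else ev ⟨y, hy⟩)
    else if hy : y = v then ev ⟨x, hx⟩
    else X₁ ⟨x, hx⟩ ⟨y, hy⟩ with hX
  have hXvy : ∀ (y : V) (hy : y ≠ v), X v y = ev ⟨y, hy⟩ := by
    intro y hy; simp [hX, hy]
  have hXyv : ∀ (x : V) (hx : x ≠ v), X x v = ev ⟨x, hx⟩ := by
    intro x hx; simp [hX, hx]
  have hXvv : X v v = 0 := by simp [hX]
  have hXxy : ∀ (x y : V) (hx : x ≠ v) (hy : y ≠ v), X x y = X₁ ⟨x, hx⟩ ⟨y, hy⟩ := by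
    intro x y hx hy; simp [hX, hx, hy]
  -- X is symmetric
  have hXs : X.IsSymm := by
    ext x y
    rw [Matrix.transpose_apply]
    by_cases hx : x = v <;> by_cases hy : y = v
    · subst hx; subst hy; rfl
    · subst hx; rw [hXvy y hy, hXyv y hy]
    · subst hy; rw [hXyv x hx, hXvy x hx]
    · rw [hXxy x y hx hy, hXxy y x hy hx, hX₁s.apply]
  -- X vanishes on the pattern
  have hXp : ∀ i j, (i = j ∨ G.Adj i j) → X i j = 0 := by
    intro i j hij
    by_cases hi : i = v <;> by_cases hj : j = v
    · subst hi; subst hj; exact hXvv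
    · subst hi
      rcases hij with h | h
      · exact absurd h.symm hj
      · rcases hGv j h with rfl | rfl
        · rw [hXvy _ hj]; exact hev_u
        · rw [hXvy _ hj]; exact hev_w
    · subst hj
      rcases hij with h | h
      · exact absurd h hi
      · rcases hGv i h.symm with rfl | rfl
        · rw [hXyv _ hi]; exact hev_u
        · rw [hXyv _ hi]; exact hev_w
    · rw [hXxy i j hi hj]
      rcases hij with h | h
      · exact hX₁p _ _ (Or.inl (Subtype.ext h))
      · exact hX₁p _ _ (Or.inr ((hG₁ _ _).2 (Or.inl h)))
  -- columns of X for y ≠ v are kernel extensions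
  have hcol : ∀ (y : V) (hy : y ≠ v),
      (fun t => X t y) = extv v A (fun t => X₁ t ⟨y, hy⟩) := by
    intro y hy
    funext t
    by_cases ht : t = v
    · subst ht
      rw [hXvy y hy, extv_apply_v]
    · rw [hXxy t y ht hy]
      exact (extv_apply_ne v A (fun t => X₁ t ⟨y, hy⟩) ⟨t, ht⟩).symm
  have hcolker : ∀ (y : V) (hy : y ≠ v), A.mulVec (fun t => X t y) = 0 := by
    intro y hy
    rw [hcol y hy]
    apply extv_ker v A hs
    funext x
    have := congrFun (congrFun hX₁0 x) ⟨y, hy⟩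
    simpa [Matrix.mul_apply, Matrix.mulVec, dotProduct] using this
  -- column v is a linear combination of columns u and w
  have hcolv : (fun t => X t v)
      = (-(A v u / A v v)) • (fun t => X t u) + (-(A v w / A v v)) • (fun t => X t w) := by
    funext t
    simp only [Pi.add_apply, Pi.smul_apply, smul_eq_mul]
    by_cases ht : t = v
    · subst ht
      rw [hXvv, hXvy u huv, hXvy w hwv]
      show (0 : ℝ) = _ * ev uu + _ * ev ww
      rw [hev_u, hev_w]; ring
    · rw [hXyv t ht, hXxy t u ht huv, hXxy t w ht hwv, hev_eq]
      show _ = _ * X₁ ⟨t, ht⟩ uu + _ * X₁ ⟨t, ht⟩ ww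
      rw [hX₁s.apply ⟨t, ht⟩ uu, hX₁s.apply ⟨t, ht⟩ ww]
      field_simp
      ring
  have hXker : A * X = 0 := by
    ext x y
    have hAP : ∀ y : V, (A * X) x y = A.mulVec (fun t => X t y) x := by
      intro y; simp [Matrix.mul_apply, Matrix.mulVec, dotProduct]
    rw [hAP]
    by_cases hy : y = v
    · subst hy
      rw [hcolv, Matrix.mulVec_add, Matrix.mulVec_smul, Matrix.mulVec_smul,
        hcolker u huv, hcolker w hwv]
      simp
    · rw [hcolker y hy]; simp
  have hX0 : X = 0 := sapA X hXs hXp hXker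
  ext x y
  have := congrFun (congrFun hX0 ↑x) ↑y
  rw [hXxy ↑x ↑y x.2 y.2] at this
  simpa using this


/-- SAP passes from the Schur complement back to `A`. -/
lemma sap_backward {u w : V} (huv : u ≠ v) (hwv : w ≠ v) (huw : u ≠ w)
    (G : SimpleGraph V) (G₁ : SimpleGraph {x : V // x ≠ v})
    (hG₁ : ∀ x y : {x : V // x ≠ v}, G₁.Adj x y ↔
      (G.Adj ↑x ↑y ∨ ((x : V) = u ∧ (y : V) = w) ∨ ((x : V) = w ∧ (y : V) = u)))
    (hGvu : G.Adj v u) (hGvw : G.Adj v w)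
    (hA : A.IsSymm) (hs : A v v ≠ 0) (hau : A v u ≠ 0)
    (hAv : ∀ x, x ≠ u → x ≠ v → x ≠ w → A v x = 0)
    (sapB : ∀ X₁ : Matrix {x : V // x ≠ v} {x : V // x ≠ v} ℝ, X₁.IsSymm →
      (∀ i j, (i = j ∨ G₁.Adj i j) → X₁ i j = 0) → (schur v A) * X₁ = 0 → X₁ = 0)
    (X : Matrix V V ℝ) (hXs : X.IsSymm)
    (hXp : ∀ i j, (i = j ∨ G.Adj i j) → X i j = 0)
    (hX0 : A * X = 0) : X = 0 := by
  classical
  set uu : {x : V // x ≠ v} := ⟨u, huv⟩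
  set ww : {x : V // x ≠ v} := ⟨w, hwv⟩
  have hsum : ∀ f : {x : V // x ≠ v} → ℝ,
      ∑ t : {x : V // x ≠ v}, A v ↑t * f t = A v u * f uu + A v w * f ww :=
    fun f => sum_two v huv hwv huw (fun x => A v x) hAv f
  have hrow : ∀ y : V,
      A v v * X v y + (A v u * X u y + A v w * X w y) = 0 := by
    intro y
    have h := congrFun (congrFun hX0 v) y
    rw [Matrix.mul_apply, sum_split v] at h
    have h2 : ∑ t : {x : V // x ≠ v}, A v ↑t * X ↑t y
        = A v u * X u y + A v w * X w y := hsum (fun t => X ↑t y)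
    simpa [h2] using h
  -- key: X u w = 0
  have hXuw : X u w = 0 := by
    have h := hrow w
    rw [hXp v w (Or.inr hGvw), hXp w w (Or.inl rfl)] at h
    have : A v u * X u w = 0 := by linarith
    exact (mul_eq_zero.1 this).resolve_left hau
  -- the restricted matrix
  set X₁ : Matrix {x : V // x ≠ v} {x : V // x ≠ v} ℝ :=
    Matrix.of (fun x y => X ↑x ↑y) with hX₁
  have hX₁s : X₁.IsSymm := by
    ext x y
    exact hXs.apply ↑x ↑y
  have hX₁p : ∀ i j, (i = j ∨ G₁.Adj i j) → X₁ i j = 0 := by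
    intro i j hij
    rcases hij with h | h
    · exact hXp ↑i ↑j (Or.inl (congrArg _ h))
    · rcases (hG₁ i j).1 h with h | ⟨h1, h2⟩ | ⟨h1, h2⟩
      · exact hXp ↑i ↑j (Or.inr h)
      · show X ↑i ↑j = 0
        rw [h1, h2]; exact hXuw
      · show X ↑i ↑j = 0
        rw [h1, h2, hXs.apply u w]; exact hXuw
  have hX₁0 : (schur v A) * X₁ = 0 := by
    ext x y
    have hker : A.mulVec (fun t => X t ↑y) = 0 := by
      funext t
      have := congrFun (congrFun hX0 t) ↑y
      simpa [Matrix.mul_apply, Matrix.mulVec, dotProduct] using this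
    have h := congrFun (restrict_ker v A hs (fun t => X t ↑y) hker) x
    simpa [hX₁, Matrix.mul_apply, Matrix.mulVec, dotProduct] using h
  have hX₁z : X₁ = 0 := sapB X₁ hX₁s hX₁p hX₁0
  have hXne : ∀ (x y : V), x ≠ v → y ≠ v → X x y = 0 := by
    intro x y hx hy
    have := congrFun (congrFun hX₁z ⟨x, hx⟩) ⟨y, hy⟩
    simpa [hX₁] using this
  have hXvy : ∀ y : V, X v y = 0 := by
    intro y
    have h := hrow y
    have hu : X u y = 0 := by
      by_cases hy : y = v
      · rw [hy, hXs.apply v u]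
        exact hXp v u (Or.inr hGvu)
      · exact hXne u y huv hy
    have hw : X w y = 0 := by
      by_cases hy : y = v
      · rw [hy, hXs.apply v w]
        exact hXp v w (Or.inr hGvw)
      · exact hXne w y hwv hy
    rw [hu, hw] at h
    have : A v v * X v y = 0 := by linarith
    exact (mul_eq_zero.1 this).resolve_left hs
  ext x y
  by_cases hx : x = v
  · rw [hx]; simpa using hXvy y
  · by_cases hy : y = v
    · rw [hy]
      rw [hXs.apply v x]
      simpa using hXvy x
    · simpa using hXne x y hx hy

lemma dot_ext (B : Matrix {x : V // x ≠ v} {x : V // x ≠ v} ℝ) (e : V → ℝ) (z : V → ℝ) :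
    z ⬝ᵥ (Matrix.of fun x y =>
        (if hx : x = v then 0 else if hy : y = v then 0 else B ⟨x, hx⟩ ⟨y, hy⟩)
          + e x * e y).mulVec z
      = (fun x : {x : V // x ≠ v} => z ↑x) ⬝ᵥ B.mulVec (fun x => z ↑x)
        + (∑ x, e x * z x) ^ 2 := by
  classical
  set A0 : Matrix V V ℝ := Matrix.of fun x y =>
    (if hx : x = v then 0 else if hy : y = v then 0 else B ⟨x, hx⟩ ⟨y, hy⟩) with hA0
  set T : ℝ := ∑ x, e x * z x with hT
  have hmv : ∀ x : V,
      (Matrix.of fun x y =>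
        (if hx : x = v then 0 else if hy : y = v then 0 else B ⟨x, hx⟩ ⟨y, hy⟩)
          + e x * e y).mulVec z x = A0.mulVec z x + e x * T := by
    intro x
    rw [Matrix.mulVec, Matrix.mulVec, dotProduct, dotProduct]
    have : ∀ y : V, (Matrix.of fun x y =>
        (if hx : x = v then 0 else if hy : y = v then 0 else B ⟨x, hx⟩ ⟨y, hy⟩)
          + e x * e y) x y * z y = A0 x y * z y + e x * (e y * z y) := by
      intro y
      show ((if hx : x = v then 0 else if hy : y = v then 0 else B ⟨x, hx⟩ ⟨y, hy⟩)
          + e x * e y) * z y = _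
      rw [hA0]
      show _ = (if hx : x = v then 0 else if hy : y = v then
          (0:ℝ) else B ⟨x, hx⟩ ⟨y, hy⟩) * z y + e x * (e y * z y)
      ring
    rw [Finset.sum_congr rfl fun y _ => this y, Finset.sum_add_distrib, ← Finset.mul_sum, hT]
  have hdot : z ⬝ᵥ (fun x => A0.mulVec z x + e x * T)
      = (fun x : {x : V // x ≠ v} => z ↑x) ⬝ᵥ B.mulVec (fun x => z ↑x) + T * T := by
    rw [dotProduct]
    have expand : ∀ x : V, z x * (A0.mulVec z x + e x * T)
        = z x * A0.mulVec z x + (e x * z x) * T := by intro x; ring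
    rw [Finset.sum_congr rfl fun x _ => expand x, Finset.sum_add_distrib, ← Finset.sum_mul,
      ← hT]
    congr 1
    have hA0v : ∀ y, A0 v y = 0 := by intro y; simp [hA0]
    have hA0xv : ∀ (x : V), A0 x v = 0 := by intro x; simp [hA0]
    have hA0xy : ∀ (x y : V) (hx : x ≠ v) (hy : y ≠ v), A0 x y = B ⟨x, hx⟩ ⟨y, hy⟩ := by
      intro x y hx hy; simp [hA0, hx, hy]
    rw [dotProduct, sum_split v]
    have h1 : z v * A0.mulVec z v = 0 := by
      rw [Matrix.mulVec, dotProduct]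
      have : ∀ y : V, A0 v y * z y = 0 := fun y => by rw [hA0v y, zero_mul]
      rw [Finset.sum_congr rfl fun y _ => this y]
      simp
    rw [h1, zero_add]
    apply Finset.sum_congr rfl
    intro x _
    congr 1
    rw [Matrix.mulVec, Matrix.mulVec, dotProduct, dotProduct, sum_split v,
      hA0xv ↑x, zero_mul, zero_add]
    apply Finset.sum_congr rfl
    intro y _
    rw [hA0xy ↑x ↑y x.2 y.2]
  calc z ⬝ᵥ (Matrix.of fun x y =>
        (if hx : x = v then 0 else if hy : y = v then 0 else B ⟨x, hx⟩ ⟨y, hy⟩)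
          + e x * e y).mulVec z
      = z ⬝ᵥ (fun x => A0.mulVec z x + e x * T) := by
        rw [dotProduct, dotProduct]
        exact Finset.sum_congr rfl fun x _ => by rw [hmv x]
    _ = (fun x : {x : V // x ≠ v} => z ↑x) ⬝ᵥ B.mulVec (fun x => z ↑x) + T * T := hdot
    _ = _ := by rw [hT]; ring

end Stmt8Aux

theorem stmt8 {V : Type*} [Fintype V] [DecidableEq V]
    (Ge Go : SimpleGraph V) (v u w : V)
    (huv : u ≠ v) (huw : u ≠ w) (hvw : v ≠ w)
    (hbothE : Ge.Adj v w) (hbothO : Go.Adj v w)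
    (hnbr : ∀ x, (Ge ⊔ Go).Adj v x ↔ (x = u ∨ x = w))
    (honeu : ¬(Ge.Adj v u ∧ Go.Adj v u))
    (Ge₁ Go₁ : SimpleGraph {x : V // x ≠ v})
    (hGe₁ : ∀ x y : {x : V // x ≠ v}, Ge₁.Adj x y ↔
      (Ge.Adj (x : V) (y : V) ∨
        (((x : V) = u ∧ (y : V) = w) ∨ ((x : V) = w ∧ (y : V) = u))))
    (hGo₁ : ∀ x y : {x : V // x ≠ v}, Go₁.Adj x y ↔
      (Go.Adj (x : V) (y : V) ∨
        (((x : V) = u ∧ (y : V) = w) ∨ ((x : V) = w ∧ (y : V) = u)))) :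
    nuSigned Ge₁ Go₁ = nuSigned Ge Go := by
  classical
  have hwv : w ≠ v := Ne.symm hvw
  have hGvu : (Ge ⊔ Go).Adj v u := (hnbr u).2 (Or.inl rfl)
  have hGvw : (Ge ⊔ Go).Adj v w := (hnbr w).2 (Or.inr rfl)
  have hGv : ∀ x, (Ge ⊔ Go).Adj v x → (x = u ∨ x = w) := fun x h => (hnbr x).1 h
  have hGno : ∀ x, x ≠ u → x ≠ w → (¬Ge.Adj v x ∧ ¬Go.Adj v x) := by
    intro x h1 h2
    constructor
    · intro h
      rcases hGv x ((SimpleGraph.sup_adj _ _ _ _).2 (Or.inl h)) with rfl | rfl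
      exacts [h1 rfl, h2 rfl]
    · intro h
      rcases hGv x ((SimpleGraph.sup_adj _ _ _ _).2 (Or.inr h)) with rfl | rfl
      exacts [h1 rfl, h2 rfl]
  have hmemAv : ∀ A, A ∈ SignedSet Ge Go → ∀ x, x ≠ u → x ≠ v → x ≠ w → A v x = 0 := by
    intro A hA x h1 h2 h3
    exact (hA.2 v x).2.2 ⟨Ne.symm h2, (hGno x h1 h3).1, (hGno x h1 h3).2⟩
  have hmemau : ∀ A, A ∈ SignedSet Ge Go → A v u ≠ 0 := by
    intro A hA
    rcases (SimpleGraph.sup_adj _ _ _ _).1 hGvu with h | h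
    · have hno : ¬Go.Adj v u := fun h' => honeu ⟨h, h'⟩
      exact ne_of_lt ((hA.2 v u).1 ⟨h, hno⟩)
    · have hno : ¬Ge.Adj v u := fun h' => honeu ⟨h', h⟩
      exact ne_of_gt ((hA.2 v u).2.1 ⟨h, hno⟩)
  have hG₁ : ∀ x y : {x : V // x ≠ v}, (Ge₁ ⊔ Go₁).Adj x y ↔
      ((Ge ⊔ Go).Adj ↑x ↑y ∨ ((x : V) = u ∧ (y : V) = w) ∨ ((x : V) = w ∧ (y : V) = u)) := by
    intro x y
    simp only [SimpleGraph.sup_adj, hGe₁, hGo₁]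
    tauto
  unfold nuSigned
  congr 1
  ext n
  simp only [Set.mem_setOf_eq]
  constructor
  · -- from a matrix for the reduced graph to one for the original graph
    rintro ⟨B, hBmem, hBpsd, hBsap, hBn⟩
    have hBsymm : B.IsSymm := hBmem.1
    have hGeGovu : Ge.Adj v u ∨ Go.Adj v u := (SimpleGraph.sup_adj _ _ _ _).1 hGvu
    set a : ℝ := if Ge.Adj v u then -1 else 1 with ha
    have ha2 : a * a = 1 := by by_cases h : Ge.Adj v u <;> simp [ha, h]
    have ha0 : a ≠ 0 := by by_cases h : Ge.Adj v u <;> simp [ha, h]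
    set c : ℝ := if Ge.Adj u w then (if Go.Adj u w then B ⟨u, huv⟩ ⟨w, hwv⟩ else -1)
      else (if Go.Adj u w then 1 else 0) with hc
    set b : ℝ := a * (c - B ⟨u, huv⟩ ⟨w, hwv⟩) with hb
    set e : V → ℝ := fun x => if x = v then 1 else if x = u then a else if x = w then b else 0
      with he
    set A : Matrix V V ℝ := Matrix.of (fun x y =>
      (if hx : x = v then 0 else if hy : y = v then 0 else B ⟨x, hx⟩ ⟨y, hy⟩) + e x * e y)
      with hA
    have hev : e v = 1 := by simp [he]
    have heu : e u = a := by simp [he, huv]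
    have hew : e w = b := by simp [he, hwv, Ne.symm huw]
    have hex : ∀ x, x ≠ u → x ≠ v → x ≠ w → e x = 0 := by
      intro x h1 h2 h3; simp [he, h1, h2, h3]
    have hAvv : A v v = 1 := by simp [hA, he]
    have hAvy : ∀ y, y ≠ v → A v y = e y := by
      intro y hy; simp [hA, hy, hev]
    have hAyv : ∀ x, x ≠ v → A x v = e x := by
      intro x hx; simp [hA, hx, hev]
    have hAxy : ∀ (x y : V) (hx : x ≠ v) (hy : y ≠ v),
        A x y = B ⟨x, hx⟩ ⟨y, hy⟩ + e x * e y := by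
      intro x y hx hy; simp [hA, hx, hy]
    have hASymm : A.IsSymm := by
      ext x y
      rw [Matrix.transpose_apply]
      by_cases hx : x = v <;> by_cases hy : y = v
      · subst hx; subst hy; rfl
      · subst hx; rw [hAyv y hy, hAvy y hy]
      · subst hy; rw [hAvy x hx, hAyv x hx]
      · rw [hAxy x y hx hy, hAxy y x hy hx, hBsymm.apply ⟨x, hx⟩ ⟨y, hy⟩]; ring
    have hauw : A u w = c := by
      rw [hAxy u w huv hwv, heu, hew, hb]
      have : a * (a * (c - B ⟨u, huv⟩ ⟨w, hwv⟩)) = (a * a) * (c - B ⟨u, huv⟩ ⟨w, hwv⟩) := by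
        ring
      rw [this, ha2]; ring
    have hs1 : A v v ≠ 0 := by rw [hAvv]; exact one_ne_zero
    have hschur : Stmt8Aux.schur v A = B := by
      ext x y
      show A ↑x ↑y - A ↑x v * A v ↑y / A v v = B x y
      rw [hAxy ↑x ↑y x.2 y.2, hAyv ↑x x.2, hAvy ↑y y.2, hAvv]
      have hx : (⟨↑x, x.2⟩ : {x : V // x ≠ v}) = x := rfl
      have hy : (⟨↑y, y.2⟩ : {x : V // x ≠ v}) = y := rfl
      rw [hx, hy]
      field_simp
      ring
    have hApsd : A.PosSemidef := by
      refine Matrix.PosSemidef.of_dotProduct_mulVec_nonneg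
        (Stmt8Aux.isHermitian_of_isSymm A hASymm) fun z => ?_
      rw [star_trivial, hA, Stmt8Aux.dot_ext v B e z]
      have h1 : (0:ℝ) ≤ (fun x : {x : V // x ≠ v} => z ↑x) ⬝ᵥ B.mulVec (fun x => z ↑x) := by
        simpa using hBpsd.dotProduct_mulVec_nonneg (fun x => z ↑x)
      have h2 : (0:ℝ) ≤ (∑ x, e x * z x) ^ 2 := sq_nonneg _
      linarith
    -- the sign conditions
    have hvrow : ∀ j, ((Ge.Adj v j ∧ ¬Go.Adj v j) → A v j < 0) ∧
        ((Go.Adj v j ∧ ¬Ge.Adj v j) → 0 < A v j) ∧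
        ((v ≠ j ∧ ¬Ge.Adj v j ∧ ¬Go.Adj v j) → A v j = 0) := by
      intro j
      by_cases hj : j = v
      · rw [hj]
        exact ⟨fun h => absurd h.1 (Ge.irrefl), fun h => absurd h.1 (Go.irrefl),
          fun h => absurd rfl h.1⟩
      by_cases hju : j = u
      · rw [hju]
        rw [hAvy u huv, heu]
        refine ⟨?_, ?_, ?_⟩
        · intro hh; rw [ha, if_pos hh.1]; norm_num
        · intro hh; rw [ha, if_neg hh.2]; norm_num
        · intro hh; exact absurd hGeGovu (by tauto)
      by_cases hjw : j = w
      · rw [hjw]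
        exact ⟨fun hh => absurd hbothO hh.2, fun hh => absurd hbothE hh.2,
          fun hh => absurd hbothE hh.2.1⟩
      · refine ⟨?_, ?_, ?_⟩
        · intro hh; exact absurd hh.1 (hGno j hju hjw).1
        · intro hh; exact absurd hh.1 (hGno j hju hjw).2
        · intro _; rw [hAvy j hj, hex j hju hj hjw]
    have hswap : ∀ i j, (((Ge.Adj i j ∧ ¬Go.Adj i j) → A i j < 0) ∧
        ((Go.Adj i j ∧ ¬Ge.Adj i j) → 0 < A i j) ∧
        ((i ≠ j ∧ ¬Ge.Adj i j ∧ ¬Go.Adj i j) → A i j = 0)) →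
        (((Ge.Adj j i ∧ ¬Go.Adj j i) → A j i < 0) ∧
        ((Go.Adj j i ∧ ¬Ge.Adj j i) → 0 < A j i) ∧
        ((j ≠ i ∧ ¬Ge.Adj j i ∧ ¬Go.Adj j i) → A j i = 0)) := by
      intro i j h
      rw [hASymm.apply i j]
      exact ⟨fun hh => h.1 ⟨hh.1.symm, fun h' => hh.2 h'.symm⟩,
        fun hh => h.2.1 ⟨hh.1.symm, fun h' => hh.2 h'.symm⟩,
        fun hh => h.2.2 ⟨Ne.symm hh.1, fun h' => hh.2.1 h'.symm, fun h' => hh.2.2 h'.symm⟩⟩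
    have huwtriple : ((Ge.Adj u w ∧ ¬Go.Adj u w) → A u w < 0) ∧
        ((Go.Adj u w ∧ ¬Ge.Adj u w) → 0 < A u w) ∧
        ((u ≠ w ∧ ¬Ge.Adj u w ∧ ¬Go.Adj u w) → A u w = 0) := by
      rw [hauw, hc]
      refine ⟨?_, ?_, ?_⟩
      · intro hh; rw [if_pos hh.1, if_neg hh.2]; norm_num
      · intro hh; rw [if_neg hh.2, if_pos hh.1]; norm_num
      · intro hh; rw [if_neg hh.2.1, if_neg hh.2.2]
    have hAmem : A ∈ SignedSet Ge Go := by
      refine ⟨hASymm, ?_⟩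
      intro i j
      by_cases hi : i = v
      · rw [hi]; exact hvrow j
      by_cases hj : j = v
      · rw [hj]; exact hswap v i (hvrow i)
      by_cases hij : i = j
      · rw [hij]
        exact ⟨fun h => absurd h.1 (Ge.irrefl), fun h => absurd h.1 (Go.irrefl),
          fun h => absurd rfl h.1⟩
      by_cases hp1 : i = u ∧ j = w
      · rw [hp1.1, hp1.2]; exact huwtriple
      by_cases hp2 : i = w ∧ j = u
      · rw [hp2.1, hp2.2]; exact hswap u w huwtriple
      · -- generic entry
        have hz : e i * e j = 0 := by
          by_cases hiu : i = u
          · have hju' : j ≠ u := fun h => hij (hiu.trans h.symm)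
            have hjw : j ≠ w := fun h => hp1 ⟨hiu, h⟩
            rw [hex j hju' hj hjw, mul_zero]
          · by_cases hiw : i = w
            · have hju' : j ≠ u := fun h => hp2 ⟨hiw, h⟩
              have hjw : j ≠ w := fun h => hij (hiw.trans h.symm)
              rw [hex j hju' hj hjw, mul_zero]
            · rw [hex i hiu hi hiw, zero_mul]
        have hAij : A i j = B ⟨i, hi⟩ ⟨j, hj⟩ := by
          rw [hAxy i j hi hj, hz, add_zero]
        have hne' : (⟨i, hi⟩ : {x : V // x ≠ v}) ≠ ⟨j, hj⟩ := by
          simp [Subtype.ext_iff, hij]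
        have hadjE : Ge.Adj i j ↔ Ge₁.Adj ⟨i, hi⟩ ⟨j, hj⟩ := by
          constructor
          · intro h; exact (hGe₁ _ _).2 (Or.inl h)
          · intro h
            rcases (hGe₁ _ _).1 h with h' | h' | h'
            · exact h'
            · exact absurd h' hp1
            · exact absurd h' hp2
        have hadjO : Go.Adj i j ↔ Go₁.Adj ⟨i, hi⟩ ⟨j, hj⟩ := by
          constructor
          · intro h; exact (hGo₁ _ _).2 (Or.inl h)
          · intro h
            rcases (hGo₁ _ _).1 h with h' | h' | h'
            · exact h'
            · exact absurd h' hp1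
            · exact absurd h' hp2
        rw [hAij]
        refine ⟨?_, ?_, ?_⟩
        · intro hh
          exact (hBmem.2 ⟨i, hi⟩ ⟨j, hj⟩).1 ⟨hadjE.1 hh.1, fun h' => hh.2 (hadjO.2 h')⟩
        · intro hh
          exact (hBmem.2 ⟨i, hi⟩ ⟨j, hj⟩).2.1 ⟨hadjO.1 hh.1, fun h' => hh.2 (hadjE.2 h')⟩
        · intro hh
          exact (hBmem.2 ⟨i, hi⟩ ⟨j, hj⟩).2.2
            ⟨hne', fun h' => hh.2.1 (hadjE.2 h'), fun h' => hh.2.2 (hadjO.2 h')⟩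
    have hsapA : HasSAP Ge Go A := by
      intro X hXs hXp hX0
      refine Stmt8Aux.sap_backward v A huv hwv huw (Ge ⊔ Go) (Ge₁ ⊔ Go₁) hG₁ hGvu hGvw
        hASymm hs1 ?_ ?_ ?_ X hXs hXp hX0
      · rw [hAvy u huv, heu]; exact ha0
      · intro x h1 h2 h3; rw [hAvy x h2, hex x h1 h2 h3]
      · intro X₁ s p h0
        apply hBsap X₁ s p
        rw [← hschur]; exact h0
    refine ⟨A, hAmem, hApsd, hsapA, ?_⟩
    rw [← hBn, matNullity, matNullity, ← Stmt8Aux.nullity_schur v A hs1, hschur]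
  · -- from a matrix for the original graph to its Schur complement
    rintro ⟨A, hAmem, hApsd, hAsap, hAn⟩
    have hau := hmemau A hAmem
    have hs : A v v ≠ 0 := Stmt8Aux.diag_ne_zero v A hApsd hau
    have hAsymm : A.IsSymm := hAmem.1
    have hAv := hmemAv A hAmem
    refine ⟨Stmt8Aux.schur v A, ⟨Stmt8Aux.schur_isSymm v A hAsymm, ?_⟩,
      Stmt8Aux.schur_posSemidef v A hAsymm hs hApsd, ?_, ?_⟩
    · intro x y
      by_cases hxy : x = y
      · subst hxy
        exact ⟨fun h => absurd h.1 (Ge₁.irrefl), fun h => absurd h.1 (Go₁.irrefl),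
          fun h => absurd rfl h.1⟩
      · by_cases hp : ((x : V) = u ∧ (y : V) = w) ∨ ((x : V) = w ∧ (y : V) = u)
        · have he' : Ge₁.Adj x y := (hGe₁ x y).2 (Or.inr hp)
          have ho' : Go₁.Adj x y := (hGo₁ x y).2 (Or.inr hp)
          exact ⟨fun h => absurd ho' h.2, fun h => absurd he' h.2, fun h => absurd he' h.2.1⟩
        · have hne : (x : V) ≠ (y : V) := fun h => hxy (Subtype.ext h)
          have hzero : A ↑x v * A v ↑y = 0 := by
            by_cases hxu : (x : V) = u
            · have hyu : (y : V) ≠ u := fun h => hne (hxu.trans h.symm)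
              have hyw : (y : V) ≠ w := fun h => hp (Or.inl ⟨hxu, h⟩)
              rw [hAv ↑y hyu y.2 hyw, mul_zero]
            · by_cases hxw : (x : V) = w
              · have hyu : (y : V) ≠ u := fun h => hp (Or.inr ⟨hxw, h⟩)
                have hyw : (y : V) ≠ w := fun h => hne (hxw.trans h.symm)
                rw [hAv ↑y hyu y.2 hyw, mul_zero]
              · rw [hAsymm.apply v ↑x, hAv ↑x hxu x.2 hxw, zero_mul]
          have heq : Stmt8Aux.schur v A x y = A ↑x ↑y := by
            show A ↑x ↑y - A ↑x v * A v ↑y / A v v = A ↑x ↑y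
            rw [hzero, zero_div, sub_zero]
          have hadjE : Ge₁.Adj x y ↔ Ge.Adj ↑x ↑y := by rw [hGe₁]; tauto
          have hadjO : Go₁.Adj x y ↔ Go.Adj ↑x ↑y := by rw [hGo₁]; tauto
          rw [heq]
          exact ⟨fun h => (hAmem.2 ↑x ↑y).1 ⟨hadjE.1 h.1, fun h' => h.2 (hadjO.2 h')⟩,
            fun h => (hAmem.2 ↑x ↑y).2.1 ⟨hadjO.1 h.1, fun h' => h.2 (hadjE.2 h')⟩,
            fun h => (hAmem.2 ↑x ↑y).2.2
              ⟨hne, fun h' => h.2.1 (hadjE.2 h'), fun h' => h.2.2 (hadjO.2 h')⟩⟩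
    · intro X₁ hX₁s hX₁p hX₁0
      exact Stmt8Aux.sap_forward v A huv hwv huw (Ge ⊔ Go) (Ge₁ ⊔ Go₁) hG₁ hGvu hGvw hGv
        hAsymm hs hAv hAsap X₁ hX₁s hX₁p hX₁0
    · rw [matNullity, Stmt8Aux.nullity_schur v A hs]
      exact hAn
end

section
/- Let A ∈ S(Ge, Go) be positive semidefinite and have the SAP. Let S ⊆ V and let C₁ and C₂ be the vertex sets of two distinct connected components of the subgraph of the union graph Ge ⊔ Go induced on V \ S. Then at least one of the principal submatrices A[C₁], A[C₂] is nonsingular; that is, at most one connected component C of (Ge ⊔ Go) − S has nullity(A[C]) > 0. -/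
open Matrix

/-- if `A ∈ S(Ge, Go)` is positive semidefinite and has the SAP, then among
the connected components of `(Ge ⊔ Go) − S`, at most one has a singular principal
submatrix: for any two distinct components with vertex sets `C₁`, `C₂`, at least one of
`A[C₁]`, `A[C₂]` is nonsingular (its kernel is trivial). -/
theorem stmt9 {V : Type*} [Fintype V] [DecidableEq V]
    (Ge Go : SimpleGraph V) (A : Matrix V V ℝ)
    (hA : A ∈ SignedSet Ge Go) (hpsd : A.PosSemidef) (hsap : HasSAP Ge Go A)
    (S : Set V)
    (c₁ c₂ : ((Ge ⊔ Go).induce Sᶜ).ConnectedComponent) (hcc : c₁ ≠ c₂)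
    (C₁ C₂ : Set V)
    (hC₁ : C₁ = Subtype.val '' c₁.supp) (hC₂ : C₂ = Subtype.val '' c₂.supp) :
    (∀ x : V → ℝ, (∀ i, i ∉ C₁ → x i = 0) → (∀ i ∈ C₁, A.mulVec x i = 0) → x = 0) ∨
    (∀ x : V → ℝ, (∀ i, i ∉ C₂ → x i = 0) → (∀ i ∈ C₂, A.mulVec x i = 0) → x = 0) := by
  subst hC₁ hC₂
  by_contra hcon
  push_neg at hcon
  obtain ⟨⟨x, hx0, hxA, hx⟩, ⟨y, hy0, hyA, hy⟩⟩ := hcon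
  -- supports are disjoint
  have hdisj : ∀ i, i ∈ Subtype.val '' c₁.supp → i ∉ Subtype.val '' c₂.supp := by
    rintro i ⟨a, ha, rfl⟩ ⟨b, hb, hab⟩
    rw [SimpleGraph.ConnectedComponent.mem_supp_iff] at ha hb
    exact hcc (by rw [← ha, ← hb, Subtype.ext hab.symm])
  -- Ax = 0
  have hAx : A.mulVec x = 0 := by
    rw [← hpsd.dotProduct_mulVec_zero_iff]
    have : (star x) ⬝ᵥ A.mulVec x = ∑ i, x i * A.mulVec x i := by
      simp [dotProduct]
    rw [this]
    refine Finset.sum_eq_zero fun i _ => ?_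
    by_cases hi : i ∈ Subtype.val '' c₁.supp
    · rw [hxA i hi, mul_zero]
    · rw [hx0 i hi, zero_mul]
  have hAy : A.mulVec y = 0 := by
    rw [← hpsd.dotProduct_mulVec_zero_iff]
    have : (star y) ⬝ᵥ A.mulVec y = ∑ i, y i * A.mulVec y i := by
      simp [dotProduct]
    rw [this]
    refine Finset.sum_eq_zero fun i _ => ?_
    by_cases hi : i ∈ Subtype.val '' c₂.supp
    · rw [hyA i hi, mul_zero]
    · rw [hy0 i hi, zero_mul]
  -- build the SAP witness
  set X : Matrix V V ℝ := Matrix.of fun i j => x i * y j + y i * x j with hX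
  have hXsymm : X.IsSymm := by
    ext i j
    simp only [hX, Matrix.transpose_apply, Matrix.of_apply]
    ring
  -- if X i j ≠ 0 then some product nonzero
  have hmem : ∀ i : V, x i ≠ 0 → i ∈ Subtype.val '' c₁.supp := fun i hi => by
    by_contra h; exact hi (hx0 i h)
  have hmem' : ∀ i : V, y i ≠ 0 → i ∈ Subtype.val '' c₂.supp := fun i hi => by
    by_contra h; exact hi (hy0 i h)
  have hXpat : ∀ i j, (i = j ∨ (Ge ⊔ Go).Adj i j) → X i j = 0 := by
    intro i j hij
    by_contra hne
    have h1 : x i * y j ≠ 0 ∨ y i * x j ≠ 0 := by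
      by_contra h; push_neg at h
      exact hne (by simp only [hX, Matrix.of_apply, h.1, h.2, add_zero])
    -- wlog-style : handle both cases
    have key : ∀ a b : V, (a = b ∨ (Ge ⊔ Go).Adj a b) → x a ≠ 0 → y b ≠ 0 → False := by
      intro a b hab hxa hyb
      have haC : a ∈ Subtype.val '' c₁.supp := hmem a hxa
      have hbC : b ∈ Subtype.val '' c₂.supp := hmem' b hyb
      rcases hab with rfl | hadj
      · exact hdisj a haC hbC
      · obtain ⟨a', ha', rfl⟩ := haC
        obtain ⟨b', hb', rfl⟩ := hbC
        rw [SimpleGraph.ConnectedComponent.mem_supp_iff] at ha' hb'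
        have : ((Ge ⊔ Go).induce Sᶜ).Adj a' b' := hadj
        exact hcc (by rw [← ha', ← hb',
          SimpleGraph.ConnectedComponent.connectedComponentMk_eq_of_adj this])
    rcases h1 with h | h
    · exact key i j hij (left_ne_zero_of_mul h) (right_ne_zero_of_mul h)
    · have hij' : j = i ∨ (Ge ⊔ Go).Adj j i := by
        rcases hij with rfl | h2
        · exact Or.inl rfl
        · exact Or.inr h2.symm
      exact key j i hij' (right_ne_zero_of_mul h) (left_ne_zero_of_mul h)
  have hAX : A * X = 0 := by
    ext i j
    have hAxi : ∑ k, A i k * x k = 0 := congrFun hAx i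
    have hAyi : ∑ k, A i k * y k = 0 := congrFun hAy i
    simp only [Matrix.mul_apply, hX, Matrix.of_apply, Matrix.zero_apply, mul_add]
    rw [Finset.sum_add_distrib]
    have e1 : ∑ k, A i k * (x k * y j) = (∑ k, A i k * x k) * y j := by
      rw [Finset.sum_mul]; exact Finset.sum_congr rfl fun k _ => by ring
    have e2 : ∑ k, A i k * (y k * x j) = (∑ k, A i k * y k) * x j := by
      rw [Finset.sum_mul]; exact Finset.sum_congr rfl fun k _ => by ring
    rw [e1, e2, hAxi, hAyi, zero_mul, zero_mul, add_zero]
  have hX0 := hsap X hXsymm hXpat hAX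
  -- contradiction: X ≠ 0
  obtain ⟨i, hxi⟩ : ∃ i, x i ≠ 0 := Function.ne_iff.mp hx
  obtain ⟨j, hyj⟩ : ∃ j, y j ≠ 0 := Function.ne_iff.mp hy
  have hyi : y i = 0 := hy0 i (hdisj i (hmem i hxi))
  have hXij : X i j = x i * y j := by
    simp only [hX, Matrix.of_apply, hyi, zero_mul, add_zero]
  have : X i j ≠ 0 := hXij ▸ mul_ne_zero hxi hyj
  exact this (by rw [hX0]; rfl)
end

section
/- Let (Ge₁, Go₁) be a signed graph on a finite vertex type V₁ and (Ge₂, Go₂) a signed graph on a finite vertex type V₂, and let (Ge, Go) be their disjoint union on the sum type V₁ ⊕ V₂ (edges within each summand as before, no edges between the summands). Then ν(Ge, Go) = max(ν(Ge₁, Go₁), ν(Ge₂, Go₂)). -/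
open Matrix

/-! ### Auxiliary material -/

set_option linter.unusedSectionVars false

section Std

variable {V : Type*} [Fintype V] [DecidableEq V]

open Classical in
/-- A canonical positive definite matrix in `S(Ge, Go)`. -/
noncomputable def stdMat (Ge Go : SimpleGraph V) : Matrix V V ℝ :=
  (Fintype.card V + 1 : ℝ) • (1 : Matrix V V ℝ) +
    Matrix.of (fun i j => if i = j then (1:ℝ)
      else (if Go.Adj i j then 1 else 0) - (if Ge.Adj i j then 1 else 0))

open Classical in
lemma stdMat_apply (Ge Go : SimpleGraph V) (i j : V) :
    stdMat Ge Go i j = if i = j then (Fintype.card V + 2 : ℝ)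
      else (if Go.Adj i j then 1 else 0) - (if Ge.Adj i j then 1 else 0) := by
  simp only [stdMat, Matrix.add_apply, Matrix.smul_apply, Matrix.one_apply, Matrix.of_apply]
  split_ifs <;> simp <;> ring

lemma stdMat_mem (Ge Go : SimpleGraph V) : stdMat Ge Go ∈ SignedSet Ge Go := by
  classical
  refine ⟨Matrix.IsSymm.ext fun i j => ?_, fun i j => ?_⟩
  · rw [stdMat_apply, stdMat_apply]
    by_cases h : i = j
    · simp [h]
    · have h' : ¬ j = i := fun hh => h hh.symm
      simp only [h, h', if_false]
      rw [SimpleGraph.adj_comm Go, SimpleGraph.adj_comm Ge]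
  · refine ⟨fun ⟨he, ho⟩ => ?_, fun ⟨ho, he⟩ => ?_, fun ⟨hne, he, ho⟩ => ?_⟩
    · rw [stdMat_apply]; simp [he.ne, he, ho]
    · rw [stdMat_apply]; simp [ho.ne, he, ho]
    · rw [stdMat_apply]; simp [hne, he, ho]

lemma stdMat_quad (Ge Go : SimpleGraph V) (x : V → ℝ) :
    (∑ i, x i ^ 2) ≤ x ⬝ᵥ (stdMat Ge Go) *ᵥ x := by
  classical
  set B : Matrix V V ℝ := Matrix.of (fun i j => if i = j then (1:ℝ)
      else (if Go.Adj i j then 1 else 0) - (if Ge.Adj i j then 1 else 0)) with hB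
  have hBabs : ∀ i j, |B i j| ≤ 1 := by
    intro i j
    simp only [hB, Matrix.of_apply]
    split_ifs <;> norm_num
  have hquad : x ⬝ᵥ (stdMat Ge Go) *ᵥ x
      = (Fintype.card V + 1 : ℝ) * (x ⬝ᵥ x) + x ⬝ᵥ B *ᵥ x := by
    rw [stdMat, Matrix.add_mulVec, dotProduct_add, smul_mulVec, one_mulVec,
      dotProduct_smul, smul_eq_mul]
  have hBbound : -((∑ i, |x i|) ^ 2) ≤ x ⬝ᵥ B *ᵥ x := by
    have h1 : x ⬝ᵥ B *ᵥ x = ∑ i, ∑ j, x i * (B i j * x j) := by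
      simp [dotProduct, mulVec, Finset.mul_sum]
    have h2 : -((∑ i, |x i|) ^ 2) = ∑ i, ∑ j, -(|x i| * |x j|) := by
      rw [sq, Finset.sum_mul_sum]
      rw [← Finset.sum_neg_distrib]
      refine Finset.sum_congr rfl fun i _ => ?_
      rw [← Finset.sum_neg_distrib]
    rw [h1, h2]
    refine Finset.sum_le_sum fun i _ => Finset.sum_le_sum fun j _ => ?_
    have habs : |x i * (B i j * x j)| ≤ |x i| * |x j| := by
      rw [abs_mul, abs_mul]
      calc |x i| * (|B i j| * |x j|) ≤ |x i| * (1 * |x j|) := by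
            exact mul_le_mul_of_nonneg_left
              (mul_le_mul_of_nonneg_right (hBabs i j) (abs_nonneg _)) (abs_nonneg _)
        _ = |x i| * |x j| := by ring
    calc -(|x i| * |x j|) ≤ -|x i * (B i j * x j)| := neg_le_neg habs
      _ ≤ x i * (B i j * x j) := neg_abs_le _
  have hCS : (∑ i, |x i|) ^ 2 ≤ (Fintype.card V : ℝ) * ∑ i, |x i| ^ 2 := by
    have := sq_sum_le_card_mul_sum_sq (s := (Finset.univ : Finset V)) (f := fun i => |x i|)
    simpa using this
  have hxx : x ⬝ᵥ x = ∑ i, x i ^ 2 := by simp [dotProduct, sq]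
  have habs : ∑ i, |x i| ^ 2 = ∑ i, x i ^ 2 :=
    Finset.sum_congr rfl fun i _ => sq_abs _
  rw [hquad, hxx]
  nlinarith [hBbound, hCS, habs]

lemma stdMat_posSemidef (Ge Go : SimpleGraph V) : (stdMat Ge Go).PosSemidef := by
  rw [posSemidef_iff_dotProduct_mulVec]
  constructor
  · have hs := (stdMat_mem Ge Go).1
    ext i j
    rw [Matrix.conjTranspose_apply, star_trivial, hs.apply]
  · intro x
    rw [star_trivial]
    calc (0:ℝ) ≤ ∑ i, x i ^ 2 := Finset.sum_nonneg fun i _ => sq_nonneg _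
      _ ≤ _ := stdMat_quad Ge Go x

lemma stdMat_ker (Ge Go : SimpleGraph V) : LinearMap.ker (stdMat Ge Go).mulVecLin = ⊥ := by
  rw [LinearMap.ker_eq_bot']
  intro x hx
  rw [Matrix.mulVecLin_apply] at hx
  have h0 : x ⬝ᵥ (stdMat Ge Go) *ᵥ x = 0 := by rw [hx]; simp
  have hle := stdMat_quad Ge Go x
  rw [h0] at hle
  funext i
  have hnn : ∀ j ∈ Finset.univ, (0:ℝ) ≤ x j ^ 2 := fun j _ => sq_nonneg _
  have hzero : ∑ j, x j ^ 2 = 0 := le_antisymm hle (Finset.sum_nonneg hnn)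
  have hi : x i ^ 2 = 0 :=
    (Finset.sum_eq_zero_iff_of_nonneg hnn).1 hzero i (Finset.mem_univ i)
  exact pow_eq_zero_iff (by norm_num) |>.1 hi

end Std

lemma mul_eq_zero_of_ker_bot {V W : Type*} [Fintype V] [Fintype W] {A : Matrix V V ℝ}
    (hA : LinearMap.ker A.mulVecLin = ⊥) {X : Matrix V W ℝ} (h : A * X = 0) : X = 0 := by
  ext i j
  have hcol : A.mulVecLin (fun k => X k j) = 0 := by
    funext i'
    have := congrFun (congrFun h i') j
    simpa [Matrix.mulVecLin_apply, Matrix.mulVec, Matrix.mul_apply, dotProduct] using this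
  have hm : (fun k => X k j) ∈ LinearMap.ker A.mulVecLin := hcol
  rw [hA, Submodule.mem_bot] at hm
  exact congrFun hm i

lemma hasSAP_of_ker_bot {V : Type*} [Fintype V] {Ge Go : SimpleGraph V} {A : Matrix V V ℝ}
    (hA : LinearMap.ker A.mulVecLin = ⊥) : HasSAP Ge Go A :=
  fun _ _ _ h => mul_eq_zero_of_ker_bot hA h

lemma matNullity_eq_zero {V : Type*} [Fintype V] {A : Matrix V V ℝ}
    (hA : LinearMap.ker A.mulVecLin = ⊥) : matNullity A = 0 := by
  rw [matNullity, hA, finrank_bot]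

lemma vecMulVec_ker {V₁ V₂ : Type*} [Fintype V₁] [Fintype V₂] {A : Matrix V₁ V₁ ℝ}
    {x : V₁ → ℝ} (hx : A.mulVecLin x = 0) (y : V₂ → ℝ) : A * vecMulVec x y = 0 := by
  ext i j
  simp only [Matrix.mul_apply, Matrix.vecMulVec_apply, Matrix.zero_apply]
  have h1 : ∑ k, A i k * (x k * y j) = (∑ k, A i k * x k) * y j := by
    rw [Finset.sum_mul]; exact Finset.sum_congr rfl fun k _ => by ring
  rw [h1]
  have h0 : ∑ k, A i k * x k = 0 := by
    have := congrFun hx i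
    simpa [Matrix.mulVecLin_apply, Matrix.mulVec, dotProduct] using this
  rw [h0, zero_mul]

lemma matNullity_fromBlocks {V₁ V₂ : Type*} [Fintype V₁] [Fintype V₂]
    (A : Matrix V₁ V₁ ℝ) (D : Matrix V₂ V₂ ℝ) :
    matNullity (fromBlocks A 0 0 D) = matNullity A + matNullity D := by
  have key : ∀ x : V₁ ⊕ V₂ → ℝ, (fromBlocks A 0 0 D).mulVecLin x = 0 ↔
      (A.mulVecLin (x ∘ Sum.inl) = 0 ∧ D.mulVecLin (x ∘ Sum.inr) = 0) := by
    intro x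
    rw [Matrix.mulVecLin_apply, Matrix.fromBlocks_mulVec]
    simp only [Matrix.zero_mulVec, add_zero, zero_add, Matrix.mulVecLin_apply]
    constructor
    · intro h
      constructor
      · funext a; exact congrFun h (Sum.inl a)
      · funext a; exact congrFun h (Sum.inr a)
    · rintro ⟨h1, h2⟩
      funext v
      cases v with
      | inl a => exact congrFun h1 a
      | inr a => exact congrFun h2 a
  let e : LinearMap.ker (fromBlocks A 0 0 D).mulVecLin ≃ₗ[ℝ]
      LinearMap.ker A.mulVecLin × LinearMap.ker D.mulVecLin :=
    { toFun := fun x => (⟨x.1 ∘ Sum.inl, ((key x.1).1 x.2).1⟩,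
        ⟨x.1 ∘ Sum.inr, ((key x.1).1 x.2).2⟩)
      map_add' := fun x y => rfl
      map_smul' := fun c x => rfl
      invFun := fun p => ⟨Sum.elim p.1.1 p.2.1, by
        refine (key _).2 ⟨?_, ?_⟩
        · simpa using p.1.2
        · simpa using p.2.2⟩
      left_inv := fun x => by
        ext v
        cases v <;> rfl
      right_inv := fun p => by
        refine Prod.ext ?_ ?_ <;> ext a <;> rfl }
  rw [matNullity, matNullity, matNullity, e.finrank_eq, Module.finrank_prod]

lemma quad_fromBlocks {V₁ V₂ : Type*} [Fintype V₁] [Fintype V₂]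
    (A : Matrix V₁ V₁ ℝ) (D : Matrix V₂ V₂ ℝ) (x : V₁ ⊕ V₂ → ℝ) :
    x ⬝ᵥ (fromBlocks A 0 0 D) *ᵥ x
      = (x ∘ Sum.inl) ⬝ᵥ A *ᵥ (x ∘ Sum.inl) + (x ∘ Sum.inr) ⬝ᵥ D *ᵥ (x ∘ Sum.inr) := by
  rw [Matrix.fromBlocks_mulVec]
  simp only [Matrix.zero_mulVec, add_zero, zero_add]
  rw [← Sum.elim_comp_inl_inr x, sumElim_dotProduct_sumElim]
  simp [Sum.elim_comp_inl_inr]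

lemma nu_set_bddAbove {V : Type*} [Fintype V] (Ge Go : SimpleGraph V) :
    BddAbove {n | ∃ A ∈ SignedSet Ge Go, A.PosSemidef ∧ HasSAP Ge Go A ∧ matNullity A = n} := by
  refine ⟨Fintype.card V, fun n hn => ?_⟩
  obtain ⟨A, -, -, -, rfl⟩ := hn
  calc matNullity A ≤ Module.finrank ℝ (V → ℝ) := Submodule.finrank_le _
    _ = Fintype.card V := Module.finrank_pi ℝ

lemma nu_set_nonempty {V : Type*} [Fintype V] [DecidableEq V] (Ge Go : SimpleGraph V) :
    {n | ∃ A ∈ SignedSet Ge Go, A.PosSemidef ∧ HasSAP Ge Go A ∧ matNullity A = n}.Nonempty :=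
  ⟨0, stdMat Ge Go, stdMat_mem Ge Go, stdMat_posSemidef Ge Go,
    hasSAP_of_ker_bot (stdMat_ker Ge Go), matNullity_eq_zero (stdMat_ker Ge Go)⟩

section Blocks

variable {V₁ V₂ : Type*} [Fintype V₁] [Fintype V₂] [DecidableEq V₁] [DecidableEq V₂]
  {Ge₁ Go₁ : SimpleGraph V₁} {Ge₂ Go₂ : SimpleGraph V₂}
  {Ge Go : SimpleGraph (V₁ ⊕ V₂)}
  (hGe : ∀ x y : V₁ ⊕ V₂, Ge.Adj x y ↔
      ((∃ a b, x = Sum.inl a ∧ y = Sum.inl b ∧ Ge₁.Adj a b) ∨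
       (∃ a b, x = Sum.inr a ∧ y = Sum.inr b ∧ Ge₂.Adj a b)))
  (hGo : ∀ x y : V₁ ⊕ V₂, Go.Adj x y ↔
      ((∃ a b, x = Sum.inl a ∧ y = Sum.inl b ∧ Go₁.Adj a b) ∨
       (∃ a b, x = Sum.inr a ∧ y = Sum.inr b ∧ Go₂.Adj a b)))

lemma block_psd {A₁ : Matrix V₁ V₁ ℝ} {A₂ : Matrix V₂ V₂ ℝ}
    (h₁ : A₁.PosSemidef) (h₂ : A₂.PosSemidef) : (fromBlocks A₁ 0 0 A₂).PosSemidef := by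
  rw [posSemidef_iff_dotProduct_mulVec]
  constructor
  · ext i j
    rw [Matrix.conjTranspose_apply, star_trivial]
    cases i <;> cases j <;>
      simp only [Matrix.fromBlocks_apply₁₁, Matrix.fromBlocks_apply₁₂,
        Matrix.fromBlocks_apply₂₁, Matrix.fromBlocks_apply₂₂, Matrix.zero_apply]
    · simpa using congrFun (congrFun h₁.1 _) _
    · simpa using congrFun (congrFun h₂.1 _) _
  · intro x
    rw [star_trivial, quad_fromBlocks]
    have q₁ := h₁.dotProduct_mulVec_nonneg (x ∘ Sum.inl)
    have q₂ := h₂.dotProduct_mulVec_nonneg (x ∘ Sum.inr)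
    rw [star_trivial] at q₁ q₂
    exact add_nonneg q₁ q₂

lemma psd_block₁ {A₁ : Matrix V₁ V₁ ℝ} {A₂ : Matrix V₂ V₂ ℝ}
    (h : (fromBlocks A₁ 0 0 A₂).PosSemidef) : A₁.PosSemidef := by
  rw [posSemidef_iff_dotProduct_mulVec]
  constructor
  · ext a b
    rw [Matrix.conjTranspose_apply, star_trivial]
    have := congrFun (congrFun h.1 (Sum.inl a)) (Sum.inl b)
    simpa using this
  · intro x
    have := h.dotProduct_mulVec_nonneg (Sum.elim x 0)
    rw [star_trivial, quad_fromBlocks] at this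
    simpa using this

lemma psd_block₂ {A₁ : Matrix V₁ V₁ ℝ} {A₂ : Matrix V₂ V₂ ℝ}
    (h : (fromBlocks A₁ 0 0 A₂).PosSemidef) : A₂.PosSemidef := by
  rw [posSemidef_iff_dotProduct_mulVec]
  constructor
  · ext a b
    rw [Matrix.conjTranspose_apply, star_trivial]
    have := congrFun (congrFun h.1 (Sum.inr a)) (Sum.inr b)
    simpa using this
  · intro x
    have := h.dotProduct_mulVec_nonneg (Sum.elim 0 x)
    rw [star_trivial, quad_fromBlocks] at this
    simpa using this

include hGe hGo

lemma sup_adj_inl (a b : V₁) : (Ge ⊔ Go).Adj (Sum.inl a) (Sum.inl b) ↔ (Ge₁ ⊔ Go₁).Adj a b := by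
  simp [SimpleGraph.sup_adj, hGe, hGo]

lemma sup_adj_inr (a b : V₂) : (Ge ⊔ Go).Adj (Sum.inr a) (Sum.inr b) ↔ (Ge₂ ⊔ Go₂).Adj a b := by
  simp [SimpleGraph.sup_adj, hGe, hGo]

lemma sup_adj_cross (a : V₁) (b : V₂) : ¬ (Ge ⊔ Go).Adj (Sum.inl a) (Sum.inr b) := by
  simp [SimpleGraph.sup_adj, hGe, hGo]

lemma sup_adj_cross' (a : V₂) (b : V₁) : ¬ (Ge ⊔ Go).Adj (Sum.inr a) (Sum.inl b) := by
  simp [SimpleGraph.sup_adj, hGe, hGo]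

lemma block_mem {A₁ : Matrix V₁ V₁ ℝ} {A₂ : Matrix V₂ V₂ ℝ}
    (h₁ : A₁ ∈ SignedSet Ge₁ Go₁) (h₂ : A₂ ∈ SignedSet Ge₂ Go₂) :
    fromBlocks A₁ 0 0 A₂ ∈ SignedSet Ge Go := by
  refine ⟨Matrix.IsSymm.ext fun i j => ?_, fun i j => ⟨?_, ?_, ?_⟩⟩
  · cases i <;> cases j <;>
      simp [Matrix.fromBlocks_apply₁₁, Matrix.fromBlocks_apply₁₂, Matrix.fromBlocks_apply₂₁,
        Matrix.fromBlocks_apply₂₂, h₁.1.apply, h₂.1.apply]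
  · rintro ⟨he, ho⟩
    rw [hGe] at he; rw [hGo] at ho
    rcases he with ⟨a, b, rfl, rfl, hab⟩ | ⟨a, b, rfl, rfl, hab⟩
    · exact (h₁.2 a b).1 ⟨hab, fun hc => ho (Or.inl ⟨a, b, rfl, rfl, hc⟩)⟩
    · exact (h₂.2 a b).1 ⟨hab, fun hc => ho (Or.inr ⟨a, b, rfl, rfl, hc⟩)⟩
  · rintro ⟨ho, he⟩
    rw [hGo] at ho; rw [hGe] at he
    rcases ho with ⟨a, b, rfl, rfl, hab⟩ | ⟨a, b, rfl, rfl, hab⟩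
    · exact (h₁.2 a b).2.1 ⟨hab, fun hc => he (Or.inl ⟨a, b, rfl, rfl, hc⟩)⟩
    · exact (h₂.2 a b).2.1 ⟨hab, fun hc => he (Or.inr ⟨a, b, rfl, rfl, hc⟩)⟩
  · rintro ⟨hne, he, ho⟩
    rw [hGe] at he; rw [hGo] at ho
    cases i with
    | inl a => cases j with
      | inl b =>
        exact (h₁.2 a b).2.2 ⟨fun h => hne (by rw [h]),
          fun hc => he (Or.inl ⟨a, b, rfl, rfl, hc⟩),
          fun hc => ho (Or.inl ⟨a, b, rfl, rfl, hc⟩)⟩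
      | inr b => rfl
    | inr a => cases j with
      | inl b => rfl
      | inr b =>
        exact (h₂.2 a b).2.2 ⟨fun h => hne (by rw [h]),
          fun hc => he (Or.inr ⟨a, b, rfl, rfl, hc⟩),
          fun hc => ho (Or.inr ⟨a, b, rfl, rfl, hc⟩)⟩

lemma mem_block₁ {A₁ : Matrix V₁ V₁ ℝ} {A₂ : Matrix V₂ V₂ ℝ}
    (h : fromBlocks A₁ 0 0 A₂ ∈ SignedSet Ge Go) : A₁ ∈ SignedSet Ge₁ Go₁ := by
  refine ⟨Matrix.IsSymm.ext fun a b => ?_, fun a b => ⟨?_, ?_, ?_⟩⟩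
  · have := h.1.apply (Sum.inl a) (Sum.inl b)
    simpa using this
  · rintro ⟨he, ho⟩
    have := (h.2 (Sum.inl a) (Sum.inl b)).1
      ⟨(hGe _ _).2 (Or.inl ⟨a, b, rfl, rfl, he⟩), fun hc => by
        rw [hGo] at hc
        rcases hc with ⟨a', b', ha, hb, hab⟩ | ⟨a', b', ha, hb, hab⟩
        · cases ha; cases hb; exact ho hab
        · cases ha⟩
    simpa using this
  · rintro ⟨ho, he⟩
    have := (h.2 (Sum.inl a) (Sum.inl b)).2.1
      ⟨(hGo _ _).2 (Or.inl ⟨a, b, rfl, rfl, ho⟩), fun hc => by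
        rw [hGe] at hc
        rcases hc with ⟨a', b', ha, hb, hab⟩ | ⟨a', b', ha, hb, hab⟩
        · cases ha; cases hb; exact he hab
        · cases ha⟩
    simpa using this
  · rintro ⟨hne, he, ho⟩
    have := (h.2 (Sum.inl a) (Sum.inl b)).2.2
      ⟨by simpa using hne, by simp [hGe, he], by simp [hGo, ho]⟩
    simpa using this

lemma mem_block₂ {A₁ : Matrix V₁ V₁ ℝ} {A₂ : Matrix V₂ V₂ ℝ}
    (h : fromBlocks A₁ 0 0 A₂ ∈ SignedSet Ge Go) : A₂ ∈ SignedSet Ge₂ Go₂ := by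
  refine ⟨Matrix.IsSymm.ext fun a b => ?_, fun a b => ⟨?_, ?_, ?_⟩⟩
  · have := h.1.apply (Sum.inr a) (Sum.inr b)
    simpa using this
  · rintro ⟨he, ho⟩
    have := (h.2 (Sum.inr a) (Sum.inr b)).1
      ⟨(hGe _ _).2 (Or.inr ⟨a, b, rfl, rfl, he⟩), fun hc => by
        rw [hGo] at hc
        rcases hc with ⟨a', b', ha, hb, hab⟩ | ⟨a', b', ha, hb, hab⟩
        · cases ha
        · cases ha; cases hb; exact ho hab⟩
    simpa using this
  · rintro ⟨ho, he⟩
    have := (h.2 (Sum.inr a) (Sum.inr b)).2.1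
      ⟨(hGo _ _).2 (Or.inr ⟨a, b, rfl, rfl, ho⟩), fun hc => by
        rw [hGe] at hc
        rcases hc with ⟨a', b', ha, hb, hab⟩ | ⟨a', b', ha, hb, hab⟩
        · cases ha
        · cases ha; cases hb; exact he hab⟩
    simpa using this
  · rintro ⟨hne, he, ho⟩
    have := (h.2 (Sum.inr a) (Sum.inr b)).2.2
      ⟨by simpa using hne, by simp [hGe, he], by simp [hGo, ho]⟩
    simpa using this

/-- SAP for a block matrix, from SAP of the first block and invertibility of the second. -/
lemma block_sap₁ {A₁ : Matrix V₁ V₁ ℝ} {A₂ : Matrix V₂ V₂ ℝ}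
    (hsap : HasSAP Ge₁ Go₁ A₁) (hk : LinearMap.ker A₂.mulVecLin = ⊥) :
    HasSAP Ge Go (fromBlocks A₁ 0 0 A₂) := by
  intro X hXs hXz hXm
  have hm : fromBlocks A₁ 0 0 A₂ *
      fromBlocks X.toBlocks₁₁ X.toBlocks₁₂ X.toBlocks₂₁ X.toBlocks₂₂ = 0 := by
    rw [fromBlocks_toBlocks]; exact hXm
  rw [Matrix.fromBlocks_multiply] at hm
  simp only [Matrix.zero_mul, Matrix.mul_zero, add_zero, zero_add] at hm
  have h11 : A₁ * X.toBlocks₁₁ = 0 := by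
    have := congrArg Matrix.toBlocks₁₁ hm
    rwa [Matrix.toBlocks_fromBlocks₁₁] at this
  have h21 : A₂ * X.toBlocks₂₁ = 0 := by
    have := congrArg Matrix.toBlocks₂₁ hm
    rwa [Matrix.toBlocks_fromBlocks₂₁] at this
  have h22 : A₂ * X.toBlocks₂₂ = 0 := by
    have := congrArg Matrix.toBlocks₂₂ hm
    rwa [Matrix.toBlocks_fromBlocks₂₂] at this
  have hX21 : X.toBlocks₂₁ = 0 := mul_eq_zero_of_ker_bot hk h21
  have hX22 : X.toBlocks₂₂ = 0 := mul_eq_zero_of_ker_bot hk h22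
  have hX12 : X.toBlocks₁₂ = 0 := by
    ext a b
    have h1 : X (Sum.inr b) (Sum.inl a) = X (Sum.inl a) (Sum.inr b) := hXs.apply _ _
    have h2 : X (Sum.inr b) (Sum.inl a) = 0 := congrFun (congrFun hX21 b) a
    have h3 : X (Sum.inl a) (Sum.inr b) = 0 := by rw [← h1, h2]
    simpa [Matrix.toBlocks₁₂] using h3
  have hX11 : X.toBlocks₁₁ = 0 := by
    refine hsap X.toBlocks₁₁ (Matrix.IsSymm.ext fun a b => hXs.apply _ _) ?_ h11
    intro a b h
    have h3 : X (Sum.inl a) (Sum.inl b) = 0 := by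
      apply hXz
      rcases h with rfl | hadj
      · exact Or.inl rfl
      · exact Or.inr ((sup_adj_inl hGe hGo a b).2 hadj)
    simpa [Matrix.toBlocks₁₁] using h3
  ext i j
  cases i with
  | inl a => cases j with
    | inl b => simpa [Matrix.toBlocks₁₁] using congrFun (congrFun hX11 a) b
    | inr b => simpa [Matrix.toBlocks₁₂] using congrFun (congrFun hX12 a) b
  | inr a => cases j with
    | inl b => simpa [Matrix.toBlocks₂₁] using congrFun (congrFun hX21 a) b
    | inr b => simpa [Matrix.toBlocks₂₂] using congrFun (congrFun hX22 a) b

/-- SAP for a block matrix, from invertibility of the first block and SAP of the second. -/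
lemma block_sap₂ {A₁ : Matrix V₁ V₁ ℝ} {A₂ : Matrix V₂ V₂ ℝ}
    (hk : LinearMap.ker A₁.mulVecLin = ⊥) (hsap : HasSAP Ge₂ Go₂ A₂) :
    HasSAP Ge Go (fromBlocks A₁ 0 0 A₂) := by
  intro X hXs hXz hXm
  have hm : fromBlocks A₁ 0 0 A₂ *
      fromBlocks X.toBlocks₁₁ X.toBlocks₁₂ X.toBlocks₂₁ X.toBlocks₂₂ = 0 := by
    rw [fromBlocks_toBlocks]; exact hXm
  rw [Matrix.fromBlocks_multiply] at hm
  simp only [Matrix.zero_mul, Matrix.mul_zero, add_zero, zero_add] at hm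
  have h11 : A₁ * X.toBlocks₁₁ = 0 := by
    have := congrArg Matrix.toBlocks₁₁ hm
    rwa [Matrix.toBlocks_fromBlocks₁₁] at this
  have h12 : A₁ * X.toBlocks₁₂ = 0 := by
    have := congrArg Matrix.toBlocks₁₂ hm
    rwa [Matrix.toBlocks_fromBlocks₁₂] at this
  have h22 : A₂ * X.toBlocks₂₂ = 0 := by
    have := congrArg Matrix.toBlocks₂₂ hm
    rwa [Matrix.toBlocks_fromBlocks₂₂] at this
  have hX11 : X.toBlocks₁₁ = 0 := mul_eq_zero_of_ker_bot hk h11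
  have hX12 : X.toBlocks₁₂ = 0 := mul_eq_zero_of_ker_bot hk h12
  have hX21 : X.toBlocks₂₁ = 0 := by
    ext a b
    have h1 : X (Sum.inl b) (Sum.inr a) = X (Sum.inr a) (Sum.inl b) := hXs.apply _ _
    have h2 : X (Sum.inl b) (Sum.inr a) = 0 := congrFun (congrFun hX12 b) a
    have h3 : X (Sum.inr a) (Sum.inl b) = 0 := by rw [← h1, h2]
    simpa [Matrix.toBlocks₂₁] using h3
  have hX22 : X.toBlocks₂₂ = 0 := by
    refine hsap X.toBlocks₂₂ (Matrix.IsSymm.ext fun a b => hXs.apply _ _) ?_ h22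
    intro a b h
    have h3 : X (Sum.inr a) (Sum.inr b) = 0 := by
      apply hXz
      rcases h with rfl | hadj
      · exact Or.inl rfl
      · exact Or.inr ((sup_adj_inr hGe hGo a b).2 hadj)
    simpa [Matrix.toBlocks₂₂] using h3
  ext i j
  cases i with
  | inl a => cases j with
    | inl b => simpa [Matrix.toBlocks₁₁] using congrFun (congrFun hX11 a) b
    | inr b => simpa [Matrix.toBlocks₁₂] using congrFun (congrFun hX12 a) b
  | inr a => cases j with
    | inl b => simpa [Matrix.toBlocks₂₁] using congrFun (congrFun hX21 a) b
    | inr b => simpa [Matrix.toBlocks₂₂] using congrFun (congrFun hX22 a) b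

/-- SAP of a block matrix restricts to the first block. -/
lemma sap_block₁ {A₁ : Matrix V₁ V₁ ℝ} {A₂ : Matrix V₂ V₂ ℝ}
    (hsap : HasSAP Ge Go (fromBlocks A₁ 0 0 A₂)) : HasSAP Ge₁ Go₁ A₁ := by
  intro X hXs hXz hXm
  have key : (fromBlocks X 0 0 0 : Matrix (V₁ ⊕ V₂) (V₁ ⊕ V₂) ℝ) = 0 := by
    refine hsap _ ?_ ?_ ?_
    · refine Matrix.IsSymm.ext fun i j => ?_
      cases i <;> cases j <;>
        simp [Matrix.fromBlocks_apply₁₁, Matrix.fromBlocks_apply₁₂,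
          Matrix.fromBlocks_apply₂₁, Matrix.fromBlocks_apply₂₂, hXs.apply]
    · intro i j h
      cases i with
      | inl a => cases j with
        | inl b =>
          rcases h with heq | hadj
          · exact hXz a b (Or.inl (Sum.inl.inj heq))
          · exact hXz a b (Or.inr ((sup_adj_inl hGe hGo a b).1 hadj))
        | inr b => rfl
      | inr a => cases j <;> rfl
    · rw [Matrix.fromBlocks_multiply]
      simp only [Matrix.zero_mul, Matrix.mul_zero, add_zero, zero_add, hXm]
      exact Matrix.fromBlocks_zero
  have := congrArg Matrix.toBlocks₁₁ key
  rwa [Matrix.toBlocks_fromBlocks₁₁] at this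

/-- SAP of a block matrix restricts to the second block. -/
lemma sap_block₂ {A₁ : Matrix V₁ V₁ ℝ} {A₂ : Matrix V₂ V₂ ℝ}
    (hsap : HasSAP Ge Go (fromBlocks A₁ 0 0 A₂)) : HasSAP Ge₂ Go₂ A₂ := by
  intro X hXs hXz hXm
  have key : (fromBlocks 0 0 0 X : Matrix (V₁ ⊕ V₂) (V₁ ⊕ V₂) ℝ) = 0 := by
    refine hsap _ ?_ ?_ ?_
    · refine Matrix.IsSymm.ext fun i j => ?_
      cases i <;> cases j <;>
        simp [Matrix.fromBlocks_apply₁₁, Matrix.fromBlocks_apply₁₂,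
          Matrix.fromBlocks_apply₂₁, Matrix.fromBlocks_apply₂₂, hXs.apply]
    · intro i j h
      cases i with
      | inl a => cases j <;> rfl
      | inr a => cases j with
        | inl b => rfl
        | inr b =>
          rcases h with heq | hadj
          · exact hXz a b (Or.inl (Sum.inr.inj heq))
          · exact hXz a b (Or.inr ((sup_adj_inr hGe hGo a b).1 hadj))
    · rw [Matrix.fromBlocks_multiply]
      simp only [Matrix.zero_mul, Matrix.mul_zero, add_zero, zero_add, hXm]
      exact Matrix.fromBlocks_zero
  have := congrArg Matrix.toBlocks₂₂ key
  rwa [Matrix.toBlocks_fromBlocks₂₂] at this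

/-- SAP of a block matrix forces one of the blocks to be nonsingular. -/
lemma sap_ker_dichotomy {A₁ : Matrix V₁ V₁ ℝ} {A₂ : Matrix V₂ V₂ ℝ}
    (hsap : HasSAP Ge Go (fromBlocks A₁ 0 0 A₂)) :
    LinearMap.ker A₁.mulVecLin = ⊥ ∨ LinearMap.ker A₂.mulVecLin = ⊥ := by
  by_contra h
  push_neg at h
  obtain ⟨h1, h2⟩ := h
  obtain ⟨x, hxmem, hx0⟩ := Submodule.exists_mem_ne_zero_of_ne_bot h1
  obtain ⟨y, hymem, hy0⟩ := Submodule.exists_mem_ne_zero_of_ne_bot h2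
  rw [LinearMap.mem_ker] at hxmem hymem
  have key : (fromBlocks 0 (vecMulVec x y) (vecMulVec y x) 0 :
      Matrix (V₁ ⊕ V₂) (V₁ ⊕ V₂) ℝ) = 0 := by
    refine hsap _ ?_ ?_ ?_
    · refine Matrix.IsSymm.ext fun i j => ?_
      cases i <;> cases j <;>
        simp [Matrix.fromBlocks_apply₁₁, Matrix.fromBlocks_apply₁₂,
          Matrix.fromBlocks_apply₂₁, Matrix.fromBlocks_apply₂₂, Matrix.vecMulVec_apply,
          mul_comm]
    · intro i j h
      cases i with
      | inl a => cases j with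
        | inl b => rfl
        | inr b =>
          rcases h with heq | hadj
          · exact absurd heq (by simp)
          · exact absurd hadj (sup_adj_cross hGe hGo a b)
      | inr a => cases j with
        | inl b =>
          rcases h with heq | hadj
          · exact absurd heq (by simp)
          · exact absurd hadj (sup_adj_cross' hGe hGo a b)
        | inr b => rfl
    · rw [Matrix.fromBlocks_multiply]
      simp only [Matrix.zero_mul, Matrix.mul_zero, add_zero, zero_add]
      rw [vecMulVec_ker hxmem y, vecMulVec_ker hymem x]
      exact Matrix.fromBlocks_zero
  have h12 : vecMulVec x y = 0 := by
    have := congrArg Matrix.toBlocks₁₂ key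
    rwa [Matrix.toBlocks_fromBlocks₁₂] at this
  obtain ⟨a, ha⟩ : ∃ a, x a ≠ 0 := by
    by_contra hc; push_neg at hc; exact hx0 (funext hc)
  obtain ⟨b, hb⟩ : ∃ b, y b ≠ 0 := by
    by_contra hc; push_neg at hc; exact hy0 (funext hc)
  have := congrFun (congrFun h12 a) b
  rw [Matrix.vecMulVec_apply] at this
  exact absurd this (mul_ne_zero ha hb)

end Blocks

/-- `ν` of a disjoint union of two signed graphs is the maximum of the
`ν`'s of the two signed graphs. -/
theorem stmt10 {V₁ V₂ : Type*} [Fintype V₁] [Fintype V₂] [DecidableEq V₁] [DecidableEq V₂]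
    (Ge₁ Go₁ : SimpleGraph V₁) (Ge₂ Go₂ : SimpleGraph V₂)
    (Ge Go : SimpleGraph (V₁ ⊕ V₂))
    (hGe : ∀ x y : V₁ ⊕ V₂, Ge.Adj x y ↔
      ((∃ a b, x = Sum.inl a ∧ y = Sum.inl b ∧ Ge₁.Adj a b) ∨
       (∃ a b, x = Sum.inr a ∧ y = Sum.inr b ∧ Ge₂.Adj a b)))
    (hGo : ∀ x y : V₁ ⊕ V₂, Go.Adj x y ↔
      ((∃ a b, x = Sum.inl a ∧ y = Sum.inl b ∧ Go₁.Adj a b) ∨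
       (∃ a b, x = Sum.inr a ∧ y = Sum.inr b ∧ Go₂.Adj a b))) :
    nuSigned Ge Go = max (nuSigned Ge₁ Go₁) (nuSigned Ge₂ Go₂) := by
  classical
  apply le_antisymm
  · rw [nuSigned]
    refine csSup_le (nu_set_nonempty Ge Go) ?_
    rintro n ⟨A, hmem, hpsd, hsap, rfl⟩
    have hz12 : ∀ (a : V₁) (b : V₂), A (Sum.inl a) (Sum.inr b) = 0 := fun a b =>
      (hmem.2 _ _).2.2 ⟨by simp, by simp [hGe], by simp [hGo]⟩
    have hz21 : ∀ (a : V₂) (b : V₁), A (Sum.inr a) (Sum.inl b) = 0 := fun a b =>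
      (hmem.2 _ _).2.2 ⟨by simp, by simp [hGe], by simp [hGo]⟩
    have hA : A = fromBlocks A.toBlocks₁₁ 0 0 A.toBlocks₂₂ := by
      ext i j
      cases i <;> cases j <;>
        simp [Matrix.fromBlocks_apply₁₁, Matrix.fromBlocks_apply₁₂, Matrix.fromBlocks_apply₂₁,
          Matrix.fromBlocks_apply₂₂, Matrix.toBlocks₁₁, Matrix.toBlocks₂₂, hz12, hz21]
    rw [hA] at hmem hpsd hsap
    rw [hA, matNullity_fromBlocks]
    rcases sap_ker_dichotomy hGe hGo hsap with hk | hk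
    · rw [matNullity_eq_zero hk, zero_add]
      refine le_trans ?_ (le_max_right _ _)
      rw [nuSigned]
      exact le_csSup (nu_set_bddAbove Ge₂ Go₂)
        ⟨A.toBlocks₂₂, mem_block₂ hGe hGo hmem, psd_block₂ hpsd, sap_block₂ hGe hGo hsap, rfl⟩
    · rw [matNullity_eq_zero hk, add_zero]
      refine le_trans ?_ (le_max_left _ _)
      rw [nuSigned]
      exact le_csSup (nu_set_bddAbove Ge₁ Go₁)
        ⟨A.toBlocks₁₁, mem_block₁ hGe hGo hmem, psd_block₁ hpsd, sap_block₁ hGe hGo hsap, rfl⟩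
  · refine max_le ?_ ?_
    · rw [nuSigned, nuSigned]
      refine csSup_le (nu_set_nonempty Ge₁ Go₁) ?_
      rintro n ⟨A₁, hmem, hpsd, hsap, rfl⟩
      refine le_csSup (nu_set_bddAbove Ge Go)
        ⟨fromBlocks A₁ 0 0 (stdMat Ge₂ Go₂), block_mem hGe hGo hmem (stdMat_mem _ _),
          block_psd hpsd (stdMat_posSemidef _ _),
          block_sap₁ hGe hGo hsap (stdMat_ker _ _), ?_⟩
      rw [matNullity_fromBlocks, matNullity_eq_zero (stdMat_ker _ _), add_zero]
    · rw [nuSigned, nuSigned]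
      refine csSup_le (nu_set_nonempty Ge₂ Go₂) ?_
      rintro n ⟨A₂, hmem, hpsd, hsap, rfl⟩
      refine le_csSup (nu_set_bddAbove Ge Go)
        ⟨fromBlocks (stdMat Ge₁ Go₁) 0 0 A₂, block_mem hGe hGo (stdMat_mem _ _) hmem,
          block_psd (stdMat_posSemidef _ _) hpsd,
          block_sap₂ hGe hGo (stdMat_ker _ _) hsap, ?_⟩
      rw [matNullity_fromBlocks, matNullity_eq_zero (stdMat_ker _ _), zero_add]
end
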